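/- arXiv:2010.13531 — 11 statements merged into one kernel-verified Lean document; each statement's English description precedes it below -/
import Mathlib

section
/- Let V be a nonnegative real-valued random variable on a probability space with mean μ = E[V] > 0 and finite second moment E[V²] = ω² + μ² (so ω² is the variance of V), and suppose V·ln(V) is integrable (with the convention 0·ln 0 = 0). Then E[V ln V] ≤ μ · ln((ω² + μ²)/μ). -/
open MeasureTheory Real

lemma pointwise_mul_log_le {x c : ℝ} (hx : 0 ≤ x) (hc : 0 < c) :
    x * Real.log x ≤ x ^ 2 / c - x + x * Real.log c := by
  rcases eq_or_lt_of_le hx with h | h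
  · simp [← h]
  · have h1 : Real.log (x / c) ≤ x / c - 1 :=
      Real.log_le_sub_one_of_pos (div_pos h hc)
    rw [Real.log_div h.ne' hc.ne'] at h1
    have h2 : Real.log x ≤ x / c - 1 + Real.log c := by linarith
    calc x * Real.log x ≤ x * (x / c - 1 + Real.log c) := by
          exact mul_le_mul_of_nonneg_left h2 hx
      _ = x ^ 2 / c - x + x * Real.log c := by ring

/-- If `V` is a nonnegative random variable on a probability space with
mean `μ = E[V] > 0`, second moment `E[V²] = ω² + μ²`, and `V · ln V` integrable
(with the convention `0 · ln 0 = 0`, automatic since `Real.log 0 = 0`), then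
`E[V ln V] ≤ μ · ln((ω² + μ²)/μ)`. -/
theorem expectation_mul_log_le
    {Ω : Type*} [MeasurableSpace Ω] (ℙ : Measure Ω) [IsProbabilityMeasure ℙ]
    (V : Ω → ℝ) (hV : ∀ x, 0 ≤ V x)
    (μ ω2 : ℝ) (hμ : 0 < μ)
    (hVint : Integrable V ℙ) (hmean : ∫ x, V x ∂ℙ = μ)
    (hV2int : Integrable (fun x => (V x) ^ 2) ℙ)
    (hsecond : ∫ x, (V x) ^ 2 ∂ℙ = ω2 + μ ^ 2)
    (hVLint : Integrable (fun x => V x * Real.log (V x)) ℙ) :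
    ∫ x, V x * Real.log (V x) ∂ℙ ≤ μ * Real.log ((ω2 + μ ^ 2) / μ) := by
  -- first: ω2 + μ² ≥ μ² > 0, since ∫ (V - μ)² ≥ 0
  have hdev : Integrable (fun x => (V x - μ) ^ 2) ℙ := by
    have : (fun x => (V x - μ) ^ 2) =
        fun x => (V x) ^ 2 - (2 * μ) * V x + μ ^ 2 := by
      funext x; ring
    rw [this]
    exact ((hV2int.sub (hVint.const_mul (2 * μ))).add (integrable_const _))
  have hdevnn : 0 ≤ ∫ x, (V x - μ) ^ 2 ∂ℙ :=
    integral_nonneg fun x => sq_nonneg _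
  have hdevval : ∫ x, (V x - μ) ^ 2 ∂ℙ = ω2 := by
    have : (fun x => (V x - μ) ^ 2) =
        fun x => (V x) ^ 2 - (2 * μ) * V x + μ ^ 2 := by
      funext x; ring
    have h1 : Integrable (fun x => (V x) ^ 2 - 2 * μ * V x) ℙ :=
      hV2int.sub (hVint.const_mul (2 * μ))
    have h2 : Integrable (fun x => 2 * μ * V x) ℙ := hVint.const_mul (2 * μ)
    rw [this, integral_add h1 (integrable_const _),
      integral_sub hV2int h2, integral_const_mul,
      hmean, hsecond, integral_const]
    simp; ring
  have hω2 : 0 ≤ ω2 := hdevval ▸ hdevnn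
  have hsum : 0 < ω2 + μ ^ 2 := by positivity
  set c : ℝ := (ω2 + μ ^ 2) / μ with hcdef
  have hc : 0 < c := div_pos hsum hμ
  have hRHSint : Integrable (fun x => (V x) ^ 2 / c - V x + V x * Real.log c) ℙ := by
    exact ((hV2int.div_const c).sub hVint).add (hVint.mul_const _)
  have hmono : ∫ x, V x * Real.log (V x) ∂ℙ ≤
      ∫ x, ((V x) ^ 2 / c - V x + V x * Real.log c) ∂ℙ := by
    apply integral_mono hVLint hRHSint
    intro x
    exact pointwise_mul_log_le (hV x) hc
  have hRHSval : ∫ x, ((V x) ^ 2 / c - V x + V x * Real.log c) ∂ℙ =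
      μ * Real.log c := by
    have h1 : Integrable (fun x => (V x) ^ 2 / c - V x) ℙ :=
      (hV2int.div_const c).sub hVint
    have h2 : Integrable (fun x => (V x) ^ 2 / c) ℙ := hV2int.div_const c
    have h3 : Integrable (fun x => V x * Real.log c) ℙ := hVint.mul_const _
    rw [integral_add h1 h3, integral_sub h2 hVint, integral_div,
      integral_mul_const, hmean, hsecond, hcdef]
    field_simp
    ring
  calc ∫ x, V x * Real.log (V x) ∂ℙ ≤ _ := hmono
    _ = μ * Real.log c := hRHSval
end

section
/- For every integer n ≥ 1 and every real θ ∈ [0,1], the binomial expectation of y·ln y satisfies Σ_{y=1}^{n} (n choose y) · θ^y · (1−θ)^{n−y} · y · ln(y) ≤ n·θ · ln(n·θ + (1−θ)). -/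
open Finset Real

private lemma binom_step (m : ℕ) (θ : ℝ) (g : ℕ → ℝ) :
    ∑ z ∈ Finset.range (m + 2),
        ((m + 1).choose z : ℝ) * θ ^ z * (1 - θ) ^ (m + 1 - z) * (z : ℝ) * g z
      = ((m : ℝ) + 1) * θ *
        ∑ z ∈ Finset.range (m + 1),
          (m.choose z : ℝ) * θ ^ z * (1 - θ) ^ (m - z) * g (z + 1) := by
  rw [Finset.sum_range_succ']
  simp only [Nat.cast_zero, mul_zero, zero_mul, add_zero]
  rw [Finset.mul_sum]
  refine Finset.sum_congr rfl fun z hz => ?_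
  have hc : (((m + 1).choose (z + 1) : ℝ)) * ((z : ℝ) + 1) = ((m : ℝ) + 1) * (m.choose z : ℝ) := by
    have := Nat.add_one_mul_choose_eq m z
    have : ((m + 1) * m.choose z : ℕ) = ((m + 1).choose (z + 1) * (z + 1) : ℕ) := this
    exact_mod_cast (congrArg (fun k : ℕ => (k : ℝ)) this).symm
  have hsub : m + 1 - (z + 1) = m - z := by omega
  rw [hsub]
  push_cast
  linear_combination (θ ^ z * θ * (1 - θ) ^ (m - z) * g (z + 1)) * hc

private lemma binom_wsum (m : ℕ) (θ : ℝ) :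
    ∑ z ∈ Finset.range (m + 1), (m.choose z : ℝ) * θ ^ z * (1 - θ) ^ (m - z) = 1 := by
  have h := add_pow θ (1 - θ) m
  have h1 : θ + (1 - θ) = 1 := by ring
  rw [h1, one_pow] at h
  calc ∑ z ∈ Finset.range (m + 1), (m.choose z : ℝ) * θ ^ z * (1 - θ) ^ (m - z)
      = ∑ z ∈ Finset.range (m + 1), θ ^ z * (1 - θ) ^ (m - z) * (m.choose z : ℝ) :=
        Finset.sum_congr rfl fun z _ => by ring
    _ = 1 := h.symm

private lemma binom_mean (m : ℕ) (θ : ℝ) :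
    ∑ z ∈ Finset.range (m + 1),
        (m.choose z : ℝ) * θ ^ z * (1 - θ) ^ (m - z) * ((z : ℝ) + 1)
      = (m : ℝ) * θ + 1 := by
  have hsplit : ∑ z ∈ Finset.range (m + 1),
      (m.choose z : ℝ) * θ ^ z * (1 - θ) ^ (m - z) * ((z : ℝ) + 1)
      = (∑ z ∈ Finset.range (m + 1),
          (m.choose z : ℝ) * θ ^ z * (1 - θ) ^ (m - z) * (z : ℝ) * 1)
        + ∑ z ∈ Finset.range (m + 1), (m.choose z : ℝ) * θ ^ z * (1 - θ) ^ (m - z) := by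
    rw [← Finset.sum_add_distrib]
    exact Finset.sum_congr rfl fun z _ => by ring
  rw [hsplit, binom_wsum]
  cases m with
  | zero => simp
  | succ k =>
    rw [show k + 1 + 1 = k + 2 from rfl, binom_step k θ (fun _ => 1)]
    simp only [mul_one]
    rw [binom_wsum k θ]
    push_cast
    ring

/-- For `n ≥ 1` and `θ ∈ [0,1]`, the binomial expectation of `y · ln y`
satisfies `Σ_{y=1}^{n} C(n,y) θ^y (1−θ)^{n−y} · y · ln y ≤ nθ · ln(nθ + (1−θ))`. -/
theorem binomial_expectation_mul_log_le
    (n : ℕ) (hn : 1 ≤ n) (θ : ℝ) (hθ : θ ∈ Set.Icc (0 : ℝ) 1) :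
    ∑ y ∈ Finset.Icc 1 n,
        (n.choose y : ℝ) * θ ^ y * (1 - θ) ^ (n - y) * (y : ℝ) * Real.log (y : ℝ)
      ≤ (n : ℝ) * θ * Real.log ((n : ℝ) * θ + (1 - θ)) := by
  obtain ⟨hθ0, hθ1⟩ := hθ
  obtain ⟨m, rfl⟩ : ∃ m, n = m + 1 := ⟨n - 1, by omega⟩
  -- extend sum to range (m+2)
  have hext : ∑ y ∈ Finset.Icc 1 (m + 1),
        ((m + 1).choose y : ℝ) * θ ^ y * (1 - θ) ^ (m + 1 - y) * (y : ℝ) * Real.log (y : ℝ)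
      = ∑ y ∈ Finset.range (m + 2),
        ((m + 1).choose y : ℝ) * θ ^ y * (1 - θ) ^ (m + 1 - y) * (y : ℝ) * Real.log (y : ℝ) := by
    refine Finset.sum_subset (fun x hx => ?_) (fun x hx hnx => ?_)
    · simp only [Finset.mem_Icc] at hx
      simp only [Finset.mem_range]
      omega
    · have : x = 0 := by
        simp only [Finset.mem_range] at hx
        simp only [Finset.mem_Icc] at hnx
        omega
      subst this
      simp
  rw [hext, binom_step m θ (fun y => Real.log (y : ℝ))]
  -- Jensen
  set w : ℕ → ℝ := fun z => (m.choose z : ℝ) * θ ^ z * (1 - θ) ^ (m - z) with hw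
  have hw0 : ∀ z ∈ Finset.range (m + 1), 0 ≤ w z := fun z _ => by
    have : (0 : ℝ) ≤ 1 - θ := by linarith
    positivity
  have hw1 : ∑ z ∈ Finset.range (m + 1), w z = 1 := binom_wsum m θ
  have hmem : ∀ z ∈ Finset.range (m + 1), ((z : ℝ) + 1) ∈ Set.Ioi (0 : ℝ) := fun z _ => by
    simp only [Set.mem_Ioi]; positivity
  have hjensen := (strictConcaveOn_log_Ioi.concaveOn).le_map_sum
    (t := Finset.range (m + 1)) (w := w) (p := fun z => (z : ℝ) + 1) hw0 hw1 hmem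
  simp only [smul_eq_mul] at hjensen
  have hsum : ∑ z ∈ Finset.range (m + 1), w z * ((z : ℝ) + 1) = (m : ℝ) * θ + 1 := by
    simpa [hw] using binom_mean m θ
  rw [hsum] at hjensen
  have hkey : ∑ z ∈ Finset.range (m + 1),
      (m.choose z : ℝ) * θ ^ z * (1 - θ) ^ (m - z) * Real.log ((z : ℝ) + 1)
      ≤ Real.log ((m : ℝ) * θ + 1) := by
    refine le_trans (le_of_eq ?_) hjensen
    exact Finset.sum_congr rfl fun z _ => by push_cast; ring
  have harg : ((m : ℝ) + 1) * θ + (1 - θ) = (m : ℝ) * θ + 1 := by ring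
  have hnθ : (0 : ℝ) ≤ ((m : ℝ) + 1) * θ := by positivity
  push_cast
  rw [harg]
  exact mul_le_mul_of_nonneg_left hkey hnθ
end

section
/- For every integer n ≥ 1 and every real θ ∈ (0,1), one has θ · Σ_{y=1}^{n} (n−1 choose y−1) · θ^{y−1} · (1−θ)^{n−y} · ln( y / (n·θ) ) ≤ (1−θ)/n. -/
open Finset Real

lemma bmi_norm_aux (m : ℕ) (x z : ℝ) (h : x + z = 1) :
    ∑ k ∈ Finset.range (m + 1), ((m.choose k : ℝ)) * x ^ k * z ^ (m - k) = 1 := by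
  have := add_pow x z m
  rw [h, one_pow] at this
  conv_rhs => rw [this]
  exact Finset.sum_congr rfl fun k _ => by ring

lemma bmi_mean_aux (m : ℕ) (x z : ℝ) (h : x + z = 1) :
    ∑ k ∈ Finset.range (m + 1), (k : ℝ) * (m.choose k : ℝ) * x ^ k * z ^ (m - k)
      = m * x := by
  cases m with
  | zero => simp
  | succ m' =>
    rw [Finset.sum_range_succ']
    simp only [Nat.cast_zero, zero_mul]
    have key : ∀ k : ℕ, ((k : ℝ) + 1) * ((m' + 1).choose (k + 1) : ℝ)
        = (m' + 1) * (m'.choose k : ℝ) := by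
      intro k
      have h0 := Nat.add_one_mul_choose_eq m' k
      have h2 : (((m' + 1) * m'.choose k : ℕ) : ℝ) = (((m' + 1).choose (k + 1) * (k + 1) : ℕ) : ℝ) := by
        exact_mod_cast congrArg (Nat.cast (R := ℝ)) h0
      push_cast at h2
      linear_combination -h2
    have : ∑ k ∈ Finset.range (m' + 1),
        ((k : ℝ) + 1) * ((m' + 1).choose (k + 1) : ℝ) * x ^ (k + 1) * z ^ (m' + 1 - (k + 1))
        = (m' + 1) * x * ∑ k ∈ Finset.range (m' + 1),
            (m'.choose k : ℝ) * x ^ k * z ^ (m' - k) := by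
      rw [Finset.mul_sum]
      refine Finset.sum_congr rfl fun k _ => ?_
      rw [key k]
      have : m' + 1 - (k + 1) = m' - k := by omega
      rw [this]
      ring
    simp only [Nat.cast_add, Nat.cast_one] at this ⊢
    rw [add_zero]
    calc ∑ k ∈ Finset.range (m' + 1),
          ((k : ℝ) + 1) * ((m' + 1).choose (k + 1) : ℝ) * x ^ (k + 1) * z ^ (m' + 1 - (k + 1))
        = (m' + 1) * x * ∑ k ∈ Finset.range (m' + 1),
            (m'.choose k : ℝ) * x ^ k * z ^ (m' - k) := this
      _ = ((m' : ℝ) + 1) * x := by rw [bmi_norm_aux m' x z h, mul_one]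

/-- For `n ≥ 1` and `θ ∈ (0,1)`,
`θ · Σ_{y=1}^{n} C(n−1, y−1) θ^{y−1} (1−θ)^{n−y} ln(y/(nθ)) ≤ (1−θ)/n`. -/
theorem bernoulli_mutual_information_first_term_le
    (n : ℕ) (hn : 1 ≤ n) (θ : ℝ) (hθ : θ ∈ Set.Ioo (0 : ℝ) 1) :
    θ * ∑ y ∈ Finset.Icc 1 n,
        ((n - 1).choose (y - 1) : ℝ) * θ ^ (y - 1) * (1 - θ) ^ (n - y) *
          Real.log ((y : ℝ) / ((n : ℝ) * θ))
      ≤ (1 - θ) / (n : ℝ) := by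
  obtain ⟨hθ0, hθ1⟩ := hθ
  obtain ⟨m, rfl⟩ : ∃ m, n = m + 1 := ⟨n - 1, (Nat.succ_pred_eq_of_pos hn).symm⟩
  have hz : (0:ℝ) < 1 - θ := by linarith
  have hsum : θ + (1 - θ) = 1 := by ring
  have hN : (0:ℝ) < (m:ℝ) + 1 := by positivity
  -- reindex the sum
  rw [← Finset.Ico_add_one_right_eq_Icc, Finset.sum_Ico_eq_sum_range]
  have hre : m + 1 + 1 - 1 = m + 1 := by omega
  rw [hre]
  set p : ℕ → ℝ := fun k => ((m.choose k : ℝ)) * θ ^ k * (1 - θ) ^ (m - k) with hp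
  have hterm : ∀ k ∈ Finset.range (m + 1),
      ((m + 1 - 1).choose (1 + k - 1) : ℝ) * θ ^ (1 + k - 1) * (1 - θ) ^ (m + 1 - (1 + k)) *
          Real.log (((1 + k : ℕ) : ℝ) / (((m + 1 : ℕ) : ℝ) * θ))
        ≤ p k * (((k : ℝ) + 1) / (((m : ℝ) + 1) * θ) - 1) := by
    intro k _
    have h1 : m + 1 - 1 = m := by omega
    have h2 : 1 + k - 1 = k := by omega
    have h3 : m + 1 - (1 + k) = m - k := by omega
    rw [h1, h2, h3]
    have hpk : 0 ≤ p k := by positivity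
    have hx : (0:ℝ) < ((k : ℝ) + 1) / (((m : ℝ) + 1) * θ) := by positivity
    have hlog := Real.log_le_sub_one_of_pos hx
    have hcast : (((1 + k : ℕ) : ℝ) / (((m + 1 : ℕ) : ℝ) * θ))
        = ((k : ℝ) + 1) / (((m : ℝ) + 1) * θ) := by push_cast; ring_nf
    rw [hcast]
    exact mul_le_mul_of_nonneg_left hlog hpk
  have hle := Finset.sum_le_sum hterm
  have hmono := mul_le_mul_of_nonneg_left hle (le_of_lt hθ0)
  refine hmono.trans_eq ?_
  -- compute the exact value
  have hnorm := bmi_norm_aux m θ (1 - θ) hsum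
  have hmean := bmi_mean_aux m θ (1 - θ) hsum
  have expand : ∀ k, p k * (((k : ℝ) + 1) / (((m : ℝ) + 1) * θ) - 1)
      = (1 / (((m : ℝ) + 1) * θ)) * ((k : ℝ) * (m.choose k : ℝ) * θ ^ k * (1 - θ) ^ (m - k))
        + (1 / (((m : ℝ) + 1) * θ)) * ((m.choose k : ℝ) * θ ^ k * (1 - θ) ^ (m - k))
        - ((m.choose k : ℝ) * θ ^ k * (1 - θ) ^ (m - k)) := by
    intro k
    rw [hp]
    field_simp
  rw [Finset.sum_congr rfl fun k _ => expand k]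
  rw [Finset.sum_sub_distrib, Finset.sum_add_distrib, ← Finset.mul_sum, ← Finset.mul_sum,
    hnorm, hmean]
  push_cast
  field_simp
  ring
end

section
/- Let σ > 0, B > 0, P > 0, σ₀ > 0, let n ≥ 1 be an integer, and let θ ∈ ℝ be arbitrary. Set a = √(P/(B² + σ²)) and τ² = σ₀² + (n−1)·a²·σ². Then the integral over x (with respect to the Gaussian measure N(aθ, a²σ²)) of the Kullback–Leibler divergence KL( N(x + (n−1)aθ, τ²) ‖ N(n·aθ, τ² + a²σ²) ) equals (1/2)·ln(1 + a²σ²/τ²), and in particular is at most (1/2) · 1/( n − 1 + σ₀²(B² + σ²)/(P σ²) ). -/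
open MeasureTheory ProbabilityTheory Real Filter
open scoped NNReal ENNReal

/-- The Kullback–Leibler divergence `KL(μ ‖ ν) = ∫ log (dμ/dν) dμ` between measures on `ℝ`
(real-valued version). -/
noncomputable def klDivergence (μ ν : Measure ℝ) : ℝ :=
  ∫ x, Real.log ((μ.rnDeriv ν x).toReal) ∂μ

lemma myint_mul_exp {b : ℝ} (hb : 0 < b) : ∫ x : ℝ, x * Real.exp (-b * x ^ 2) = 0 := by
  have h := integral_neg_eq_self (fun x : ℝ => x * Real.exp (-b * x ^ 2)) (volume : Measure ℝ)
  rw [show (fun x : ℝ => -x * Real.exp (-b * (-x) ^ 2)) = fun x : ℝ => -(x * Real.exp (-b * x ^ 2)) by funext x; simp [neg_sq], integral_neg] at h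
  linarith [h]

lemma myintegrable_sq_mul_exp {b : ℝ} (hb : 0 < b) :
    Integrable (fun x : ℝ => x ^ 2 * Real.exp (-b * x ^ 2)) := by
  have h2 : (0:ℝ) < b / 2 := by linarith
  refine Integrable.mono' (((integrable_exp_neg_mul_sq h2)).const_mul (2 / b)) ?_ ?_
  · exact (Measurable.aestronglyMeasurable (by fun_prop))
  · refine Filter.Eventually.of_forall fun x => ?_
    have hx2 : (0:ℝ) ≤ x ^ 2 := sq_nonneg x
    rw [Real.norm_eq_abs, abs_mul, abs_of_nonneg hx2, abs_of_nonneg (Real.exp_pos _).le]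
    have key : x ^ 2 ≤ (2 / b) * Real.exp (b / 2 * x ^ 2) := by
      have := Real.add_one_le_exp (b / 2 * x ^ 2)
      have hb' : (0:ℝ) < 2 / b := by positivity
      have h3 := mul_le_mul_of_nonneg_left this hb'.le
      have h4 : (2 / b) * (b / 2 * x ^ 2 + 1) = x ^ 2 + 2 / b := by
        field_simp
      linarith
    calc x ^ 2 * Real.exp (-b * x ^ 2)
        ≤ (2 / b) * Real.exp (b / 2 * x ^ 2) * Real.exp (-b * x ^ 2) := by
          exact mul_le_mul_of_nonneg_right key (Real.exp_pos _).le
      _ = 2 / b * Real.exp (-(b / 2) * x ^ 2) := by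
          rw [mul_assoc, ← Real.exp_add]; ring_nf

lemma myint_sq_mul_exp {b : ℝ} (hb : 0 < b) :
    ∫ x : ℝ, x ^ 2 * Real.exp (-b * x ^ 2) = Real.sqrt (π / b) / (2 * b) := by
  set g : ℝ → ℝ := fun x => x * Real.exp (-b * x ^ 2) with hg
  set f : ℝ → ℝ := fun x => Real.exp (-b * x ^ 2) - 2 * b * (x ^ 2 * Real.exp (-b * x ^ 2)) with hf
  have hderiv : ∀ x : ℝ, HasDerivAt g (f x) x := by
    intro x
    have h1 : HasDerivAt (fun x : ℝ => -b * x ^ 2) (-b * (2 * x)) x := by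
      simpa using ((hasDerivAt_pow 2 x).const_mul (-b))
    have h2 := (h1.exp).const_mul x
    have h3 : HasDerivAt g (1 * Real.exp (-b * x ^ 2) + x * (Real.exp (-b * x ^ 2) * (-b * (2 * x)))) x :=
      ((hasDerivAt_id x).mul h1.exp)
    convert h3 using 1
    simp [hf]; ring
  have hfint : Integrable f := by
    exact (integrable_exp_neg_mul_sq hb).sub ((myintegrable_sq_mul_exp hb).const_mul (2 * b))
  have htop : Tendsto g atTop (nhds 0) := by
    have h := rpow_mul_exp_neg_mul_sq_isLittleO_exp_neg hb 1
    have h2 : (fun x : ℝ => x ^ (1:ℝ) * Real.exp (-b * x ^ 2)) = g := by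
      funext x; simp [hg]
    rw [h2] at h
    refine h.isBigO.trans_tendsto ?_
    have hhalf : Tendsto (fun x : ℝ => (1/2) * x) atTop atTop :=
      Tendsto.const_mul_atTop (by norm_num) tendsto_id
    have := Real.tendsto_exp_neg_atTop_nhds_zero.comp hhalf
    simpa [Function.comp_def, neg_mul] using this
  have hbot : Tendsto g atBot (nhds 0) := by
    have : Tendsto (fun x : ℝ => g (-x)) atTop (nhds 0) := by
      have : (fun x : ℝ => g (-x)) = fun x : ℝ => -(g x) := by
        funext x; simp [hg, neg_sq]
      rw [this, ← neg_zero]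
      exact htop.neg
    have hcomp := this.comp tendsto_neg_atBot_atTop
    simpa [Function.comp_def] using hcomp
  have hIoi : ∫ x in Set.Ioi (0:ℝ), f x = 0 - g 0 :=
    integral_Ioi_of_hasDerivAt_of_tendsto' (fun x _ => hderiv x) hfint.integrableOn htop
  have hIic : ∫ x in Set.Iic (0:ℝ), f x = g 0 - 0 :=
    integral_Iic_of_hasDerivAt_of_tendsto' (fun x _ => hderiv x) hfint.integrableOn hbot
  have hsplit : (∫ x in Set.Iic (0:ℝ), f x) + ∫ x in Set.Ioi (0:ℝ), f x = ∫ x : ℝ, f x :=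
    intervalIntegral.integral_Iic_add_Ioi hfint.integrableOn hfint.integrableOn
  have hzero : ∫ x : ℝ, f x = 0 := by
    rw [← hsplit, hIoi, hIic]; simp [hg]
  have hsub : ∫ x : ℝ, f x =
      (∫ x : ℝ, Real.exp (-b * x ^ 2)) - 2 * b * ∫ x : ℝ, x ^ 2 * Real.exp (-b * x ^ 2) := by
    rw [hf]
    rw [integral_sub (integrable_exp_neg_mul_sq hb) ((myintegrable_sq_mul_exp hb).const_mul (2*b)),
      integral_const_mul]
  rw [hzero, integral_gaussian] at hsub
  have hb' : (0 : ℝ) < 2 * b := by positivity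
  rw [eq_comm, sub_eq_zero] at hsub
  rw [eq_div_iff hb'.ne', mul_comm]
  exact hsub.symm

lemma h_integrable {b d : ℝ} (hb : 0 < b) :
    Integrable (fun y : ℝ => (y + d) ^ 2 * Real.exp (-b * y ^ 2)) := by
  have h1 := myintegrable_sq_mul_exp hb
  have h2 := (integrable_mul_exp_neg_mul_sq hb).const_mul (2 * d)
  have h3 := (integrable_exp_neg_mul_sq hb).const_mul (d ^ 2)
  have hsum : Integrable (fun y : ℝ => y ^ 2 * Real.exp (-b * y ^ 2)
      + 2 * d * (y * Real.exp (-b * y ^ 2))) := h1.add h2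
  have := hsum.add h3
  refine this.congr (Filter.Eventually.of_forall fun y => ?_)
  simp only [Pi.add_apply]
  ring

lemma h_integral {b d : ℝ} (hb : 0 < b) :
    ∫ y : ℝ, (y + d) ^ 2 * Real.exp (-b * y ^ 2)
      = Real.sqrt (π / b) / (2 * b) + d ^ 2 * Real.sqrt (π / b) := by
  have h1 := myintegrable_sq_mul_exp hb
  have h2 := (integrable_mul_exp_neg_mul_sq hb).const_mul (2 * d)
  have h3 := (integrable_exp_neg_mul_sq hb).const_mul (d ^ 2)
  have heq : (fun y : ℝ => (y + d) ^ 2 * Real.exp (-b * y ^ 2))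
      = fun y : ℝ => (y ^ 2 * Real.exp (-b * y ^ 2) + 2 * d * (y * Real.exp (-b * y ^ 2)))
          + d ^ 2 * Real.exp (-b * y ^ 2) := by
    funext y; ring
  have hsum : Integrable (fun y : ℝ => y ^ 2 * Real.exp (-b * y ^ 2)
      + 2 * d * (y * Real.exp (-b * y ^ 2))) := h1.add h2
  rw [heq, integral_add hsum h3, integral_add h1 h2, integral_const_mul,
    integral_const_mul, myint_sq_mul_exp hb, myint_mul_exp hb, integral_gaussian]
  ring

lemma gauss_key (m c : ℝ) {v : ℝ≥0} (hv : v ≠ 0) :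
    ∀ x : ℝ, gaussianPDFReal m v x * (x - c) ^ 2
      = (Real.sqrt (2 * π * (v : ℝ)))⁻¹
        * (((x - m) + (m - c)) ^ 2 * Real.exp (-(1 / (2 * (v : ℝ))) * (x - m) ^ 2)) := by
  intro x
  rw [gaussianPDFReal]
  rw [show -(x - m) ^ 2 / (2 * (v : ℝ)) = -(1 / (2 * (v : ℝ))) * (x - m) ^ 2 by ring]
  ring

lemma coe_pos_of_ne_zero {v : ℝ≥0} (hv : v ≠ 0) : (0 : ℝ) < v :=
  lt_of_le_of_ne v.coe_nonneg (by exact_mod_cast (Ne.symm hv))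

lemma sq_gauss_integrable (m c : ℝ) {v : ℝ≥0} (hv : v ≠ 0) :
    Integrable (fun x : ℝ => gaussianPDFReal m v x * (x - c) ^ 2) := by
  have hv' : (0 : ℝ) < v := coe_pos_of_ne_zero hv
  have hb : (0 : ℝ) < 1 / (2 * (v : ℝ)) := by positivity
  have hint := ((h_integrable (d := m - c) hb).comp_sub_right m).const_mul
    (Real.sqrt (2 * π * (v : ℝ)))⁻¹
  refine hint.congr (Filter.Eventually.of_forall fun x => ?_)
  exact (gauss_key m c hv x).symm

lemma sq_gauss_integral (m c : ℝ) {v : ℝ≥0} (hv : v ≠ 0) :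
    ∫ x : ℝ, gaussianPDFReal m v x * (x - c) ^ 2 = (v : ℝ) + (m - c) ^ 2 := by
  have hv' : (0 : ℝ) < v := coe_pos_of_ne_zero hv
  set b : ℝ := 1 / (2 * (v : ℝ)) with hbdef
  have hb : 0 < b := by positivity
  have hC : (0 : ℝ) < Real.sqrt (2 * π * (v : ℝ)) := Real.sqrt_pos.mpr (by positivity)
  calc ∫ x : ℝ, gaussianPDFReal m v x * (x - c) ^ 2
      = ∫ x : ℝ, (Real.sqrt (2 * π * (v : ℝ)))⁻¹
          * ((fun y => (y + (m - c)) ^ 2 * Real.exp (-b * y ^ 2)) (x - m)) := by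
        exact integral_congr_ae (Filter.Eventually.of_forall fun x => gauss_key m c hv x)
    _ = (Real.sqrt (2 * π * (v : ℝ)))⁻¹
          * ∫ y : ℝ, (y + (m - c)) ^ 2 * Real.exp (-b * y ^ 2) := by
        rw [integral_const_mul, integral_sub_right_eq_self (μ := volume)
          (fun y => (y + (m - c)) ^ 2 * Real.exp (-b * y ^ 2)) m]
    _ = (v : ℝ) + (m - c) ^ 2 := by
        rw [h_integral hb]
        have hπb : π / b = 2 * π * (v : ℝ) := by
          rw [hbdef]; field_simp
        rw [hπb]
        rw [show (2 : ℝ) * b = ((v : ℝ))⁻¹ by rw [hbdef]; field_simp]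
        rw [div_inv_eq_mul]
        rw [show (Real.sqrt (2 * π * (v : ℝ)))⁻¹
            * (Real.sqrt (2 * π * (v : ℝ)) * (v : ℝ) + (m - c) ^ 2 * Real.sqrt (2 * π * (v : ℝ)))
            = (Real.sqrt (2 * π * (v : ℝ)))⁻¹ * Real.sqrt (2 * π * (v : ℝ))
              * ((v : ℝ) + (m - c) ^ 2) by ring, inv_mul_cancel₀ hC.ne', one_mul]

lemma gaussianReal_integral_eq (m : ℝ) {v : ℝ≥0} (hv : v ≠ 0) (g : ℝ → ℝ) :
    ∫ x, g x ∂(gaussianReal m v) = ∫ x, gaussianPDFReal m v x * g x := by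
  rw [gaussianReal_of_var_ne_zero _ hv]
  have hd : gaussianPDF m v = fun x => ((gaussianPDFReal m v x).toNNReal : ℝ≥0∞) := by
    funext x; rfl
  rw [hd, integral_withDensity_eq_integral_smul
    ((measurable_gaussianPDFReal m v).real_toNNReal) g]
  congr 1
  funext x
  rw [NNReal.smul_def, smul_eq_mul, Real.coe_toNNReal _ (gaussianPDFReal_nonneg m v x)]

lemma gaussianReal_integrable_iff (m : ℝ) {v : ℝ≥0} (hv : v ≠ 0) (g : ℝ → ℝ) :
    Integrable g (gaussianReal m v) ↔
      Integrable (fun x => gaussianPDFReal m v x * g x) volume := by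
  rw [gaussianReal_of_var_ne_zero _ hv]
  have hd : gaussianPDF m v = fun x => ((gaussianPDFReal m v x).toNNReal : ℝ≥0∞) := by
    funext x; rfl
  rw [hd, integrable_withDensity_iff_integrable_smul
    ((measurable_gaussianPDFReal m v).real_toNNReal)]
  constructor <;> intro h <;> refine h.congr (Filter.Eventually.of_forall fun x => ?_) <;>
    simp only [NNReal.smul_def, smul_eq_mul,
      Real.coe_toNNReal _ (gaussianPDFReal_nonneg m v x)]

lemma integrable_sq_sub_gaussianReal (m c : ℝ) {v : ℝ≥0} (hv : v ≠ 0) :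
    Integrable (fun x => (x - c) ^ 2) (gaussianReal m v) := by
  rw [gaussianReal_integrable_iff m hv]
  exact sq_gauss_integrable m c hv

lemma integral_sq_sub_gaussianReal (m c : ℝ) {v : ℝ≥0} (hv : v ≠ 0) :
    ∫ x, (x - c) ^ 2 ∂(gaussianReal m v) = (v : ℝ) + (m - c) ^ 2 := by
  rw [gaussianReal_integral_eq m hv]
  exact sq_gauss_integral m c hv


lemma log_gaussianPDFReal (m : ℝ) {v : ℝ≥0} (hv : v ≠ 0) (x : ℝ) :
    Real.log (gaussianPDFReal m v x)
      = -Real.log (Real.sqrt (2 * π * (v : ℝ))) + -(x - m) ^ 2 / (2 * (v : ℝ)) := by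
  have hv' : (0 : ℝ) < v := coe_pos_of_ne_zero hv
  have hs : (0 : ℝ) < Real.sqrt (2 * π * (v : ℝ)) :=
    Real.sqrt_pos.mpr (by positivity)
  rw [gaussianPDFReal, Real.log_mul (inv_ne_zero hs.ne') (Real.exp_ne_zero _),
    Real.log_inv, Real.log_exp]

lemma kl_gaussian (m1 m2 : ℝ) {v1 v2 : ℝ≥0} (h1 : v1 ≠ 0) (h2 : v2 ≠ 0) :
    klDivergence (gaussianReal m1 v1) (gaussianReal m2 v2)
      = (1 / 2) * Real.log ((v2 : ℝ) / (v1 : ℝ))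
        + ((v1 : ℝ) + (m1 - m2) ^ 2) / (2 * (v2 : ℝ)) - 1 / 2 := by
  have hv1 : (0 : ℝ) < v1 := coe_pos_of_ne_zero h1
  have hv2 : (0 : ℝ) < v2 := coe_pos_of_ne_zero h2
  have hac := gaussianReal_absolutelyContinuous m1 h1
  have hrn : (gaussianReal m1 v1).rnDeriv (gaussianReal m2 v2)
      =ᵐ[volume] fun x => (gaussianPDF m2 v2 x)⁻¹ * gaussianPDF m1 v1 x := by
    rw [gaussianReal_of_var_ne_zero m2 h2]
    have h := Measure.rnDeriv_withDensity_right (gaussianReal m1 v1) volume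
      (measurable_gaussianPDF m2 v2).aemeasurable
      (Filter.Eventually.of_forall fun x => (gaussianPDF_pos _ h2 x).ne')
      (Filter.Eventually.of_forall fun x => ENNReal.ofReal_ne_top)
    filter_upwards [h, rnDeriv_gaussianReal m1 v1] with x hx hx2
    rw [hx, hx2]
  have hcong : (fun x => Real.log (((gaussianReal m1 v1).rnDeriv (gaussianReal m2 v2) x).toReal))
      =ᵐ[gaussianReal m1 v1]
      fun x => Real.log (gaussianPDFReal m1 v1 x) - Real.log (gaussianPDFReal m2 v2 x) := by
    filter_upwards [hac.ae_le hrn] with x hx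
    rw [hx]
    show Real.log (((gaussianPDF m2 v2 x)⁻¹ * gaussianPDF m1 v1 x).toReal) = _
    rw [ENNReal.toReal_mul, ENNReal.toReal_inv, gaussianPDF, gaussianPDF,
      ENNReal.toReal_ofReal (gaussianPDFReal_nonneg _ _ _),
      ENNReal.toReal_ofReal (gaussianPDFReal_nonneg _ _ _),
      Real.log_mul (inv_ne_zero (gaussianPDFReal_pos _ _ _ h2).ne')
        (gaussianPDFReal_pos _ _ _ h1).ne',
      Real.log_inv]
    ring
  rw [klDivergence, integral_congr_ae hcong]
  set C0 : ℝ := Real.log (Real.sqrt (2 * π * (v2 : ℝ)))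
    - Real.log (Real.sqrt (2 * π * (v1 : ℝ))) with hC0
  have hfun : (fun x => Real.log (gaussianPDFReal m1 v1 x) - Real.log (gaussianPDFReal m2 v2 x))
      = fun x => (C0 + (2 * (v2 : ℝ))⁻¹ * (x - m2) ^ 2) - (2 * (v1 : ℝ))⁻¹ * (x - m1) ^ 2 := by
    funext x
    rw [log_gaussianPDFReal m1 h1 x, log_gaussianPDFReal m2 h2 x, hC0]
    field_simp
    ring
  rw [hfun]
  have iconst : Integrable (fun _ : ℝ => C0) (gaussianReal m1 v1) := integrable_const C0
  have i2 : Integrable (fun x => (2 * (v2 : ℝ))⁻¹ * (x - m2) ^ 2) (gaussianReal m1 v1) :=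
    (integrable_sq_sub_gaussianReal m1 m2 h1).const_mul _
  have i1 : Integrable (fun x => (2 * (v1 : ℝ))⁻¹ * (x - m1) ^ 2) (gaussianReal m1 v1) :=
    (integrable_sq_sub_gaussianReal m1 m1 h1).const_mul _
  have hadd : Integrable (fun x => C0 + (2 * (v2 : ℝ))⁻¹ * (x - m2) ^ 2) (gaussianReal m1 v1) :=
    iconst.add i2
  rw [integral_sub hadd i1, integral_add iconst i2, integral_const,
    integral_const_mul, integral_const_mul, integral_sq_sub_gaussianReal m1 m2 h1,
    integral_sq_sub_gaussianReal m1 m1 h1]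
  simp only [measureReal_def, measure_univ, ENNReal.toReal_one, one_smul, sub_self, ne_eq,
    OfNat.ofNat_ne_zero, not_false_eq_true, zero_pow, add_zero]
  have hC0' : C0 = (1 / 2) * Real.log ((v2 : ℝ) / (v1 : ℝ)) := by
    rw [hC0, Real.log_sqrt (by positivity), Real.log_sqrt (by positivity),
      Real.log_mul (by positivity) hv2.ne', Real.log_mul (by positivity) hv1.ne',
      Real.log_div hv2.ne' hv1.ne']
    ring
  rw [hC0']
  have : (2 * (v1 : ℝ))⁻¹ * (v1 : ℝ) = 1 / 2 := by field_simp
  rw [this]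
  ring

/-- For the Gaussian location model over-the-air scheme, with
`a = √(P/(B² + σ²))` and `τ² = σ₀² + (n−1)a²σ²`, the Gaussian average of the KL divergence
`KL(N(x + (n−1)aθ, τ²) ‖ N(naθ, τ² + a²σ²))` over `x ~ N(aθ, a²σ²)` equals
`(1/2)·ln(1 + a²σ²/τ²)`, and in particular is at most
`(1/2)·1/(n − 1 + σ₀²(B² + σ²)/(Pσ²))`. -/
theorem gaussian_mutual_information_eq_and_le
    (σ B P σ₀ : ℝ) (hσ : 0 < σ) (hB : 0 < B) (hP : 0 < P) (hσ₀ : 0 < σ₀)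
    (n : ℕ) (hn : 1 ≤ n) (θ : ℝ)
    (a τ2 : ℝ)
    (ha : a = Real.sqrt (P / (B ^ 2 + σ ^ 2)))
    (hτ2 : τ2 = σ₀ ^ 2 + ((n : ℝ) - 1) * a ^ 2 * σ ^ 2) :
    (∫ x, klDivergence
          (gaussianReal (x + ((n : ℝ) - 1) * a * θ) τ2.toNNReal)
          (gaussianReal ((n : ℝ) * a * θ) (τ2 + a ^ 2 * σ ^ 2).toNNReal)
        ∂(gaussianReal (a * θ) (a ^ 2 * σ ^ 2).toNNReal))
      = (1 / 2) * Real.log (1 + a ^ 2 * σ ^ 2 / τ2)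
    ∧ (∫ x, klDivergence
          (gaussianReal (x + ((n : ℝ) - 1) * a * θ) τ2.toNNReal)
          (gaussianReal ((n : ℝ) * a * θ) (τ2 + a ^ 2 * σ ^ 2).toNNReal)
        ∂(gaussianReal (a * θ) (a ^ 2 * σ ^ 2).toNNReal))
      ≤ (1 / 2) * (1 / ((n : ℝ) - 1 + σ₀ ^ 2 * (B ^ 2 + σ ^ 2) / (P * σ ^ 2))) := by
  have hBσ : (0 : ℝ) < B ^ 2 + σ ^ 2 := by positivity
  have ha2 : a ^ 2 = P / (B ^ 2 + σ ^ 2) := by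
    rw [ha, Real.sq_sqrt (by positivity)]
  have ha2pos : 0 < a ^ 2 := ha2 ▸ div_pos hP hBσ
  have hw : 0 < a ^ 2 * σ ^ 2 := by positivity
  have hn1 : (1 : ℝ) ≤ (n : ℝ) := by exact_mod_cast hn
  have hτ : 0 < τ2 := by
    have h0 : 0 ≤ ((n : ℝ) - 1) * a ^ 2 * σ ^ 2 :=
      mul_nonneg (mul_nonneg (by linarith) ha2pos.le) (sq_nonneg σ)
    have : 0 < σ₀ ^ 2 := by positivity
    rw [hτ2]; linarith
  have hv2 : 0 < τ2 + a ^ 2 * σ ^ 2 := by linarith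
  have hτnn : τ2.toNNReal ≠ 0 := (Real.toNNReal_pos.mpr hτ).ne'
  have hv2nn : (τ2 + a ^ 2 * σ ^ 2).toNNReal ≠ 0 := (Real.toNNReal_pos.mpr hv2).ne'
  have hwnn : (a ^ 2 * σ ^ 2).toNNReal ≠ 0 := (Real.toNNReal_pos.mpr hw).ne'
  have cτ : ((τ2.toNNReal : ℝ)) = τ2 := Real.coe_toNNReal _ hτ.le
  have cv2 : (((τ2 + a ^ 2 * σ ^ 2).toNNReal : ℝ)) = τ2 + a ^ 2 * σ ^ 2 :=
    Real.coe_toNNReal _ hv2.le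
  have cw : (((a ^ 2 * σ ^ 2).toNNReal : ℝ)) = a ^ 2 * σ ^ 2 := Real.coe_toNNReal _ hw.le
  set w : ℝ := a ^ 2 * σ ^ 2 with hwdef
  set v2 : ℝ := τ2 + a ^ 2 * σ ^ 2 with hv2def
  set C0 : ℝ := (1 / 2) * Real.log (v2 / τ2) + τ2 / (2 * v2) - 1 / 2 with hC0
  have hKL : ∀ x : ℝ, klDivergence
        (gaussianReal (x + ((n : ℝ) - 1) * a * θ) τ2.toNNReal)
        (gaussianReal ((n : ℝ) * a * θ) v2.toNNReal)
      = C0 + (2 * v2)⁻¹ * (x - a * θ) ^ 2 := by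
    intro x
    rw [kl_gaussian _ _ hτnn hv2nn, cτ, cv2]
    rw [show x + ((n : ℝ) - 1) * a * θ - (n : ℝ) * a * θ = x - a * θ by ring]
    rw [hC0]
    field_simp
    ring
  have hint : ∫ x, klDivergence
        (gaussianReal (x + ((n : ℝ) - 1) * a * θ) τ2.toNNReal)
        (gaussianReal ((n : ℝ) * a * θ) v2.toNNReal)
      ∂(gaussianReal (a * θ) w.toNNReal) = (1 / 2) * Real.log (1 + w / τ2) := by
    rw [integral_congr_ae (Filter.Eventually.of_forall hKL)]
    have iconst : Integrable (fun _ : ℝ => C0) (gaussianReal (a * θ) w.toNNReal) :=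
      integrable_const C0
    have isq : Integrable (fun x => (2 * v2)⁻¹ * (x - a * θ) ^ 2)
        (gaussianReal (a * θ) w.toNNReal) :=
      (integrable_sq_sub_gaussianReal _ _ hwnn).const_mul _
    rw [integral_add iconst isq, integral_const, integral_const_mul,
      integral_sq_sub_gaussianReal _ _ hwnn, cw]
    simp only [measureReal_def, measure_univ, ENNReal.toReal_one, one_smul, sub_self, ne_eq,
      OfNat.ofNat_ne_zero, not_false_eq_true, zero_pow, add_zero]
    have hlogeq : v2 / τ2 = 1 + w / τ2 := by
      rw [hv2def, hwdef]; field_simp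
    rw [hC0, hlogeq]
    field_simp
    ring
  constructor
  · exact hint
  · rw [hint]
    have hD : 0 < (n : ℝ) - 1 + σ₀ ^ 2 * (B ^ 2 + σ ^ 2) / (P * σ ^ 2) := by
      have : 0 < σ₀ ^ 2 * (B ^ 2 + σ ^ 2) / (P * σ ^ 2) := by positivity
      linarith
    have hy : w / τ2 = 1 / ((n : ℝ) - 1 + σ₀ ^ 2 * (B ^ 2 + σ ^ 2) / (P * σ ^ 2)) := by
      rw [hwdef, hτ2, ha2]
      field_simp
      ring
    have hlog : Real.log (1 + w / τ2) ≤ w / τ2 := by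
      have h1 : 0 < 1 + w / τ2 := by positivity
      have := Real.log_le_sub_one_of_pos h1
      linarith
    rw [← hy]
    have hhalf : (0 : ℝ) ≤ 1 / 2 := by norm_num
    calc (1 / 2) * Real.log (1 + w / τ2) ≤ (1 / 2) * (w / τ2) := by
          exact mul_le_mul_of_nonneg_left hlog hhalf
      _ = (1 / 2) * (w / τ2) := rfl
end

section
/- Let σ > 0, B > 0, P > 0, σ₀ > 0, let n ≥ 1 and d ≥ 1 be integers, and let θ ∈ ℝ^d. Let U_{ij} (1 ≤ i ≤ n, 1 ≤ j ≤ d) be independent random variables with U_{ij} ~ N(θ_j, σ²), and let Z_1, …, Z_d be independent N(0, σ₀²) variables independent of the U_{ij}. Set a = √(P/(B² + σ²)), Y_j = a·Σ_{i=1}^n U_{ij} + Z_j, and θ̂_j = Y_j/(n·a). Then E[ Σ_{j=1}^d (θ̂_j − θ_j)² ] = (d σ² / n) · ( 1 + (σ₀²/(nP)) · (1 + B²/σ²) ). In particular, the supremum of this mean squared error over all θ with ‖θ‖₂ ≤ B√d equals (d σ²/n)(1 + (σ₀²/(nP))(1 + B²/σ²)). -/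
open MeasureTheory ProbabilityTheory Real

/-- The mean squared error of the over-the-air estimator `θ̂_j = Y_j/(n a)` with
`Y_j = a Σ_i U_{ij} + Z_j`, where the `U_{ij} ~ N(θ_j, σ²)` and `Z_j ~ N(0, σ₀²)`
are all independent, and `a = √(P/(B² + σ²))`. -/
noncomputable def gaussianOTARisk (σ B P σ₀ : ℝ) (n d : ℕ) (θ : Fin d → ℝ) : ℝ :=
  ∫ p : (Fin n → Fin d → ℝ) × (Fin d → ℝ),
      ∑ j, ((Real.sqrt (P / (B ^ 2 + σ ^ 2)) * ∑ i, p.1 i j + p.2 j) /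
              ((n : ℝ) * Real.sqrt (P / (B ^ 2 + σ ^ 2))) - θ j) ^ 2
    ∂((Measure.pi fun _ : Fin n =>
          Measure.pi fun j : Fin d => gaussianReal (θ j) (σ ^ 2).toNNReal).prod
        (Measure.pi fun _ : Fin d => gaussianReal 0 (σ₀ ^ 2).toNNReal))

section Auxiliary

open Filter
open scoped ENNReal NNReal

section GaussMoments

variable {v : ℝ≥0}

lemma integral_gaussianReal_eq (m : ℝ) (hv : v ≠ 0) (g : ℝ → ℝ) :
    ∫ x, g x ∂gaussianReal m v = ∫ x, gaussianPDFReal m v x * g x := by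
  rw [gaussianReal_of_var_ne_zero m hv]
  have h1 : gaussianPDF m v = fun x => (((gaussianPDFReal m v x).toNNReal : ℝ≥0) : ℝ≥0∞) := rfl
  rw [h1, integral_withDensity_eq_integral_smul
    ((measurable_gaussianPDFReal m v).real_toNNReal)]
  congr 1
  ext x
  rw [NNReal.smul_def, Real.coe_toNNReal _ (gaussianPDFReal_nonneg m v x), smul_eq_mul]

lemma integrable_gaussianReal_iff (m : ℝ) (hv : v ≠ 0) (g : ℝ → ℝ) :
    Integrable g (gaussianReal m v) ↔
      Integrable (fun x => gaussianPDFReal m v x * g x) volume := by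
  rw [gaussianReal_of_var_ne_zero m hv]
  have h1 : gaussianPDF m v = fun x => (((gaussianPDFReal m v x).toNNReal : ℝ≥0) : ℝ≥0∞) := rfl
  rw [h1, integrable_withDensity_iff_integrable_smul
    ((measurable_gaussianPDFReal m v).real_toNNReal)]
  constructor <;> intro h <;> refine h.congr (Filter.Eventually.of_forall fun x => ?_) <;>
    simp only [NNReal.smul_def, Real.coe_toNNReal _ (gaussianPDFReal_nonneg m v x), smul_eq_mul]

lemma gaussianPDFReal_zero_eq (hv : v ≠ 0) (x : ℝ) :
    gaussianPDFReal 0 v x = (√(2 * π * v))⁻¹ * rexp (-(2 * (v:ℝ))⁻¹ * x ^ 2) := by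
  rw [gaussianPDFReal]
  congr 1
  rw [sub_zero]
  congr 1
  have hv' : (0:ℝ) < v := lt_of_le_of_ne v.coe_nonneg (by exact_mod_cast hv.symm)
  field_simp

end GaussMoments

section RawIntegrals

variable {b : ℝ}

lemma tendsto_exp_neg_mul_sq_atTop (hb : 0 < b) :
    Tendsto (fun x : ℝ => rexp (-b * x ^ 2)) atTop (nhds 0) := by
  have h1 : Tendsto (fun x : ℝ => x ^ 2) atTop atTop := tendsto_pow_atTop two_ne_zero
  have h2 : Tendsto (fun x : ℝ => -b * x ^ 2) atTop atBot :=
    (tendsto_neg_atTop_atBot.comp (h1.const_mul_atTop hb))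
      |>.congr (fun x => by simp [Function.comp, neg_mul])
  exact Real.tendsto_exp_atBot.comp h2

lemma tendsto_exp_neg_mul_sq_atBot (hb : 0 < b) :
    Tendsto (fun x : ℝ => rexp (-b * x ^ 2)) atBot (nhds 0) := by
  have h1 : Tendsto (fun x : ℝ => x ^ 2) atBot atTop := by
    have h0 : Tendsto (fun x : ℝ => |x| ^ 2) atBot atTop :=
      (tendsto_pow_atTop (n := 2) two_ne_zero).comp tendsto_abs_atBot_atTop
    refine h0.congr fun x => ?_
    simp [sq_abs]
  have h2 : Tendsto (fun x : ℝ => -b * x ^ 2) atBot atBot :=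
    (tendsto_neg_atTop_atBot.comp (h1.const_mul_atTop hb))
      |>.congr (fun x => by simp [Function.comp, neg_mul])
  exact Real.tendsto_exp_atBot.comp h2

lemma hasDerivAt_neg_exp_sq (hb : 0 < b) (x : ℝ) :
    HasDerivAt (fun x : ℝ => -(2 * b)⁻¹ * rexp (-b * x ^ 2)) (x * rexp (-b * x ^ 2)) x := by
  have h : HasDerivAt (fun x : ℝ => -b * x ^ 2) (-b * (2 * x)) x := by
    simpa using ((hasDerivAt_pow 2 x).const_mul (-b))
  have := (h.exp).const_mul (-(2 * b)⁻¹)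
  refine this.congr_deriv ?_
  field_simp

lemma integral_self_mul_gaussian (hb : 0 < b) :
    ∫ x : ℝ, x * rexp (-b * x ^ 2) = 0 := by
  have h := integral_of_hasDerivAt_of_tendsto (f := fun x : ℝ => -(2 * b)⁻¹ * rexp (-b * x ^ 2))
    (f' := fun x : ℝ => x * rexp (-b * x ^ 2)) (hasDerivAt_neg_exp_sq hb)
    (integrable_mul_exp_neg_mul_sq hb)
    (by simpa using ((tendsto_exp_neg_mul_sq_atBot hb).const_mul (-(2 * b)⁻¹)))
    (by simpa using ((tendsto_exp_neg_mul_sq_atTop hb).const_mul (-(2 * b)⁻¹)))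
  simpa using h

lemma integrable_sq_mul_gaussian (hb : 0 < b) :
    Integrable (fun x : ℝ => x ^ 2 * rexp (-b * x ^ 2)) := by
  have h := integrable_rpow_mul_exp_neg_mul_sq hb (s := 2) (by norm_num)
  have he : (fun x : ℝ => x ^ (2:ℝ) * rexp (-b * x ^ 2))
      = fun x : ℝ => x ^ 2 * rexp (-b * x ^ 2) := by
    funext x
    rw [show ((2:ℝ)) = ((2:ℕ):ℝ) by norm_num, Real.rpow_natCast]
  rwa [he] at h

lemma integral_sq_mul_gaussian (hb : 0 < b) :
    ∫ x : ℝ, x ^ 2 * rexp (-b * x ^ 2) = (2 * b)⁻¹ * √(π / b) := by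
  have hu : ∀ x : ℝ, HasDerivAt (fun y : ℝ => y) (1 : ℝ) x := fun x => hasDerivAt_id x
  have h := integral_mul_deriv_eq_deriv_mul_of_integrable
    (u := fun y : ℝ => y) (u' := fun _ => (1:ℝ))
    (v := fun x : ℝ => -(2 * b)⁻¹ * rexp (-b * x ^ 2))
    (v' := fun x : ℝ => x * rexp (-b * x ^ 2))
    (fun x _ => hu x) (fun x _ => hasDerivAt_neg_exp_sq hb x)
    (by
      refine (integrable_sq_mul_gaussian hb).congr (Filter.Eventually.of_forall fun x => ?_)
      simp [Pi.mul_apply]; ring)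
    (by
      have := ((integrable_exp_neg_mul_sq hb).const_mul (-(2 * b)⁻¹))
      refine this.congr (Filter.Eventually.of_forall fun x => ?_)
      simp [Pi.mul_apply])
    (by
      have := ((integrable_mul_exp_neg_mul_sq hb).const_mul (-(2 * b)⁻¹))
      refine this.congr (Filter.Eventually.of_forall fun x => ?_)
      simp [Pi.mul_apply]; ring)
  have h2 : ∫ x : ℝ, x * (x * rexp (-b * x ^ 2)) = ∫ x : ℝ, x ^ 2 * rexp (-b * x ^ 2) := by
    congr 1; ext x; ring
  rw [h2] at h
  rw [h]
  have : ∫ x : ℝ, (1:ℝ) * (-(2 * b)⁻¹ * rexp (-b * x ^ 2)) = -(2 * b)⁻¹ * √(π / b) := by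
    simp only [one_mul]
    rw [MeasureTheory.integral_const_mul, integral_gaussian]
  rw [this]
  ring

end RawIntegrals

section GaussMoments2

variable {v : ℝ≥0}

lemma gauss_param_pos (hv : v ≠ 0) : (0:ℝ) < (2 * (v:ℝ))⁻¹ := by
  have hv' : (0:ℝ) < v := lt_of_le_of_ne v.coe_nonneg (by exact_mod_cast hv.symm)
  positivity

lemma integral_id_gaussianReal_zero (hv : v ≠ 0) :
    ∫ x, x ∂gaussianReal 0 v = 0 := by
  rw [integral_gaussianReal_eq 0 hv]
  have : ∀ x : ℝ, gaussianPDFReal 0 v x * x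
      = (√(2 * π * v))⁻¹ * (x * rexp (-(2 * (v:ℝ))⁻¹ * x ^ 2)) := by
    intro x; rw [gaussianPDFReal_zero_eq hv]; ring
  simp_rw [this]
  rw [MeasureTheory.integral_const_mul, integral_self_mul_gaussian (gauss_param_pos hv), mul_zero]

lemma integral_sq_gaussianReal_zero (hv : v ≠ 0) :
    ∫ x, x ^ 2 ∂gaussianReal 0 v = v := by
  rw [integral_gaussianReal_eq 0 hv]
  have : ∀ x : ℝ, gaussianPDFReal 0 v x * x ^ 2
      = (√(2 * π * v))⁻¹ * (x ^ 2 * rexp (-(2 * (v:ℝ))⁻¹ * x ^ 2)) := by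
    intro x; rw [gaussianPDFReal_zero_eq hv]; ring
  simp_rw [this]
  rw [MeasureTheory.integral_const_mul, integral_sq_mul_gaussian (gauss_param_pos hv)]
  have hv' : (0:ℝ) < v := lt_of_le_of_ne v.coe_nonneg (by exact_mod_cast hv.symm)
  have h1 : ((2:ℝ) * (2 * (v:ℝ))⁻¹)⁻¹ = v := by field_simp
  have h2 : π / (2 * (v:ℝ))⁻¹ = 2 * π * v := by field_simp
  rw [h1, h2]
  have h3 : (0:ℝ) < 2 * π * v := by positivity
  rw [mul_comm ((v:ℝ)) _, ← mul_assoc]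
  rw [inv_mul_cancel₀ (by positivity : √(2 * π * (v:ℝ)) ≠ 0), one_mul]

lemma integrable_id_gaussianReal_zero (hv : v ≠ 0) :
    Integrable (fun x : ℝ => x) (gaussianReal 0 v) := by
  rw [integrable_gaussianReal_iff 0 hv]
  have : ∀ x : ℝ, gaussianPDFReal 0 v x * x
      = (√(2 * π * v))⁻¹ * (x * rexp (-(2 * (v:ℝ))⁻¹ * x ^ 2)) := by
    intro x; rw [gaussianPDFReal_zero_eq hv]; ring
  simp_rw [this]
  exact (integrable_mul_exp_neg_mul_sq (gauss_param_pos hv)).const_mul _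

lemma integrable_sq_gaussianReal_zero (hv : v ≠ 0) :
    Integrable (fun x : ℝ => x ^ 2) (gaussianReal 0 v) := by
  rw [integrable_gaussianReal_iff 0 hv]
  have : ∀ x : ℝ, gaussianPDFReal 0 v x * x ^ 2
      = (√(2 * π * v))⁻¹ * (x ^ 2 * rexp (-(2 * (v:ℝ))⁻¹ * x ^ 2)) := by
    intro x; rw [gaussianPDFReal_zero_eq hv]; ring
  simp_rw [this]
  exact (integrable_sq_mul_gaussian (gauss_param_pos hv)).const_mul _

lemma gaussianReal_eq_map (m : ℝ) (v : ℝ≥0) :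
    gaussianReal m v = (gaussianReal 0 v).map (· + m) := by
  rw [gaussianReal_map_add_const m, zero_add]

lemma integral_sub_gaussianReal (m : ℝ) (hv : v ≠ 0) :
    ∫ x, x - m ∂gaussianReal m v = 0 := by
  rw [gaussianReal_eq_map m v,
    integral_map (measurable_add_const m).aemeasurable
      (measurable_id'.sub_const m).aestronglyMeasurable]
  simpa using integral_id_gaussianReal_zero hv

lemma integral_sub_sq_gaussianReal (m : ℝ) (hv : v ≠ 0) :
    ∫ x, (x - m) ^ 2 ∂gaussianReal m v = v := by
  rw [gaussianReal_eq_map m v,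
    integral_map (measurable_add_const m).aemeasurable
      (((measurable_id'.sub_const m).pow_const 2)).aestronglyMeasurable]
  simpa using integral_sq_gaussianReal_zero hv

lemma integrable_sub_gaussianReal (m : ℝ) (hv : v ≠ 0) :
    Integrable (fun x : ℝ => x - m) (gaussianReal m v) := by
  rw [gaussianReal_eq_map m v,
    integrable_map_measure (measurable_id'.sub_const m).aestronglyMeasurable
      (measurable_add_const m).aemeasurable]
  refine (integrable_id_gaussianReal_zero hv).congr (Filter.Eventually.of_forall fun x => ?_)
  simp [Function.comp]

lemma integrable_sub_sq_gaussianReal (m : ℝ) (hv : v ≠ 0) :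
    Integrable (fun x : ℝ => (x - m) ^ 2) (gaussianReal m v) := by
  rw [gaussianReal_eq_map m v,
    integrable_map_measure ((measurable_id'.sub_const m).pow_const 2).aestronglyMeasurable
      (measurable_add_const m).aemeasurable]
  refine (integrable_sq_gaussianReal_zero hv).congr (Filter.Eventually.of_forall fun x => ?_)
  simp [Function.comp]

end GaussMoments2

section PiEval

lemma map_eval_pi_measure {ι : Type*} [Fintype ι] [DecidableEq ι] {α : ι → Type*}
    [∀ i, MeasurableSpace (α i)] (ν : ∀ i, Measure (α i)) [∀ i, IsProbabilityMeasure (ν i)]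
    (j : ι) : (Measure.pi ν).map (Function.eval j) = ν j := by
  ext s hs
  rw [Measure.map_apply (measurable_pi_apply j) hs]
  rw [show Function.eval j ⁻¹' s
      = Set.pi Set.univ (Function.update (fun i => (Set.univ : Set (α i))) j s)
      from Set.eval_preimage, Measure.pi_pi]
  rw [Finset.prod_eq_single j (fun i _ hij => by simp [Function.update_of_ne hij])
    (fun h => absurd (Finset.mem_univ j) h)]
  simp

lemma integral_eval_pi {ι : Type*} [Fintype ι] [DecidableEq ι] {α : ι → Type*}
    [∀ i, MeasurableSpace (α i)] (ν : ∀ i, Measure (α i)) [∀ i, IsProbabilityMeasure (ν i)]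
    (j : ι) (g : α j → ℝ) (hg : Measurable g) :
    ∫ y, g (y j) ∂Measure.pi ν = ∫ x, g x ∂ν j := by
  rw [← map_eval_pi_measure ν j,
    integral_map (measurable_pi_apply j).aemeasurable hg.aestronglyMeasurable]

lemma integrable_eval_pi {ι : Type*} [Fintype ι] [DecidableEq ι] {α : ι → Type*}
    [∀ i, MeasurableSpace (α i)] (ν : ∀ i, Measure (α i)) [∀ i, IsProbabilityMeasure (ν i)]
    (j : ι) (g : α j → ℝ) (hg : Measurable g) (hint : Integrable g (ν j)) :
    Integrable (fun y => g (y j)) (Measure.pi ν) := by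
  rw [show (fun y : ∀ i, α i => g (y j)) = g ∘ Function.eval j from rfl,
    ← integrable_map_measure hg.aestronglyMeasurable (measurable_pi_apply j).aemeasurable,
    map_eval_pi_measure ν j]
  exact hint

end PiEval


lemma pi_sum_moments {Ω : Type*} [MeasurableSpace Ω] (ν : Measure Ω) [IsProbabilityMeasure ν]
    (f : Ω → ℝ) (hmeas : Measurable f) (hint : Integrable f ν)
    (hint2 : Integrable (fun ω => f ω ^ 2) ν) (hmean : ∫ ω, f ω ∂ν = 0) :
    ∀ n : ℕ,
      Integrable (fun y : Fin n → Ω => ∑ i, f (y i)) (Measure.pi fun _ => ν) ∧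
      Integrable (fun y : Fin n → Ω => (∑ i, f (y i)) ^ 2) (Measure.pi fun _ => ν) ∧
      (∫ y : Fin n → Ω, ∑ i, f (y i) ∂(Measure.pi fun _ => ν)) = 0 ∧
      (∫ y : Fin n → Ω, (∑ i, f (y i)) ^ 2 ∂(Measure.pi fun _ => ν)) = n * ∫ ω, f ω ^ 2 ∂ν := by
  intro n
  induction n with
  | zero =>
      refine ⟨?_, ?_, ?_, ?_⟩ <;> simp
  | succ n ih =>
      obtain ⟨ih1, ih2, ih3, ih4⟩ := ih
      set S : (Fin n → Ω) → ℝ := fun y => ∑ i, f (y i) with hS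
      have hmp := (measurePreserving_piFinSuccAbove (fun _ : Fin (n+1) => ν) 0).symm
      have hesymm : ∀ p : Ω × (Fin n → Ω),
          (MeasurableEquiv.piFinSuccAbove (fun _ : Fin (n+1) => Ω) 0).symm p
            = Fin.cons p.1 p.2 := fun p => by
        simp [MeasurableEquiv.piFinSuccAbove, Fin.insertNthEquiv, Fin.insertNth_zero]
      have hkey : ∀ p : Ω × (Fin n → Ω),
          (∑ i : Fin (n+1),
            f (((MeasurableEquiv.piFinSuccAbove (fun _ : Fin (n+1) => Ω) 0).symm p) i))
            = f p.1 + S p.2 := by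
        intro p
        rw [hesymm p, Fin.sum_univ_succ]
        simp [hS]
      set pin := (Measure.pi fun _ : Fin n => ν) with hpin
      have hf1 : Integrable (fun p : Ω × (Fin n → Ω) => f p.1) (ν.prod pin) :=
        (hint.mul_prod (integrable_const 1)).congr
          (Filter.Eventually.of_forall fun p => mul_one _)
      have hf2 : Integrable (fun p : Ω × (Fin n → Ω) => S p.2) (ν.prod pin) :=
        ((integrable_const (1:ℝ)).mul_prod ih1).congr
          (Filter.Eventually.of_forall fun p => one_mul _)
      have hf1sq : Integrable (fun p : Ω × (Fin n → Ω) => f p.1 ^ 2) (ν.prod pin) :=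
        (hint2.mul_prod (integrable_const 1)).congr
          (Filter.Eventually.of_forall fun p => mul_one _)
      have hS2 : Integrable (fun p : Ω × (Fin n → Ω) => S p.2 ^ 2) (ν.prod pin) :=
        ((integrable_const (1:ℝ)).mul_prod ih2).congr
          (Filter.Eventually.of_forall fun p => one_mul _)
      have hcross : Integrable (fun p : Ω × (Fin n → Ω) => f p.1 * S p.2) (ν.prod pin) :=
        hint.mul_prod ih1
      have e1 : ∫ p : Ω × (Fin n → Ω), f p.1 ∂(ν.prod pin) = ∫ ω, f ω ∂ν := by
        simpa using integral_prod_mul (μ := ν) (ν := pin) f (fun _ => (1:ℝ))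
      have eS : ∫ p : Ω × (Fin n → Ω), S p.2 ∂(ν.prod pin) = ∫ y, S y ∂pin := by
        simpa using integral_prod_mul (μ := ν) (ν := pin) (fun _ => (1:ℝ)) S
      have ef2 : ∫ p : Ω × (Fin n → Ω), f p.1 ^ 2 ∂(ν.prod pin) = ∫ ω, f ω ^ 2 ∂ν := by
        simpa using integral_prod_mul (μ := ν) (ν := pin) (fun ω => f ω ^ 2) (fun _ => (1:ℝ))
      have eSq : ∫ p : Ω × (Fin n → Ω), S p.2 ^ 2 ∂(ν.prod pin) = ∫ y, S y ^ 2 ∂pin := by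
        simpa using integral_prod_mul (μ := ν) (ν := pin) (fun _ => (1:ℝ)) (fun y => S y ^ 2)
      have ecross : ∫ p : Ω × (Fin n → Ω), f p.1 * S p.2 ∂(ν.prod pin)
          = (∫ ω, f ω ∂ν) * ∫ y, S y ∂pin := integral_prod_mul f S
      have hintf1 : Integrable (fun p : Ω × (Fin n → Ω) => f p.1 + S p.2) (ν.prod pin) :=
        hf1.add hf2
      have hintf2 : Integrable (fun p : Ω × (Fin n → Ω) => (f p.1 + S p.2) ^ 2)
          (ν.prod pin) := by
        refine ((hf1sq.add (hcross.const_mul 2)).add hS2).congr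
          (Filter.Eventually.of_forall fun p => ?_)
        simp only [Pi.add_apply]
        ring
      have emb := (MeasurableEquiv.piFinSuccAbove (fun _ : Fin (n+1) => Ω) 0).symm
        |>.measurableEmbedding
      constructor
      · rw [← hmp.integrable_comp_emb emb]
        refine hintf1.congr (Filter.Eventually.of_forall fun p => ?_)
        exact (hkey p).symm
      constructor
      · rw [← hmp.integrable_comp_emb emb]
        refine hintf2.congr (Filter.Eventually.of_forall fun p => ?_)
        simp only [Function.comp]
        rw [hkey p]
      constructor
      · rw [← hmp.integral_comp']
        rw [integral_congr_ae (Filter.Eventually.of_forall hkey)]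
        rw [integral_add hf1 hf2, e1, eS, hmean, ih3]
        simp
      · rw [← hmp.integral_comp']
        have hkey2 : ∀ p : Ω × (Fin n → Ω),
            (∑ i : Fin (n+1),
              f (((MeasurableEquiv.piFinSuccAbove (fun _ : Fin (n+1) => Ω) 0).symm p) i)) ^ 2
              = f p.1 ^ 2 + (2 * (f p.1 * S p.2) + S p.2 ^ 2) := fun p => by
          rw [hkey p]; ring
        rw [integral_congr_ae (Filter.Eventually.of_forall hkey2)]
        have h23 : Integrable (fun p : Ω × (Fin n → Ω) => 2 * (f p.1 * S p.2) + S p.2 ^ 2)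
            (ν.prod pin) := by
          refine ((hcross.const_mul 2).add hS2).congr
            (Filter.Eventually.of_forall fun p => ?_)
          simp only [Pi.add_apply]
        rw [integral_add hf1sq h23,
          integral_add (hcross.const_mul 2) hS2, ef2, eSq, ih4]
        have : ∫ p : Ω × (Fin n → Ω), 2 * (f p.1 * S p.2) ∂(ν.prod pin)
            = 2 * ((∫ ω, f ω ∂ν) * ∫ y, S y ∂pin) := by
          rw [MeasureTheory.integral_const_mul, ecross]
        rw [this, hmean]
        push_cast
        ring

lemma gaussian_ota_risk_value
    (σ B P σ₀ : ℝ) (hσ : 0 < σ) (hB : 0 < B) (hP : 0 < P) (hσ₀ : 0 < σ₀)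
    (n d : ℕ) (hn : 1 ≤ n) (θ : Fin d → ℝ) :
    gaussianOTARisk σ B P σ₀ n d θ
      = (d : ℝ) * (σ ^ 2 / n + σ₀ ^ 2 / ((n : ℝ) * Real.sqrt (P / (B ^ 2 + σ ^ 2))) ^ 2) := by
  have hnR : (0:ℝ) < n := by exact_mod_cast hn
  set a : ℝ := Real.sqrt (P / (B ^ 2 + σ ^ 2)) with haa
  have hBσ : (0:ℝ) < B ^ 2 + σ ^ 2 := by positivity
  have ha : 0 < a := Real.sqrt_pos.mpr (div_pos hP hBσ)
  set v₁ : ℝ≥0 := (σ ^ 2).toNNReal with hv₁def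
  set v₂ : ℝ≥0 := (σ₀ ^ 2).toNNReal with hv₂def
  have hv₁ : v₁ ≠ 0 := by
    simp only [hv₁def, ne_eq, Real.toNNReal_eq_zero, not_le]
    positivity
  have hv₂ : v₂ ≠ 0 := by
    simp only [hv₂def, ne_eq, Real.toNNReal_eq_zero, not_le]
    positivity
  have hv₁c : ((v₁ : ℝ)) = σ ^ 2 := Real.coe_toNNReal _ (sq_nonneg σ)
  have hv₂c : ((v₂ : ℝ)) = σ₀ ^ 2 := Real.coe_toNNReal _ (sq_nonneg σ₀)
  set ν : Measure (Fin d → ℝ) := Measure.pi fun l : Fin d => gaussianReal (θ l) v₁ with hν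
  set μ2 : Measure (Fin d → ℝ) := Measure.pi fun _ : Fin d => gaussianReal 0 v₂ with hμ2
  -- per-coordinate facts
  have hid2 : Integrable (fun t : ℝ => t) (gaussianReal 0 v₂) := by
    have := integrable_sub_gaussianReal 0 hv₂
    simpa using this
  have hidsq2 : Integrable (fun t : ℝ => t ^ 2) (gaussianReal 0 v₂) := by
    have := integrable_sub_sq_gaussianReal 0 hv₂
    simpa using this
  have hmean2 : ∫ t, t ∂gaussianReal 0 v₂ = 0 := by
    have := integral_sub_gaussianReal 0 hv₂
    simpa using this
  have hsq2 : ∫ t, t ^ 2 ∂gaussianReal 0 v₂ = σ₀ ^ 2 := by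
    have := integral_sub_sq_gaussianReal 0 hv₂
    simpa [hv₂c] using this
  -- the per-j value
  have key : ∀ j : Fin d,
      Integrable (fun p : (Fin n → Fin d → ℝ) × (Fin d → ℝ) =>
          ((∑ i, ((p.1 i j - θ j) / n)) + p.2 j / (n * a)) ^ 2)
        ((Measure.pi fun _ : Fin n => ν).prod μ2) ∧
      ∫ p : (Fin n → Fin d → ℝ) × (Fin d → ℝ),
        ((∑ i, ((p.1 i j - θ j) / n)) + p.2 j / (n * a)) ^ 2
        ∂((Measure.pi fun _ : Fin n => ν).prod μ2)
      = σ ^ 2 / n + σ₀ ^ 2 / ((n : ℝ) * a) ^ 2 := by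
    intro j
    set f : (Fin d → ℝ) → ℝ := fun u => (u j - θ j) / n with hf
    set g : (Fin d → ℝ) → ℝ := fun z => z j / (n * a) with hg
    have hfmeas : Measurable f := by
      rw [hf]; exact ((measurable_pi_apply j : Measurable fun u : Fin d → ℝ => u j).sub_const (θ j)).div_const _
    have hgmeas : Measurable g := (measurable_pi_apply j).div_const _
    have hfint : Integrable f ν := by
      have := integrable_eval_pi (fun l : Fin d => gaussianReal (θ l) v₁) j
        (fun t : ℝ => (t - θ j) / n) ((measurable_id'.sub_const _).div_const _)
        ((integrable_sub_gaussianReal (θ j) hv₁).div_const _)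
      exact this
    have hfint2 : Integrable (fun u => f u ^ 2) ν := by
      have h0 : Integrable (fun t : ℝ => ((t - θ j) / n) ^ 2) (gaussianReal (θ j) v₁) := by
        refine ((integrable_sub_sq_gaussianReal (θ j) hv₁).div_const ((n:ℝ)^2)).congr
          (Filter.Eventually.of_forall fun t => ?_)
        simp [div_pow]
      have := integrable_eval_pi (fun l : Fin d => gaussianReal (θ l) v₁) j
        (fun t : ℝ => ((t - θ j) / n) ^ 2)
        (((measurable_id'.sub_const _).div_const _).pow_const 2) h0
      exact this
    have hfmean : ∫ u, f u ∂ν = 0 := by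
      have h0 := integral_eval_pi (fun l : Fin d => gaussianReal (θ l) v₁) j
        (fun t : ℝ => (t - θ j) / n) ((measurable_id'.sub_const _).div_const _)
      rw [hf, hν, h0, integral_div, integral_sub_gaussianReal (θ j) hv₁, zero_div]
    have hfsq : ∫ u, f u ^ 2 ∂ν = σ ^ 2 / (n:ℝ) ^ 2 := by
      have h0 := integral_eval_pi (fun l : Fin d => gaussianReal (θ l) v₁) j
        (fun t : ℝ => ((t - θ j) / n) ^ 2)
        (((measurable_id'.sub_const _).div_const _).pow_const 2)
      rw [hf, hν, h0]
      have h1 : (fun t : ℝ => ((t - θ j) / n) ^ 2)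
          = fun t : ℝ => (t - θ j) ^ 2 / (n:ℝ) ^ 2 := by
        funext t; rw [div_pow]
      rw [h1, integral_div, integral_sub_sq_gaussianReal (θ j) hv₁, hv₁c]
    obtain ⟨hA1, hA2, hA3, hA4⟩ := pi_sum_moments ν f hfmeas hfint hfint2 hfmean n
    -- g over μ2
    have hg1 : Integrable g μ2 := by
      have := integrable_eval_pi (fun _ : Fin d => gaussianReal 0 v₂) j
        (fun t : ℝ => t / (n * a)) (measurable_id'.div_const _) (hid2.div_const _)
      exact this
    have hg2 : Integrable (fun z => g z ^ 2) μ2 := by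
      have h0 : Integrable (fun t : ℝ => (t / (n * a)) ^ 2) (gaussianReal 0 v₂) := by
        refine (hidsq2.div_const (((n:ℝ) * a) ^ 2)).congr
          (Filter.Eventually.of_forall fun t => ?_)
        simp [div_pow]
      have := integrable_eval_pi (fun _ : Fin d => gaussianReal 0 v₂) j
        (fun t : ℝ => (t / (n * a)) ^ 2) ((measurable_id'.div_const _).pow_const 2) h0
      exact this
    have hg3 : ∫ z, g z ∂μ2 = 0 := by
      have h0 := integral_eval_pi (fun _ : Fin d => gaussianReal 0 v₂) j
        (fun t : ℝ => t / (n * a)) (measurable_id'.div_const _)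
      rw [hg, hμ2, h0, integral_div, hmean2, zero_div]
    have hg4 : ∫ z, g z ^ 2 ∂μ2 = σ₀ ^ 2 / ((n:ℝ) * a) ^ 2 := by
      have h0 := integral_eval_pi (fun _ : Fin d => gaussianReal 0 v₂) j
        (fun t : ℝ => (t / (n * a)) ^ 2) ((measurable_id'.div_const _).pow_const 2)
      rw [hg, hμ2, h0]
      have h1 : (fun t : ℝ => (t / (n * a)) ^ 2)
          = fun t : ℝ => t ^ 2 / ((n:ℝ) * a) ^ 2 := by
        funext t; rw [div_pow]
      rw [h1, integral_div, hsq2]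
    -- combine over the product
    set A : (Fin n → Fin d → ℝ) → ℝ := fun x => ∑ i, f (x i) with hA
    set μ1 : Measure (Fin n → Fin d → ℝ) := Measure.pi fun _ : Fin n => ν with hμ1
    have hf1 : Integrable (fun p : (Fin n → Fin d → ℝ) × (Fin d → ℝ) => A p.1)
        (μ1.prod μ2) :=
      (hA1.mul_prod (integrable_const 1)).congr
        (Filter.Eventually.of_forall fun p => mul_one _)
    have hf2 : Integrable (fun p : (Fin n → Fin d → ℝ) × (Fin d → ℝ) => g p.2)
        (μ1.prod μ2) :=
      ((integrable_const (1:ℝ)).mul_prod hg1).congr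
        (Filter.Eventually.of_forall fun p => one_mul _)
    have hf1sq : Integrable (fun p : (Fin n → Fin d → ℝ) × (Fin d → ℝ) => A p.1 ^ 2)
        (μ1.prod μ2) :=
      (hA2.mul_prod (integrable_const 1)).congr
        (Filter.Eventually.of_forall fun p => mul_one _)
    have hS2 : Integrable (fun p : (Fin n → Fin d → ℝ) × (Fin d → ℝ) => g p.2 ^ 2)
        (μ1.prod μ2) :=
      ((integrable_const (1:ℝ)).mul_prod hg2).congr
        (Filter.Eventually.of_forall fun p => one_mul _)
    have hcross : Integrable (fun p : (Fin n → Fin d → ℝ) × (Fin d → ℝ) => A p.1 * g p.2)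
        (μ1.prod μ2) := hA1.mul_prod hg1
    have ef2 : ∫ p : (Fin n → Fin d → ℝ) × (Fin d → ℝ), A p.1 ^ 2 ∂(μ1.prod μ2)
        = ∫ x, A x ^ 2 ∂μ1 := by
      simpa using integral_prod_mul (μ := μ1) (ν := μ2) (fun x => A x ^ 2) (fun _ => (1:ℝ))
    have eSq : ∫ p : (Fin n → Fin d → ℝ) × (Fin d → ℝ), g p.2 ^ 2 ∂(μ1.prod μ2)
        = ∫ z, g z ^ 2 ∂μ2 := by
      simpa using integral_prod_mul (μ := μ1) (ν := μ2) (fun _ => (1:ℝ)) (fun z => g z ^ 2)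
    have ecross : ∫ p : (Fin n → Fin d → ℝ) × (Fin d → ℝ), A p.1 * g p.2 ∂(μ1.prod μ2)
        = (∫ x, A x ∂μ1) * ∫ z, g z ∂μ2 := integral_prod_mul A g
    have hkey2 : ∀ p : (Fin n → Fin d → ℝ) × (Fin d → ℝ),
        (A p.1 + g p.2) ^ 2 = A p.1 ^ 2 + (2 * (A p.1 * g p.2) + g p.2 ^ 2) := fun p => by
      ring
    have h23 : Integrable (fun p : (Fin n → Fin d → ℝ) × (Fin d → ℝ) =>
        2 * (A p.1 * g p.2) + g p.2 ^ 2) (μ1.prod μ2) := by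
      refine ((hcross.const_mul 2).add hS2).congr
        (Filter.Eventually.of_forall fun p => ?_)
      simp only [Pi.add_apply]
    constructor
    · refine (hf1sq.add h23).congr (Filter.Eventually.of_forall fun p => ?_)
      simp only [Pi.add_apply, hA, hf, hg]
      ring
    calc ∫ p : (Fin n → Fin d → ℝ) × (Fin d → ℝ),
          ((∑ i, ((p.1 i j - θ j) / n)) + p.2 j / (n * a)) ^ 2 ∂(μ1.prod μ2)
        = ∫ p : (Fin n → Fin d → ℝ) × (Fin d → ℝ),
            A p.1 ^ 2 + (2 * (A p.1 * g p.2) + g p.2 ^ 2) ∂(μ1.prod μ2) := by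
          refine integral_congr_ae (Filter.Eventually.of_forall fun p => ?_)
          simp only [hA, hf, hg]
          ring
      _ = σ ^ 2 / n + σ₀ ^ 2 / ((n : ℝ) * a) ^ 2 := by
          rw [integral_add hf1sq h23, integral_add (hcross.const_mul 2) hS2, ef2, eSq,
            MeasureTheory.integral_const_mul, ecross, hA3, hA4, hfsq, hg4]
          rw [zero_mul, mul_zero, zero_add]
          field_simp
  -- now the full integral
  have hpt : ∀ p : (Fin n → Fin d → ℝ) × (Fin d → ℝ), ∀ j : Fin d,
      ((a * ∑ i, p.1 i j + p.2 j) / ((n : ℝ) * a) - θ j)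
        = (∑ i, ((p.1 i j - θ j) / n)) + p.2 j / (n * a) := by
    intro p j
    have hsum : (∑ i, ((p.1 i j - θ j) / n)) = ((∑ i, p.1 i j) - n * θ j) / n := by
      rw [← Finset.sum_div, Finset.sum_sub_distrib, Finset.sum_const, Finset.card_univ,
        Fintype.card_fin, nsmul_eq_mul]
    rw [hsum]
    field_simp
    ring
  unfold gaussianOTARisk
  have hrw : ∀ p : (Fin n → Fin d → ℝ) × (Fin d → ℝ),
      (∑ j, ((a * ∑ i, p.1 i j + p.2 j) / ((n : ℝ) * a) - θ j) ^ 2)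
        = ∑ j, ((∑ i, ((p.1 i j - θ j) / n)) + p.2 j / (n * a)) ^ 2 :=
    fun p => Finset.sum_congr rfl fun j _ => by rw [hpt p j]
  calc ∫ p : (Fin n → Fin d → ℝ) × (Fin d → ℝ),
        ∑ j, ((a * ∑ i, p.1 i j + p.2 j) / ((n : ℝ) * a) - θ j) ^ 2
        ∂((Measure.pi fun _ : Fin n => ν).prod μ2)
      = ∫ p : (Fin n → Fin d → ℝ) × (Fin d → ℝ),
          ∑ j, ((∑ i, ((p.1 i j - θ j) / n)) + p.2 j / (n * a)) ^ 2
          ∂((Measure.pi fun _ : Fin n => ν).prod μ2) :=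
        integral_congr_ae (Filter.Eventually.of_forall hrw)
    _ = ∑ j : Fin d, ∫ p : (Fin n → Fin d → ℝ) × (Fin d → ℝ),
          ((∑ i, ((p.1 i j - θ j) / n)) + p.2 j / (n * a)) ^ 2
          ∂((Measure.pi fun _ : Fin n => ν).prod μ2) :=
        integral_finset_sum Finset.univ (fun j _ => (key j).1)
    _ = ∑ _j : Fin d, (σ ^ 2 / n + σ₀ ^ 2 / ((n : ℝ) * a) ^ 2) :=
        Finset.sum_congr rfl fun j _ => (key j).2
    _ = (d : ℝ) * (σ ^ 2 / n + σ₀ ^ 2 / ((n : ℝ) * a) ^ 2) := by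
        rw [Finset.sum_const, Finset.card_univ, Fintype.card_fin, nsmul_eq_mul]

end Auxiliary

/-- achievability part of Lemma 1. For the Gaussian location model,
the over-the-air scheme `f*(u) = √(P/(B²+σ²))·u`, `θ̂*(Y) = Y/(n√(P/(B²+σ²)))` has
mean squared error `(dσ²/n)(1 + (σ₀²/(nP))(1 + B²/σ²))` for every `θ ∈ ℝ^d`; in
particular its supremum over `{θ : ‖θ‖₂ ≤ B√d}` equals this value. -/
theorem gaussian_ota_risk_eq
    (σ B P σ₀ : ℝ) (hσ : 0 < σ) (hB : 0 < B) (hP : 0 < P) (hσ₀ : 0 < σ₀)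
    (n d : ℕ) (hn : 1 ≤ n) (hd : 1 ≤ d) (θ : Fin d → ℝ) :
    gaussianOTARisk σ B P σ₀ n d θ
      = ((d : ℝ) * σ ^ 2 / n) * (1 + σ₀ ^ 2 / ((n : ℝ) * P) * (1 + B ^ 2 / σ ^ 2))
    ∧ sSup ((gaussianOTARisk σ B P σ₀ n d) ''
          {θ' : Fin d → ℝ | Real.sqrt (∑ j, θ' j ^ 2) ≤ B * Real.sqrt d})
      = ((d : ℝ) * σ ^ 2 / n) * (1 + σ₀ ^ 2 / ((n : ℝ) * P) * (1 + B ^ 2 / σ ^ 2)) := by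
  have hBσ : (0:ℝ) < B ^ 2 + σ ^ 2 := by positivity
  have hnR : (0:ℝ) < n := by exact_mod_cast hn
  have hval : ∀ θ' : Fin d → ℝ, gaussianOTARisk σ B P σ₀ n d θ'
      = ((d : ℝ) * σ ^ 2 / n) * (1 + σ₀ ^ 2 / ((n : ℝ) * P) * (1 + B ^ 2 / σ ^ 2)) := by
    intro θ'
    rw [gaussian_ota_risk_value σ B P σ₀ hσ hB hP hσ₀ n d hn θ']
    have hs : Real.sqrt (P / (B ^ 2 + σ ^ 2)) ^ 2 = P / (B ^ 2 + σ ^ 2) :=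
      Real.sq_sqrt (le_of_lt (div_pos hP hBσ))
    rw [mul_pow, hs]
    have hn0 : (n:ℝ) ≠ 0 := ne_of_gt hnR
    field_simp
    ring
  refine ⟨hval θ, ?_⟩
  have h0 : (fun _ => 0 : Fin d → ℝ) ∈
      {θ' : Fin d → ℝ | Real.sqrt (∑ j, θ' j ^ 2) ≤ B * Real.sqrt d} := by
    simp only [Set.mem_setOf_eq, zero_pow, Finset.sum_const, Finset.card_univ, smul_zero,
      ne_eq, OfNat.ofNat_ne_zero, not_false_eq_true, Real.sqrt_zero]
    positivity
  have himg : (gaussianOTARisk σ B P σ₀ n d) ''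
        {θ' : Fin d → ℝ | Real.sqrt (∑ j, θ' j ^ 2) ≤ B * Real.sqrt d}
      = {((d : ℝ) * σ ^ 2 / n) * (1 + σ₀ ^ 2 / ((n : ℝ) * P) * (1 + B ^ 2 / σ ^ 2))} := by
    ext y
    simp only [Set.mem_image, Set.mem_singleton_iff]
    constructor
    · rintro ⟨θ', _, rfl⟩
      exact hval θ'
    · intro hy
      exact ⟨(fun _ => 0 : Fin d → ℝ), h0, by rw [hval]; exact hy.symm⟩
  rw [himg, csSup_singleton]
end

section
/- Let n ≥ 1 and d ≥ 1 be integers and P > 0, σ₀² > 0 reals. For reals A, B, α, β define the per-coordinate risk r_{A,B,α,β}(t) = α²·(n(B−A)²·t(1−t) + σ₀²) + (α·n·(A + (B−A)t) + β − t)² for t ∈ [0,1]. Then the infimum, over all (A, B, α, β) with A² ≤ P and B² ≤ P, of d · sup_{t ∈ [0,1]} r_{A,B,α,β}(t) equals: (d/(4(√n+1)²))·(1 + σ₀²/(nP)) if σ₀² ≤ n^{3/2} P, and (d/4)·1/(1 + n²P/σ₀²) if σ₀² ≥ n^{3/2} P. Moreover the infimum is attained at A = −√P, B = √P, β = 1/2,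 with α = 1/(2√(nP)(√n+1)) in the first case and α = n√P/(2(σ₀² + n²P)) in the second case. -/
open Real

/-- Per-coordinate mean squared error of the affine estimator `αY + β` when `n` users each
transmit `A` (bit `0`) or `B` (bit `1`) over a Gaussian MAC with noise variance `σ0sq`,
the bit being Bernoulli(`t`). -/
noncomputable def perCoordRisk (n : ℕ) (σ0sq A B α β t : ℝ) : ℝ :=
  α ^ 2 * ((n : ℝ) * (B - A) ^ 2 * t * (1 - t) + σ0sq) +
    (α * (n : ℝ) * (A + (B - A) * t) + β - t) ^ 2

/-- Worst-case (over `t ∈ [0,1]`) per-coordinate risk. -/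
noncomputable def worstRisk (n : ℕ) (σ0sq A B α β : ℝ) : ℝ :=
  sSup (perCoordRisk n σ0sq A B α β '' Set.Icc (0 : ℝ) 1)

lemma le_worstRisk (n : ℕ) (S A B α β t : ℝ) (ht : t ∈ Set.Icc (0:ℝ) 1) :
    perCoordRisk n S A B α β t ≤ worstRisk n S A B α β := by
  apply le_csSup _ (Set.mem_image_of_mem _ ht)
  apply IsCompact.bddAbove_image isCompact_Icc
  have : Continuous (perCoordRisk n S A B α β) := by unfold perCoordRisk; fun_prop
  exact this.continuousOn

lemma risk_formula (n : ℕ) (S sP α t : ℝ) :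
    perCoordRisk n S (-sP) sP α (1/2) t
      = α^2*S + (2*α*(n:ℝ)*sP - 1)^2/4
        + (4*α^2*(n:ℝ)*sP^2 - (2*α*(n:ℝ)*sP - 1)^2) * (t*(1-t)) := by
  unfold perCoordRisk; ring

lemma worstRisk_eq (n : ℕ) (S sP α : ℝ)
    (hc : 4*α^2*(n:ℝ)*sP^2 ≤ (2*α*(n:ℝ)*sP - 1)^2) :
    worstRisk n S (-sP) sP α (1/2) = α^2*S + (2*α*(n:ℝ)*sP - 1)^2/4 := by
  unfold worstRisk
  apply IsGreatest.csSup_eq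
  constructor
  · exact ⟨0, by norm_num, by rw [risk_formula]; ring⟩
  · rintro y ⟨t, ht, rfl⟩
    rw [risk_formula]
    nlinarith [mul_nonneg ht.1 (sub_nonneg.2 ht.2)]

lemma worstRisk_lb (n : ℕ) (P S A B α β : ℝ) (hP : 0 < P) (hS : 0 < S)
    (hA : A^2 ≤ P) (hB : B^2 ≤ P) :
    S*(α*(n:ℝ)*(B-A))^2 + (n:ℝ)^2*P*(α*(n:ℝ)*(B-A) - 1)^2
        ≤ 4*(n:ℝ)^2*P*worstRisk n S A B α β
    ∧ S*(α*(n:ℝ)*(B-A))^2 + (n:ℝ)*P*(α*(n:ℝ)*(B-A))^2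
        ≤ 4*(n:ℝ)^2*P*worstRisk n S A B α β := by
  set N := (n:ℝ) with hNdef
  have h0 := le_worstRisk n S A B α β 0 (by norm_num)
  have h1 := le_worstRisk n S A B α β 1 (by norm_num)
  have hh := le_worstRisk n S A B α β (1/2) (by norm_num)
  have e0 : perCoordRisk n S A B α β 0 = α^2*S + (α*N*A+β)^2 := by
    unfold perCoordRisk; rw [← hNdef]; ring
  have e1 : perCoordRisk n S A B α β 1 = α^2*S + (α*N*B+β-1)^2 := by
    unfold perCoordRisk; rw [← hNdef]; ring
  have eh : perCoordRisk n S A B α β (1/2)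
      = α^2*N*(B-A)^2/4 + α^2*S + (α*N*(A+B)/2+β-1/2)^2 := by
    unfold perCoordRisk; rw [← hNdef]; ring
  rw [e0] at h0; rw [e1] at h1; rw [eh] at hh
  have hBA : (B-A)^2 ≤ 4*P := by nlinarith [sq_nonneg (A+B)]
  have hc2 : (0:ℝ) ≤ 2*N^2*P := by positivity
  have H0 := mul_le_mul_of_nonneg_left h0 hc2
  have H1 := mul_le_mul_of_nonneg_left h1 hc2
  have Hh := mul_le_mul_of_nonneg_left hh (by positivity : (0:ℝ) ≤ 4*N^2*P)
  have hint1 : (0:ℝ) ≤ S*(α*N)^2*(4*P - (B-A)^2) :=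
    mul_nonneg (mul_nonneg hS.le (sq_nonneg _)) (by linarith)
  have hint2 : (0:ℝ) ≤ N^2*P*(α*N*A+β + (α*N*B+β-1))^2 :=
    mul_nonneg (mul_nonneg (sq_nonneg N) hP.le) (sq_nonneg _)
  have hint3 : (0:ℝ) ≤ 4*N^2*P*(α*N*(A+B)/2+β-1/2)^2 := by positivity
  constructor
  · linarith [H0, H1, hint1, hint2]
  · linarith [Hh, hint1, hint3]

lemma key2 (Nr P S u W : ℝ) (hP : 0 < P) (hS : 0 < S) (hN : 0 < Nr)
    (h1 : S*u^2 + Nr^2*P*(u-1)^2 ≤ 4*Nr^2*P*W) :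
    S ≤ 4*(S + Nr^2*P)*W := by
  have hpos : (0:ℝ) < Nr^2*P := by positivity
  have H := mul_le_mul_of_nonneg_left h1 (by positivity : (0:ℝ) ≤ S + Nr^2*P)
  have hsq := sq_nonneg ((S + Nr^2*P)*u - Nr^2*P)
  have h3 : Nr^2*P * S ≤ Nr^2*P * (4*(S + Nr^2*P)*W) := by nlinarith [H, hsq]
  exact le_of_mul_le_mul_left h3 hpos

lemma key1 (q P S u W : ℝ) (hq : 1 ≤ q) (hP : 0 < P) (hS : 0 < S) (hreg : S ≤ q^3*P)
    (h1 : S*u^2 + (q^2)^2*P*(u-1)^2 ≤ 4*(q^2)^2*P*W)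
    (h2 : S*u^2 + q^2*P*u^2 ≤ 4*(q^2)^2*P*W) :
    q^2*P + S ≤ 4*q^2*P*(q+1)^2*W := by
  have hq0 : (0:ℝ) < q := lt_of_lt_of_le one_pos hq
  have hpos : (0:ℝ) < q^4*P := by positivity
  have H1 := mul_le_mul_of_nonneg_left h1
    (by positivity : (0:ℝ) ≤ (S + q^2*P)*(1+q))
  have H2 := mul_le_mul_of_nonneg_left h2
    (by nlinarith : (0:ℝ) ≤ (q^3*P - S)*(1+q))
  have H3 : (0:ℝ) ≤ (S + q^2*P)*(q^3*P) * ((1+q)*u - q)^2 :=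
    mul_nonneg (by positivity) (sq_nonneg _)
  have h3 : q^4*P * (q^2*P + S) ≤ q^4*P * (4*q^2*P*(q+1)^2*W) := by linarith
  exact le_of_mul_le_mul_left h3 hpos

lemma attain1 (n : ℕ) (q sP P S α : ℝ) (hq : 1 ≤ q) (hsP : 0 < sP) (hS : 0 < S)
    (hn : (n:ℝ) = q^2) (hP2 : sP^2 = P) (hα : α = 1/(2*(q*sP)*(q+1))) :
    worstRisk n S (-sP) sP α (1/2) = 1/(4*(q+1)^2)*(1 + S/(q^2*P)) := by
  subst hP2
  have hq0 : (0:ℝ) < q := lt_of_lt_of_le one_pos hq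
  have hq1 : q + 1 ≠ 0 := by positivity
  have hc : 4*α^2*(n:ℝ)*sP^2 ≤ (2*α*(n:ℝ)*sP - 1)^2 := by
    apply le_of_eq
    subst hα; rw [hn]; field_simp; ring
  rw [worstRisk_eq n S sP α hc, hα, hn]
  field_simp
  ring

lemma attain2 (n : ℕ) (q sP P S α : ℝ) (hq : 1 ≤ q) (hsP : 0 < sP) (hS : 0 < S)
    (hn : (n:ℝ) = q^2) (hP2 : sP^2 = P) (hreg : q^3*P ≤ S)
    (hα : α = (n:ℝ)*sP/(2*(S + (n:ℝ)^2*P))) :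
    worstRisk n S (-sP) sP α (1/2) = S/(4*(S + (n:ℝ)^2*P)) := by
  subst hP2
  have hq0 : (0:ℝ) < q := lt_of_lt_of_le one_pos hq
  have hD : (0:ℝ) < S + (q^2)^2*sP^2 := by positivity
  rw [hn] at hα
  simp only [hn]
  have hSsq : q^6*sP^4 ≤ S^2 := by
    have h1 := mul_le_mul_of_nonneg_left hreg hS.le
    have h2 := mul_le_mul_of_nonneg_right hreg (by positivity : (0:ℝ) ≤ q^3*sP^2)
    nlinarith [h1, h2]
  have hc : 4*α^2*(q^2:ℝ)*sP^2 ≤ (2*α*(q^2:ℝ)*sP - 1)^2 := by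
    have e1 : 2*α*(q^2:ℝ)*sP - 1 = -S/(S + (q^2)^2*sP^2) := by
      rw [hα]; field_simp; ring
    have e2 : 4*α^2*(q^2:ℝ)*sP^2 = q^6*sP^4/(S + (q^2)^2*sP^2)^2 := by
      rw [hα]; field_simp; ring
    have e3 : (-S/(S + (q^2)^2*sP^2))^2 = S^2/(S + (q^2)^2*sP^2)^2 := by
      rw [neg_div, neg_sq, div_pow]
    rw [e1, e2, e3]
    gcongr

  rw [worstRisk_eq n S sP α (by rw [hn]; exact hc), hα]
  simp only [hn]
  field_simp
  ring

/-- Lemma 2. The minimax mean squared error, over `θ ∈ [0,1]^d`, for the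
product Bernoulli model with two-valued encodings satisfying the power constraint
`A², B² ≤ P` and affine estimators, equals `(d/(4(√n+1)²))(1 + σ₀²/(nP))` when
`σ₀² ≤ n^{3/2}P` and `(d/4)/(1 + n²P/σ₀²)` when `σ₀² ≥ n^{3/2}P`, attained at
`A = −√P`, `B = √P`, `β = 1/2`, and `α = 1/(2√(nP)(√n+1))` resp. `α = n√P/(2(σ₀²+n²P))`. -/
theorem bernoulli_minimax_risk
    (n d : ℕ) (hn : 1 ≤ n) (hd : 1 ≤ d) (P σ0sq : ℝ) (hP : 0 < P) (hσ0 : 0 < σ0sq) :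
    (σ0sq ≤ (n : ℝ) ^ ((3 : ℝ) / 2) * P →
      sInf {x : ℝ | ∃ A B α β : ℝ, A ^ 2 ≤ P ∧ B ^ 2 ≤ P ∧
            x = (d : ℝ) * worstRisk n σ0sq A B α β}
          = ((d : ℝ) / (4 * (Real.sqrt n + 1) ^ 2)) * (1 + σ0sq / ((n : ℝ) * P))
        ∧ (d : ℝ) * worstRisk n σ0sq (-Real.sqrt P) (Real.sqrt P)
              (1 / (2 * Real.sqrt ((n : ℝ) * P) * (Real.sqrt n + 1))) (1 / 2)
          = ((d : ℝ) / (4 * (Real.sqrt n + 1) ^ 2)) * (1 + σ0sq / ((n : ℝ) * P)))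
    ∧ (σ0sq ≥ (n : ℝ) ^ ((3 : ℝ) / 2) * P →
      sInf {x : ℝ | ∃ A B α β : ℝ, A ^ 2 ≤ P ∧ B ^ 2 ≤ P ∧
            x = (d : ℝ) * worstRisk n σ0sq A B α β}
          = ((d : ℝ) / 4) * (1 / (1 + (n : ℝ) ^ 2 * P / σ0sq))
        ∧ (d : ℝ) * worstRisk n σ0sq (-Real.sqrt P) (Real.sqrt P)
              ((n : ℝ) * Real.sqrt P / (2 * (σ0sq + (n : ℝ) ^ 2 * P))) (1 / 2)
          = ((d : ℝ) / 4) * (1 / (1 + (n : ℝ) ^ 2 * P / σ0sq))) := by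
  set q := Real.sqrt (n:ℝ) with hqdef
  set sP := Real.sqrt P with hsPdef
  have hq2 : q^2 = (n:ℝ) := Real.sq_sqrt (Nat.cast_nonneg n)
  have hsP2 : sP^2 = P := Real.sq_sqrt hP.le
  have hq1 : (1:ℝ) ≤ q := by
    rw [hqdef, show (1:ℝ) = Real.sqrt 1 by simp]
    exact Real.sqrt_le_sqrt (by exact_mod_cast hn)
  have hq0 : (0:ℝ) < q := lt_of_lt_of_le one_pos hq1
  have hsP0 : (0:ℝ) < sP := Real.sqrt_pos.mpr hP
  have hn2 : (n:ℝ) = q^2 := hq2.symm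
  have hd0 : (0:ℝ) ≤ (d:ℝ) := Nat.cast_nonneg d
  have hrpow : (n:ℝ)^((3:ℝ)/2) = q^3 := by
    rw [hqdef, Real.sqrt_eq_rpow, ← Real.rpow_natCast ((n:ℝ)^((1:ℝ)/2)) 3,
      ← Real.rpow_mul (Nat.cast_nonneg n)]
    norm_num
  have hsmul : Real.sqrt ((n:ℝ)*P) = q*sP := Real.sqrt_mul (Nat.cast_nonneg n) P
  constructor
  · -- low-noise regime
    intro hreg
    rw [hrpow] at hreg
    rw [hsmul]
    have hatt : (d:ℝ) * worstRisk n σ0sq (-sP) sP (1/(2*(q*sP)*(q+1))) (1/2)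
        = (d:ℝ)/(4*(q+1)^2) * (1 + σ0sq/((n:ℝ)*P)) := by
      rw [attain1 n q sP P σ0sq (1/(2*(q*sP)*(q+1))) hq1 hsP0 hσ0 hn2 hsP2 rfl, hn2]
      ring
    have hmem : ((d:ℝ)/(4*(q+1)^2) * (1 + σ0sq/((n:ℝ)*P)))
        ∈ {x : ℝ | ∃ A B α β : ℝ, A ^ 2 ≤ P ∧ B ^ 2 ≤ P ∧
            x = (d : ℝ) * worstRisk n σ0sq A B α β} :=
      ⟨-sP, sP, 1/(2*(q*sP)*(q+1)), 1/2, le_of_eq (by rw [neg_pow, hsP2]; ring),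
        le_of_eq hsP2, hatt.symm⟩
    have hlow : ∀ x ∈ {x : ℝ | ∃ A B α β : ℝ, A ^ 2 ≤ P ∧ B ^ 2 ≤ P ∧
            x = (d : ℝ) * worstRisk n σ0sq A B α β},
        (d:ℝ)/(4*(q+1)^2) * (1 + σ0sq/((n:ℝ)*P)) ≤ x := by
      rintro x ⟨A, B, α, β, hA, hB, rfl⟩
      obtain ⟨h1, h2⟩ := worstRisk_lb n P σ0sq A B α β hP hσ0 hA hB
      rw [hn2] at h1 h2
      have hkey := key1 q P σ0sq (α*q^2*(B-A)) (worstRisk n σ0sq A B α β)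
        hq1 hP hσ0 hreg h1 h2
      have hW : (q^2*P + σ0sq)/(4*q^2*P*(q+1)^2) ≤ worstRisk n σ0sq A B α β := by
        rw [div_le_iff₀ (by positivity)]; linarith
      calc (d:ℝ)/(4*(q+1)^2) * (1 + σ0sq/((n:ℝ)*P))
          = (d:ℝ) * ((q^2*P + σ0sq)/(4*q^2*P*(q+1)^2)) := by rw [hn2]; field_simp
        _ ≤ (d:ℝ) * worstRisk n σ0sq A B α β := mul_le_mul_of_nonneg_left hW hd0
    exact ⟨le_antisymm (csInf_le ⟨_, hlow⟩ hmem) (le_csInf ⟨_, hmem⟩ hlow), hatt⟩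
  · -- high-noise regime
    intro hreg
    rw [ge_iff_le, hrpow] at hreg
    have hDpos : (0:ℝ) < σ0sq + (n:ℝ)^2*P := by positivity
    have hatt : (d:ℝ) * worstRisk n σ0sq (-sP) sP
          ((n:ℝ)*sP/(2*(σ0sq + (n:ℝ)^2*P))) (1/2)
        = (d:ℝ)/4 * (1/(1 + (n:ℝ)^2*P/σ0sq)) := by
      rw [attain2 n q sP P σ0sq ((n:ℝ)*sP/(2*(σ0sq + (n:ℝ)^2*P)))
        hq1 hsP0 hσ0 hn2 hsP2 hreg rfl]
      field_simp
    have hmem : ((d:ℝ)/4 * (1/(1 + (n:ℝ)^2*P/σ0sq)))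
        ∈ {x : ℝ | ∃ A B α β : ℝ, A ^ 2 ≤ P ∧ B ^ 2 ≤ P ∧
            x = (d : ℝ) * worstRisk n σ0sq A B α β} :=
      ⟨-sP, sP, (n:ℝ)*sP/(2*(σ0sq + (n:ℝ)^2*P)), 1/2,
        le_of_eq (by rw [neg_pow, hsP2]; ring), le_of_eq hsP2, hatt.symm⟩
    have hlow : ∀ x ∈ {x : ℝ | ∃ A B α β : ℝ, A ^ 2 ≤ P ∧ B ^ 2 ≤ P ∧
            x = (d : ℝ) * worstRisk n σ0sq A B α β},
        (d:ℝ)/4 * (1/(1 + (n:ℝ)^2*P/σ0sq)) ≤ x := by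
      rintro x ⟨A, B, α, β, hA, hB, rfl⟩
      obtain ⟨h1, _⟩ := worstRisk_lb n P σ0sq A B α β hP hσ0 hA hB
      have hNpos : (0:ℝ) < (n:ℝ) := by exact_mod_cast hn
      have hkey := key2 ((n:ℝ)) P σ0sq (α*(n:ℝ)*(B-A)) (worstRisk n σ0sq A B α β)
        hP hσ0 hNpos h1
      have hW : σ0sq/(4*(σ0sq + (n:ℝ)^2*P)) ≤ worstRisk n σ0sq A B α β := by
        rw [div_le_iff₀ (by positivity)]; linarith
      calc (d:ℝ)/4 * (1/(1 + (n:ℝ)^2*P/σ0sq))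
          = (d:ℝ) * (σ0sq/(4*(σ0sq + (n:ℝ)^2*P))) := by field_simp
        _ ≤ (d:ℝ) * worstRisk n σ0sq A B α β := mul_le_mul_of_nonneg_left hW hd0
    exact ⟨le_antisymm (csInf_le ⟨_, hlow⟩ hmem) (le_csInf ⟨_, hmem⟩ hlow), hatt⟩
end

section
/- Let n, d, m be positive integers with 2m ≤ d, and let P > 0, σ₀² > 0 satisfy (d²/(4m(d−m)))·σ₀² ≤ n^{3/2}·P. For reals A, B, α, β define the per-coordinate risk r_{A,B,α,β}(t) = α²·(n(B−A)²·t(1−t) + σ₀²) + (α·n·(A + (B−A)t) + β − t)² for t ∈ [0,1], and let Θ_m = { θ ∈ [0,1]^d : Σ_{j=1}^d θ_j ≤ m }. Then the infimum, over all (A, B, α, β) such that Σ_{j=1}^d (θ_j B² + (1−θ_j) A²) ≤ dP for every θ ∈ Θ_m, of sup_{θ ∈ Θ_m} Σ_{j=1}^d r_{A,B,α,β}(θ_j) equals (m/(√n+1)²) · ( (d−m)/d + d σ₀² / ( m n P (√((d−m)/m) + √(m/(d−m)))² ) ). Moreover the infimum is attained at A = −√(mP/(d−m)), B = √((d−m)P/m),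 α = 1/( √(nP)·(√((d−m)/m)+√(m/(d−m)))·(√n+1) ), and β = (1 − 2m/d)·(n√P/2)·(√((d−m)/m)+√(m/(d−m)))·α + m/d − (n√P/2)·(√((d−m)/m) − √(m/(d−m)))·α. -/
open Real

/-- The parameter set of the `m`-sparse product Bernoulli model. -/
def sparseParams (d : ℕ) (m : ℕ) : Set (Fin d → ℝ) :=
  {θ | (∀ j, θ j ∈ Set.Icc (0 : ℝ) 1) ∧ ∑ j, θ j ≤ (m : ℝ)}

/-- Worst-case (over `θ ∈ Θ_m`) total risk of the affine estimator. -/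
noncomputable def sparseWorstRisk (n d m : ℕ) (σ0sq A B α β : ℝ) : ℝ :=
  sSup ((fun θ : Fin d → ℝ => ∑ j, perCoordRisk n σ0sq A B α β (θ j)) '' sparseParams d m)

set_option maxHeartbeats 1000000

theorem risk_eq' (n : ℕ) (hn : 0 < n) (σ0sq A B α β t : ℝ) :
    perCoordRisk n σ0sq A B α β t
      = α ^ 2 * σ0sq + (α * (n:ℝ) * (B - A)) ^ 2 / (n:ℝ) * (t * (1 - t))
        + ((α * (n:ℝ) * A + β) + (α * (n:ℝ) * (B - A) - 1) * t) ^ 2 := by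
  have hn' : (n:ℝ) ≠ 0 := by positivity
  unfold perCoordRisk
  field_simp
  ring

theorem key_ineq' (t q κ u w : ℝ) (ht : 1 ≤ t) (hq : 0 < q) (hκ : 0 < κ)
    (hw : κ * u ^ 2 ≤ w) :
    (q + t ^ 2 * κ) / (t + 1) ^ 2
      ≤ w + (1 - (t ^ 2 * κ + q) / (q * (t + 1))) * q * u ^ 2 / t ^ 2
        + ((t ^ 2 * κ + q) / (q * (t + 1))) * q * (u - 1) ^ 2 := by
  have ht0 : (0:ℝ) < t := by linarith
  have h1 : (0:ℝ) < t + 1 := by linarith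
  have key : w + (1 - (t ^ 2 * κ + q) / (q * (t + 1))) * q * u ^ 2 / t ^ 2
        + ((t ^ 2 * κ + q) / (q * (t + 1))) * q * (u - 1) ^ 2
        - (q + t ^ 2 * κ) / (t + 1) ^ 2
      = (w - κ * u^2) + ((κ * t ^ 2 + q) / t) * ((t + 1) * u - t) ^ 2 / (t + 1) ^ 2 := by
    field_simp
    ring
  have h2 : 0 ≤ ((κ * t ^ 2 + q) / t) * ((t + 1) * u - t) ^ 2 / (t + 1) ^ 2 := by positivity
  linarith [key]

theorem sum_vertex' (d m : ℕ) (hmd : m < d) (f : ℝ → ℝ) :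
    ∑ j : Fin d, f (if (j:ℕ) < m then (1:ℝ) else 0) = m * f 1 + ((d:ℝ) - m) * f 0 := by
  have h1 : ∑ j : Fin d, f (if (j:ℕ) < m then (1:ℝ) else 0)
      = ∑ j : Fin d, (if (j:ℕ) < m then f 1 else f 0) := by
    refine Finset.sum_congr rfl fun j _ => ?_
    split <;> rfl
  rw [h1, Finset.sum_ite, Finset.sum_const, Finset.sum_const]
  have hc : (Finset.univ.filter fun j : Fin d => (j:ℕ) < m).card = m := by
    have : (Finset.univ.filter fun j : Fin d => (j:ℕ) < m) = Finset.Iio (⟨m, hmd⟩ : Fin d) := by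
      ext j; simp [Fin.lt_def]
    rw [this, Fin.card_Iio]
  have hc2 : (Finset.univ.filter fun j : Fin d => ¬ (j:ℕ) < m).card = d - m := by
    have h := Finset.card_filter_add_card_filter_not
      (s := (Finset.univ : Finset (Fin d))) (p := fun j : Fin d => (j:ℕ) < m)
    simp only [Finset.card_univ, Fintype.card_fin, hc] at h
    omega
  rw [hc, hc2]
  have : ((d - m : ℕ) : ℝ) = (d:ℝ) - m := by
    push_cast [Nat.cast_sub hmd.le]; ring
  simp [nsmul_eq_mul, this]

theorem lower_bound_aux (n d m : ℕ) (hn : 1 ≤ n) (hm : 1 ≤ m) (hmd : 2 * m ≤ d)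
    (P σ0sq s : ℝ) (hP : 0 < P) (hσ0 : 0 < σ0sq) (hs0 : 0 < s)
    (hs2 : (m:ℝ) * ((d:ℝ) - m) * s ^ 2 = (d:ℝ) ^ 2)
    (hσle : σ0sq ≤ (Real.sqrt n) ^ 3 * P)
    (A B α β : ℝ) (hpow : (m:ℝ) * B ^ 2 + ((d:ℝ) - m) * A ^ 2 ≤ (d:ℝ) * P)
    (x : ℝ)
    (hx1 : (m:ℝ) * perCoordRisk n σ0sq A B α β 1
        + ((d:ℝ) - m) * perCoordRisk n σ0sq A B α β 0 ≤ x)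
    (hx2 : (d:ℝ) * perCoordRisk n σ0sq A B α β ((m:ℝ)/(d:ℝ)) ≤ x) :
    ((m:ℝ) / (Real.sqrt n + 1) ^ 2) *
      (((d:ℝ) - m) / d + (d:ℝ) * σ0sq / ((m:ℝ) * n * P * s ^ 2)) ≤ x := by
  have hn0 : 0 < n := hn
  have hnR : (0:ℝ) < (n:ℝ) := by exact_mod_cast hn0
  have hmR : (0:ℝ) < (m:ℝ) := by exact_mod_cast hm
  have hd2 : 2 ≤ d := le_trans (by omega) hmd
  have hdR : (0:ℝ) < (d:ℝ) := by
    have : 0 < d := by omega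
    exact_mod_cast this
  have hmdR : 2 * (m:ℝ) ≤ (d:ℝ) := by exact_mod_cast hmd
  have hdmR : (m:ℝ) ≤ (d:ℝ) - m := by linarith
  have hdm0 : (0:ℝ) < (d:ℝ) - m := by linarith
  obtain ⟨rn, hrn⟩ : ∃ rn, rn = Real.sqrt (n:ℝ) := ⟨_, rfl⟩
  rw [← hrn]
  rw [← hrn] at hσle
  have hrn2 : rn ^ 2 = (n:ℝ) := by rw [hrn]; exact Real.sq_sqrt (by positivity)
  have hrnn : 0 ≤ rn := by rw [hrn]; exact Real.sqrt_nonneg _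
  have hrn1 : 1 ≤ rn := by nlinarith [hrn2, hrnn, (by exact_mod_cast hn : (1:ℝ) ≤ (n:ℝ))]
  obtain ⟨q, hqd⟩ : ∃ q, q = (m:ℝ) * ((d:ℝ) - m) / (d:ℝ)^2 := ⟨_, rfl⟩
  obtain ⟨κ, hκd⟩ : ∃ κ, κ = σ0sq / ((n:ℝ)^2 * P * s^2) := ⟨_, rfl⟩
  obtain ⟨u, hud⟩ : ∃ u, u = α * (n:ℝ) * (B - A) := ⟨_, rfl⟩
  obtain ⟨c, hcd⟩ : ∃ c, c = α * (n:ℝ) * A + β := ⟨_, rfl⟩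
  obtain ⟨w, hwd⟩ : ∃ w, w = α ^ 2 * σ0sq := ⟨_, rfl⟩
  obtain ⟨lam, hlamd⟩ : ∃ lam, lam = (rn ^ 2 * κ + q) / (q * (rn + 1)) := ⟨_, rfl⟩
  have hq0 : 0 < q := by rw [hqd]; positivity
  have hκ0 : 0 < κ := by rw [hκd]; positivity
  -- power implies (B-A)^2 ≤ P s^2
  have hBA : (B - A)^2 ≤ P * s^2 := by
    have h1 : (m:ℝ) * ((d:ℝ)-m) * (B-A)^2 ≤ (d:ℝ) * ((m:ℝ)*B^2 + ((d:ℝ)-m)*A^2) := by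
      nlinarith [sq_nonneg ((m:ℝ)*B + ((d:ℝ)-m)*A)]
    have h2 : (d:ℝ) * ((m:ℝ)*B^2 + ((d:ℝ)-m)*A^2) ≤ (d:ℝ) * ((d:ℝ)*P) :=
      mul_le_mul_of_nonneg_left hpow hdR.le
    have h3 : (m:ℝ) * ((d:ℝ)-m) * (B-A)^2 ≤ (m:ℝ) * ((d:ℝ)-m) * (P * s^2) := by
      nlinarith [hs2]
    have h4 : (0:ℝ) < (m:ℝ) * ((d:ℝ)-m) := by positivity
    nlinarith [h3, h4]
  -- κ u² ≤ w
  have hκu : κ * u ^ 2 ≤ w := by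
    have hPs : (0:ℝ) < P * s^2 := by positivity
    have e1 : κ * u ^ 2 * (P * s^2) = σ0sq * α^2 * (B-A)^2 := by
      rw [hκd, hud]; field_simp
    have e2 : σ0sq * α^2 * (B-A)^2 ≤ σ0sq * α^2 * (P*s^2) :=
      mul_le_mul_of_nonneg_left hBA (by positivity)
    have e3 : w * (P*s^2) = σ0sq * α^2 * (P*s^2) := by rw [hwd]; ring
    have : κ * u ^ 2 * (P * s^2) ≤ w * (P*s^2) := by rw [e1, e3]; exact e2
    exact le_of_mul_le_mul_right this hPs
  -- low noise: rn κ ≤ q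
  have hqs1 : q * s^2 = 1 := by
    rw [hqd]; field_simp; linarith [hs2]
  have hrnκq : rn * κ ≤ q := by
    have hD : (0:ℝ) < (n:ℝ)^2 * P * s^2 := by positivity
    have h5 : rn * κ * ((n:ℝ)^2 * P * s^2) = rn * σ0sq := by
      rw [hκd]; field_simp
    have h4q : q * ((n:ℝ)^2 * P * s^2) = (n:ℝ)^2 * P := by
      have : q * ((n:ℝ)^2 * P * s^2) = (n:ℝ)^2 * P * (q * s^2) := by ring
      rw [this, hqs1, mul_one]
    have h6 : rn * σ0sq ≤ (n:ℝ)^2 * P := by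
      have h61 := mul_le_mul_of_nonneg_left hσle hrnn
      have h62 : rn * (rn^3 * P) = (n:ℝ)^2 * P := by
        rw [show rn * (rn^3 * P) = (rn^2)^2 * P by ring, hrn2]
      linarith
    have : rn * κ * ((n:ℝ)^2 * P * s^2) ≤ q * ((n:ℝ)^2 * P * s^2) := by
      rw [h5, h4q]; exact h6
    exact le_of_mul_le_mul_right this hD
  have hlam0 : 0 ≤ lam := by rw [hlamd]; positivity
  have hlam1 : lam ≤ 1 := by
    rw [hlamd, div_le_one (by positivity)]
    nlinarith [hrnκq, hrn1, hκ0, hq0]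
  -- the mixture identity
  have hcomb : lam * ((m:ℝ) * perCoordRisk n σ0sq A B α β 1
        + ((d:ℝ) - m) * perCoordRisk n σ0sq A B α β 0)
      + (1 - lam) * ((d:ℝ) * perCoordRisk n σ0sq A B α β ((m:ℝ)/(d:ℝ)))
      = (d:ℝ) * (w + (1 - lam) * q * u^2 / (n:ℝ) + lam * q * (u-1)^2
          + (c + ((m:ℝ)/(d:ℝ)) * (u-1))^2) := by
    simp only [risk_eq' n hn0]
    rw [hud, hcd, hwd, hqd]
    field_simp
    ring
  -- key inequality
  have hfin := key_ineq' rn q κ u w hrn1 hq0 hκ0 hκu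
  rw [← hlamd] at hfin
  have hfin' : (q + rn ^ 2 * κ) / (rn + 1) ^ 2
      ≤ w + (1 - lam) * q * u ^ 2 / (n:ℝ) + lam * q * (u - 1) ^ 2 := by
    rw [← hrn2]; linarith [hfin]
  -- rewrite target
  have hRe : ((m:ℝ) / (rn + 1) ^ 2) *
      (((d:ℝ) - m) / d + (d:ℝ) * σ0sq / ((m:ℝ) * n * P * s ^ 2))
      = (d:ℝ) * ((q + rn ^ 2 * κ) / (rn + 1) ^ 2) := by
    have core : (m:ℝ) * (((d:ℝ) - m) / d + (d:ℝ) * σ0sq / ((m:ℝ) * n * P * s ^ 2))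
        = (d:ℝ) * (q + (n:ℝ) * κ) := by
      rw [hqd, hκd]; field_simp
    rw [hrn2, div_mul_eq_mul_div, core, mul_div_assoc]
  have hmul := mul_le_mul_of_nonneg_left hfin' hdR.le
  have hsq : 0 ≤ (d:ℝ) * (c + ((m:ℝ)/(d:ℝ)) * (u-1))^2 := by positivity
  have hxx : lam * ((m:ℝ) * perCoordRisk n σ0sq A B α β 1
        + ((d:ℝ) - m) * perCoordRisk n σ0sq A B α β 0)
      + (1 - lam) * ((d:ℝ) * perCoordRisk n σ0sq A B α β ((m:ℝ)/(d:ℝ))) ≤ x := by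
    have t1 := mul_le_mul_of_nonneg_left hx1 hlam0
    have t2 := mul_le_mul_of_nonneg_left hx2 (by linarith : (0:ℝ) ≤ 1 - lam)
    have t3 : lam * x + (1 - lam) * x = x := by ring
    linarith
  rw [hRe]
  linarith [hmul, hsq, hcomb, hxx]

/-- low-channel-noise case of Theorem 1. Minimax error for the `m`-sparse
Bernoulli model with two-valued encodings under the average power constraint and affine
estimators, when `(d²/(4m(d−m)))σ₀² ≤ n^{3/2}P`. -/
theorem sparse_bernoulli_minimax_risk_low_noise
    (n d m : ℕ) (hn : 1 ≤ n) (hm : 1 ≤ m) (hmd : 2 * m ≤ d)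
    (P σ0sq : ℝ) (hP : 0 < P) (hσ0 : 0 < σ0sq)
    (hcase : ((d : ℝ) ^ 2 / (4 * (m : ℝ) * ((d : ℝ) - m))) * σ0sq ≤ (n : ℝ) ^ ((3 : ℝ) / 2) * P)
    (s Astar Bstar αstar βstar : ℝ)
    (hs : s = Real.sqrt (((d : ℝ) - m) / m) + Real.sqrt ((m : ℝ) / ((d : ℝ) - m)))
    (hA : Astar = -Real.sqrt ((m : ℝ) * P / ((d : ℝ) - m)))
    (hB : Bstar = Real.sqrt (((d : ℝ) - m) * P / m))
    (hα : αstar = 1 / (Real.sqrt ((n : ℝ) * P) * s * (Real.sqrt n + 1)))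
    (hβ : βstar = (1 - 2 * (m : ℝ) / d) * ((n : ℝ) * Real.sqrt P / 2) * s * αstar
        + (m : ℝ) / d - ((n : ℝ) * Real.sqrt P / 2) *
            (Real.sqrt (((d : ℝ) - m) / m) - Real.sqrt ((m : ℝ) / ((d : ℝ) - m))) * αstar) :
    sInf {x : ℝ | ∃ A B α β : ℝ,
          (∀ θ ∈ sparseParams d m, ∑ j, (θ j * B ^ 2 + (1 - θ j) * A ^ 2) ≤ (d : ℝ) * P) ∧
          x = sparseWorstRisk n d m σ0sq A B α β}
        = ((m : ℝ) / (Real.sqrt n + 1) ^ 2) *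
            (((d : ℝ) - m) / d + (d : ℝ) * σ0sq / ((m : ℝ) * n * P * s ^ 2))
    ∧ (∀ θ ∈ sparseParams d m,
          ∑ j, (θ j * Bstar ^ 2 + (1 - θ j) * Astar ^ 2) ≤ (d : ℝ) * P)
    ∧ sparseWorstRisk n d m σ0sq Astar Bstar αstar βstar
        = ((m : ℝ) / (Real.sqrt n + 1) ^ 2) *
            (((d : ℝ) - m) / d + (d : ℝ) * σ0sq / ((m : ℝ) * n * P * s ^ 2)) := by
  -- basic numeric facts
  have hn0 : 0 < n := hn
  have hnR : (0:ℝ) < (n:ℝ) := by exact_mod_cast hn0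
  have hmR : (0:ℝ) < (m:ℝ) := by exact_mod_cast hm
  have hmlt : m < d := by omega
  have hdR : (0:ℝ) < (d:ℝ) := by exact_mod_cast (by omega : 0 < d)
  have hmdR : 2 * (m:ℝ) ≤ (d:ℝ) := by exact_mod_cast hmd
  have hdmR : (m:ℝ) ≤ (d:ℝ) - m := by linarith
  have hdm0 : (0:ℝ) < (d:ℝ) - m := by linarith
  have hmdR' : (m:ℝ) ≤ (d:ℝ) := by linarith
  -- opaque square roots
  obtain ⟨rn, hrn⟩ : ∃ rn, rn = Real.sqrt (n:ℝ) := ⟨_, rfl⟩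
  obtain ⟨ra, hra⟩ : ∃ ra, ra = Real.sqrt (((d:ℝ) - m) / m) := ⟨_, rfl⟩
  obtain ⟨rb, hrb⟩ : ∃ rb, rb = Real.sqrt ((m:ℝ) / ((d:ℝ) - m)) := ⟨_, rfl⟩
  obtain ⟨rp, hrp⟩ : ∃ rp, rp = Real.sqrt P := ⟨_, rfl⟩
  rw [← hrn]
  rw [← hra, ← hrb] at hs hβ
  rw [← hrp] at hβ
  rw [← hrn] at hα
  have hrn2 : rn ^ 2 = (n:ℝ) := by rw [hrn]; exact Real.sq_sqrt (by positivity)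
  have hrnn : 0 ≤ rn := by rw [hrn]; exact Real.sqrt_nonneg _
  have hrn1 : 1 ≤ rn := by
    nlinarith only [hrn2, hrnn, (by exact_mod_cast hn : (1:ℝ) ≤ (n:ℝ))]
  have hrn1' : (0:ℝ) < rn + 1 := by linarith
  have ha2 : ra ^ 2 = ((d:ℝ) - m) / m := by rw [hra]; exact Real.sq_sqrt (by positivity)
  have hb2 : rb ^ 2 = (m:ℝ) / ((d:ℝ) - m) := by rw [hrb]; exact Real.sq_sqrt (by positivity)
  have hp2 : rp ^ 2 = P := by rw [hrp]; exact Real.sq_sqrt hP.le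
  have ha0 : 0 < ra := by rw [hra]; exact Real.sqrt_pos.2 (by positivity)
  have hb0 : 0 < rb := by rw [hrb]; exact Real.sqrt_pos.2 (by positivity)
  have hp0 : 0 < rp := by rw [hrp]; exact Real.sqrt_pos.2 hP
  have hab : ra * rb = 1 := by
    rw [hra, hrb, ← Real.sqrt_mul (by positivity)]
    rw [show ((d:ℝ) - m) / m * ((m:ℝ) / ((d:ℝ) - m)) = 1 by field_simp]
    exact Real.sqrt_one
  have hs0 : 0 < s := by rw [hs]; positivity
  have hs2 : (m:ℝ) * ((d:ℝ) - m) * s ^ 2 = (d:ℝ) ^ 2 := by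
    have h1 : s ^ 2 = ra ^ 2 + 2 * (ra * rb) + rb ^ 2 := by rw [hs]; ring
    rw [ha2, hab, hb2] at h1
    rw [h1]; field_simp; ring
  -- star parameters in terms of opaque roots
  have hA' : Astar = -(rp * rb) := by
    rw [hA, hrp, hrb, ← Real.sqrt_mul hP.le,
      show P * ((m:ℝ) / ((d:ℝ) - m)) = (m:ℝ) * P / ((d:ℝ) - m) by ring]
  have hB' : Bstar = rp * ra := by
    rw [hB, hrp, hra, ← Real.sqrt_mul hP.le,
      show P * (((d:ℝ) - m) / m) = ((d:ℝ) - m) * P / m by ring]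
  have hnP : Real.sqrt ((n:ℝ) * P) = rn * rp := by
    rw [hrn, hrp, ← Real.sqrt_mul (by positivity)]
  have hα' : αstar = 1 / (rn * rp * s * (rn + 1)) := by rw [hα, hnP]
  have hα0 : 0 < αstar := by rw [hα']; positivity
  have hBA : Bstar - Astar = rp * s := by rw [hA', hB', hs]; ring
  -- u, c, w values
  have hu : αstar * (n:ℝ) * (Bstar - Astar) = rn / (rn + 1) := by
    rw [hBA, hα', ← hrn2]; field_simp
  have hc : αstar * (n:ℝ) * Astar + βstar = ((m:ℝ) / d) / (rn + 1) := by
    rw [hβ, hA', hα', hs, ← hrn2]; field_simp; ring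
  have hw : αstar ^ 2 * σ0sq = σ0sq / ((n:ℝ) * P * s ^ 2 * (rn + 1) ^ 2) := by
    rw [hα', ← hrn2, ← hp2, div_pow, one_pow,
      show (rn * rp * s * (rn + 1)) ^ 2 = rn ^ 2 * rp ^ 2 * s ^ 2 * (rn + 1) ^ 2 by ring]
    ring
  -- linear risk
  obtain ⟨K0, hK0⟩ : ∃ K0, K0 = αstar ^ 2 * σ0sq + ((m:ℝ) / d) ^ 2 / (rn + 1) ^ 2 := ⟨_, rfl⟩
  obtain ⟨K1, hK1⟩ : ∃ K1, K1 = (1 - 2 * (m:ℝ) / d) / (rn + 1) ^ 2 := ⟨_, rfl⟩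
  have hK1nn : 0 ≤ K1 := by
    rw [hK1]
    have h1 : 2 * (m:ℝ) / d ≤ 1 := by rw [div_le_one hdR]; linarith only [hmdR]
    exact div_nonneg (by linarith) (by positivity)
  have hlin : ∀ t : ℝ, perCoordRisk n σ0sq Astar Bstar αstar βstar t = K0 + K1 * t := by
    intro t
    rw [risk_eq' n hn0, hu, hc, hK0, hK1, ← hrn2]
    field_simp
    ring
  have hsum : ∀ θ : Fin d → ℝ,
      ∑ j, perCoordRisk n σ0sq Astar Bstar αstar βstar (θ j)
        = (d:ℝ) * K0 + K1 * ∑ j, θ j := by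
    intro θ
    simp only [hlin]
    rw [Finset.sum_add_distrib, Finset.sum_const, ← Finset.mul_sum]
    simp [Finset.card_univ, nsmul_eq_mul]
  -- the target value
  obtain ⟨R, hR⟩ : ∃ R, R = ((m:ℝ) / (rn + 1) ^ 2) *
      (((d:ℝ) - m) / d + (d:ℝ) * σ0sq / ((m:ℝ) * n * P * s ^ 2)) := ⟨_, rfl⟩
  have hRval : (d:ℝ) * K0 + K1 * (m:ℝ) = R := by
    rw [hR, hK0, hK1, hw]
    field_simp
    ring
  rw [← hR]
  -- Part 2: feasibility of the star parameters
  have hA2 : Astar ^ 2 = P * ((m:ℝ) / ((d:ℝ) - m)) := by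
    rw [hA', show (-(rp * rb)) ^ 2 = rp ^ 2 * rb ^ 2 by ring, hp2, hb2]
  have hB2 : Bstar ^ 2 = P * (((d:ℝ) - m) / m) := by
    rw [hB', show (rp * ra) ^ 2 = rp ^ 2 * ra ^ 2 by ring, hp2, ha2]
  have part2 : ∀ θ ∈ sparseParams d m,
      ∑ j, (θ j * Bstar ^ 2 + (1 - θ j) * Astar ^ 2) ≤ (d:ℝ) * P := by
    intro θ hθ
    obtain ⟨hθ1, hθ2⟩ := hθ
    have hrw : ∑ j, (θ j * Bstar ^ 2 + (1 - θ j) * Astar ^ 2)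
        = (d:ℝ) * Astar ^ 2 + (Bstar ^ 2 - Astar ^ 2) * ∑ j, θ j := by
      rw [Finset.mul_sum]
      rw [show (d:ℝ) * Astar ^ 2
          = ∑ _j : Fin d, Astar ^ 2 by rw [Finset.sum_const]; simp [nsmul_eq_mul], ← Finset.sum_add_distrib]
      exact Finset.sum_congr rfl fun j _ => by ring
    have hBA2 : 0 ≤ Bstar ^ 2 - Astar ^ 2 := by
      rw [hA2, hB2]
      have h1 : (m:ℝ) / ((d:ℝ) - m) ≤ 1 := by rw [div_le_one hdm0]; linarith only [hdmR]
      have h2 : (1:ℝ) ≤ ((d:ℝ) - m) / m := by rw [le_div_iff₀ hmR]; linarith only [hdmR]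
      have h3 := mul_le_mul_of_nonneg_left (h1.trans h2) hP.le
      linarith only [h3]
    have hfin : (d:ℝ) * Astar ^ 2 + (Bstar ^ 2 - Astar ^ 2) * (m:ℝ) = (d:ℝ) * P := by
      rw [hA2, hB2]; field_simp; ring
    have h5 := mul_le_mul_of_nonneg_left hθ2 hBA2
    rw [hrw]; linarith only [h5, hfin]
  -- Part 3: worst-case risk of the star parameters equals R
  have hub : ∀ v ∈ (fun θ : Fin d → ℝ =>
      ∑ j, perCoordRisk n σ0sq Astar Bstar αstar βstar (θ j)) '' sparseParams d m, v ≤ R := by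
    rintro v ⟨θ, hθ, rfl⟩
    show ∑ j, perCoordRisk n σ0sq Astar Bstar αstar βstar (θ j) ≤ R
    rw [hsum θ]
    have h5 := mul_le_mul_of_nonneg_left hθ.2 hK1nn
    linarith only [hRval, h5]
  have hdm' : (d:ℝ) * ((m:ℝ) / d) = (m:ℝ) := by field_simp
  have hmem : R ∈ (fun θ : Fin d → ℝ =>
      ∑ j, perCoordRisk n σ0sq Astar Bstar αstar βstar (θ j)) '' sparseParams d m := by
    refine ⟨fun _ => (m:ℝ) / d,
      ⟨fun j => ⟨by positivity, by rw [div_le_one hdR]; linarith only [hmdR']⟩, ?_⟩, ?_⟩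
    · show ∑ _j : Fin d, (m:ℝ) / d ≤ (m:ℝ)
      rw [Finset.sum_const, Finset.card_univ, Fintype.card_fin, nsmul_eq_mul, hdm']
    · show ∑ j : Fin d, perCoordRisk n σ0sq Astar Bstar αstar βstar ((m:ℝ)/d) = R
      have e2 : ∑ j : Fin d, perCoordRisk n σ0sq Astar Bstar αstar βstar ((m:ℝ)/d)
          = (d:ℝ) * K0 + K1 * ((d:ℝ) * ((m:ℝ)/d)) := by
        simp only [hlin, Finset.sum_const, Finset.card_univ, Fintype.card_fin, nsmul_eq_mul]
        ring
      rw [e2, hdm']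
      exact hRval
  have part3 : sparseWorstRisk n d m σ0sq Astar Bstar αstar βstar = R := by
    simp only [sparseWorstRisk]
    exact le_antisymm (csSup_le ⟨R, hmem⟩ hub) (le_csSup ⟨R, hub⟩ hmem)
  refine ⟨?_, part2, part3⟩
  -- Part 1: the minimax value
  have h32 : (n:ℝ) ^ ((3:ℝ)/2) = Real.sqrt (n:ℝ) ^ 3 := by
    rw [Real.sqrt_eq_rpow, ← Real.rpow_natCast ((n:ℝ) ^ ((1:ℝ)/2)) 3,
      ← Real.rpow_mul (by positivity)]
    norm_num
  have h14 : 4 * (m:ℝ) * ((d:ℝ) - m) ≤ (d:ℝ) ^ 2 := by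
    nlinarith only [sq_nonneg ((d:ℝ) - 2 * m)]
  have h1r : (1:ℝ) ≤ (d:ℝ) ^ 2 / (4 * (m:ℝ) * ((d:ℝ) - m)) := by
    rw [le_div_iff₀ (by positivity)]; linarith only [h14]
  have hσle : σ0sq ≤ Real.sqrt (n:ℝ) ^ 3 * P := by
    rw [← h32]; nlinarith only [hcase, h1r, hσ0]
  have hlb : ∀ x ∈ {x : ℝ | ∃ A B α β : ℝ,
      (∀ θ ∈ sparseParams d m, ∑ j, (θ j * B ^ 2 + (1 - θ j) * A ^ 2) ≤ (d : ℝ) * P) ∧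
      x = sparseWorstRisk n d m σ0sq A B α β}, R ≤ x := by
    rintro x ⟨A, B, α, β, hpow, rfl⟩
    -- the m-ones vertex
    have hθvΘ : (fun j : Fin d => if (j:ℕ) < m then (1:ℝ) else 0) ∈ sparseParams d m := by
      refine ⟨fun j => ?_, ?_⟩
      · dsimp only; split <;> norm_num
      · show ∑ j : Fin d, (if (j:ℕ) < m then (1:ℝ) else 0) ≤ (m:ℝ)
        have hv := sum_vertex' d m hmlt (fun t => t)
        rw [hv]; norm_num
    have hpow' : (m:ℝ) * B ^ 2 + ((d:ℝ) - m) * A ^ 2 ≤ (d:ℝ) * P := by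
      have h := hpow _ hθvΘ
      have e := sum_vertex' d m hmlt (fun t => t * B ^ 2 + (1 - t) * A ^ 2)
      rw [e] at h
      linarith only [h]
    have hθcΘ : (fun _ : Fin d => (m:ℝ) / d) ∈ sparseParams d m := by
      refine ⟨fun j => ⟨by positivity, by rw [div_le_one hdR]; linarith only [hmdR']⟩, ?_⟩
      show ∑ _j : Fin d, (m:ℝ) / d ≤ (m:ℝ)
      rw [Finset.sum_const, Finset.card_univ, Fintype.card_fin, nsmul_eq_mul, hdm']
    -- bounded above
    have hbdd : BddAbove ((fun θ : Fin d → ℝ =>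
        ∑ j, perCoordRisk n σ0sq A B α β (θ j)) '' sparseParams d m) := by
      refine ⟨(d:ℝ) * (α ^ 2 * σ0sq + (α * (n:ℝ) * (B - A)) ^ 2 / (n:ℝ)
        + 2 * (α * (n:ℝ) * A + β) ^ 2 + 2 * (α * (n:ℝ) * (B - A) - 1) ^ 2), ?_⟩
      rintro v ⟨θ, hθ, rfl⟩
      have hptw : ∀ j : Fin d, perCoordRisk n σ0sq A B α β (θ j)
          ≤ α ^ 2 * σ0sq + (α * (n:ℝ) * (B - A)) ^ 2 / (n:ℝ)
            + 2 * (α * (n:ℝ) * A + β) ^ 2 + 2 * (α * (n:ℝ) * (B - A) - 1) ^ 2 := by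
        intro j
        obtain ⟨h0, h1⟩ := hθ.1 j
        rw [risk_eq' n hn0]
        have hsq1 : 0 ≤ (α * (n:ℝ) * (B - A)) ^ 2 / (n:ℝ) := by positivity
        have htt : θ j * (1 - θ j) ≤ 1 := by
          nlinarith only [h0, h1, sq_nonneg (θ j - 1)]
        have ht2 : θ j ^ 2 ≤ 1 := by nlinarith only [h0, h1]
        have hG : ((α * (n:ℝ) * (B - A) - 1) * θ j) ^ 2 ≤ (α * (n:ℝ) * (B - A) - 1) ^ 2 := by
          nlinarith only [sq_nonneg (α * (n:ℝ) * (B - A) - 1), ht2]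
        have hmm := mul_le_mul_of_nonneg_left htt hsq1
        linarith only [hmm, hG,
          sq_nonneg ((α * (n:ℝ) * A + β) - (α * (n:ℝ) * (B - A) - 1) * θ j)]
      calc ∑ j, perCoordRisk n σ0sq A B α β (θ j)
          ≤ ∑ _j : Fin d, (α ^ 2 * σ0sq + (α * (n:ℝ) * (B - A)) ^ 2 / (n:ℝ)
            + 2 * (α * (n:ℝ) * A + β) ^ 2 + 2 * (α * (n:ℝ) * (B - A) - 1) ^ 2) :=
            Finset.sum_le_sum fun j _ => hptw j
        _ = _ := by rw [Finset.sum_const, Finset.card_univ, Fintype.card_fin, nsmul_eq_mul]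
    have hx1 : (m:ℝ) * perCoordRisk n σ0sq A B α β 1
        + ((d:ℝ) - m) * perCoordRisk n σ0sq A B α β 0
        ≤ sparseWorstRisk n d m σ0sq A B α β := by
      have hle := le_csSup hbdd ⟨_, hθvΘ, rfl⟩
      have e := sum_vertex' d m hmlt (perCoordRisk n σ0sq A B α β)
      simp only [sparseWorstRisk]
      simp only at hle
      rw [e] at hle
      exact hle
    have hx2 : (d:ℝ) * perCoordRisk n σ0sq A B α β ((m:ℝ)/(d:ℝ))
        ≤ sparseWorstRisk n d m σ0sq A B α β := by
      have hle := le_csSup hbdd ⟨_, hθcΘ, rfl⟩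
      simp only [sparseWorstRisk]
      simp only [Finset.sum_const, Finset.card_univ, Fintype.card_fin, nsmul_eq_mul] at hle
      exact hle
    have := lower_bound_aux n d m hn hm hmd P σ0sq s hP hσ0 hs0 hs2 hσle A B α β hpow'
      (sparseWorstRisk n d m σ0sq A B α β) hx1 hx2
    rw [← hrn] at this
    rw [hR]
    exact this
  have hmemS : R ∈ {x : ℝ | ∃ A B α β : ℝ,
      (∀ θ ∈ sparseParams d m, ∑ j, (θ j * B ^ 2 + (1 - θ j) * A ^ 2) ≤ (d : ℝ) * P) ∧
      x = sparseWorstRisk n d m σ0sq A B α β} :=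
    ⟨Astar, Bstar, αstar, βstar, part2, part3.symm⟩
  exact le_antisymm (csInf_le ⟨R, fun y hy => hlb y hy⟩ hmemS) (le_csInf ⟨R, hmemS⟩ hlb)
end

section
/- Let n, d, m be positive integers with 1 ≤ m ≤ d, let C > 0 and σ₀² > 0. For α, β ∈ ℝ and θ ∈ [0,1]^d define R_{C,α,β}(θ) = [4(n²−n)C²α² − 4nCα + 1]·Σ_j θ_j² + [4nC²α² + 4nCαβ − 2β − 4n²C²α² + 2nCα]·Σ_j θ_j + d·[α²σ₀² + (β − nCα)²], and let Θ_m = { θ ∈ [0,1]^d : Σ_j θ_j ≤ m }. Define α* = min{ 1/(2√n·C·(√n+1)), nC/(2(σ₀² + n²C²)) } and β* = 1/2 if 2m ≥ d, and α* = min{ 1/(2√n·C·(√n+1)), 2m(d−m)nC/(d²σ₀² + 4m(d−m)n²C²) } and β* = (1 − 2m/d)·nC·α* + m/d if 2m ≤ d. Then (α*, β*) satisfies 4(n²−n)C²α*² − 4nCα* + 1 ≥ 0, and for every (α, β) ∈ ℝ² with 4(n²−n)C²α² − 4nCα + 1 ≥ 0 one has sup_{θ ∈ Θ_m} R_{C,α,β}(θ)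 ≥ sup_{θ ∈ Θ_m} R_{C,α*,β*}(θ). -/
open Real

/-- The exact risk expression `R_{C,α,β}(θ)` for the `m`-sparse Bernoulli model when each
user transmits `C(2u−1)` per coordinate over a Gaussian MAC with noise variance `σ0sq` and
the processor uses the affine estimator `αY + β`. -/
noncomputable def Rrisk (n d : ℕ) (σ0sq C α β : ℝ) (θ : Fin d → ℝ) : ℝ :=
  (4 * ((n : ℝ) ^ 2 - n) * C ^ 2 * α ^ 2 - 4 * n * C * α + 1) * ∑ j, θ j ^ 2
    + (4 * n * C ^ 2 * α ^ 2 + 4 * n * C * α * β - 2 * β - 4 * (n : ℝ) ^ 2 * C ^ 2 * α ^ 2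
        + 2 * n * C * α) * ∑ j, θ j
    + (d : ℝ) * (α ^ 2 * σ0sq + (β - n * C * α) ^ 2)

/-- Worst-case (over `θ ∈ Θ_m`) risk. -/
noncomputable def worstRrisk (n d m : ℕ) (σ0sq C α β : ℝ) : ℝ :=
  sSup (Rrisk n d σ0sq C α β '' sparseParams d m)

/- ## Auxiliary lemmas -/

lemma SB_sum_indicator (d m : ℕ) (hmd : m ≤ d) :
    ∑ j : Fin d, (if (j:ℕ) < m then (1:ℝ) else 0) = m := by
  rw [Fin.sum_univ_eq_sum_range (fun k => if k < m then (1:ℝ) else 0) d,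
    Finset.sum_boole]
  congr 1
  have : Finset.filter (fun x => x < m) (Finset.range d) = Finset.range m := by
    ext x; simp only [Finset.mem_filter, Finset.mem_range]
    constructor
    · rintro ⟨_, h⟩; exact h
    · intro h; exact ⟨lt_of_lt_of_le h hmd, h⟩
  rw [this, Finset.card_range]

lemma SB_sum_facts {d m : ℕ} {θ : Fin d → ℝ} (hθ : θ ∈ sparseParams d m) :
    0 ≤ ∑ j, θ j ^ 2 ∧ ∑ j, θ j ^ 2 ≤ ∑ j, θ j ∧ ∑ j, θ j ≤ (m:ℝ)
      ∧ ∑ j, θ j ^ 2 ≤ (d:ℝ) := by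
  obtain ⟨hIcc, hsum⟩ := hθ
  refine ⟨Finset.sum_nonneg fun j _ => sq_nonneg _, ?_, hsum, ?_⟩
  · exact Finset.sum_le_sum fun j _ => by
      obtain ⟨h0, h1⟩ := hIcc j; nlinarith
  · calc ∑ j, θ j ^ 2 ≤ ∑ _j : Fin d, (1:ℝ) := Finset.sum_le_sum fun j _ => by
          obtain ⟨h0, h1⟩ := hIcc j; nlinarith
    _ = d := by simp

lemma SB_bddAbove (n d m : ℕ) (σ0sq C α β : ℝ) :
    BddAbove (Rrisk n d σ0sq C α β '' sparseParams d m) := by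
  set A := 4 * ((n : ℝ) ^ 2 - n) * C ^ 2 * α ^ 2 - 4 * n * C * α + 1 with hA
  set B := 4 * (n:ℝ) * C ^ 2 * α ^ 2 + 4 * n * C * α * β - 2 * β - 4 * (n : ℝ) ^ 2 * C ^ 2 * α ^ 2
        + 2 * n * C * α with hB
  refine ⟨|A| * d + |B| * m + (d : ℝ) * (α ^ 2 * σ0sq + (β - n * C * α) ^ 2), ?_⟩
  rintro y ⟨θ, hθ, rfl⟩
  obtain ⟨hp0, hpq, hqm, hpd⟩ := SB_sum_facts hθ
  have hq0 : 0 ≤ ∑ j, θ j := le_trans hp0 hpq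
  have h1 : A * (∑ j, θ j ^ 2) ≤ |A| * d := by
    calc A * (∑ j, θ j ^ 2) ≤ |A| * (∑ j, θ j ^ 2) :=
          mul_le_mul_of_nonneg_right (le_abs_self A) hp0
      _ ≤ |A| * d := mul_le_mul_of_nonneg_left hpd (abs_nonneg A)
  have h2 : B * (∑ j, θ j) ≤ |B| * m := by
    calc B * (∑ j, θ j) ≤ |B| * (∑ j, θ j) :=
          mul_le_mul_of_nonneg_right (le_abs_self B) hq0
      _ ≤ |B| * m := mul_le_mul_of_nonneg_left hqm (abs_nonneg B)
  simp only [Rrisk, ← hA, ← hB]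
  linarith

lemma SB_worst_lb (n d m : ℕ) (hmd : m ≤ d) (σ0sq C α β : ℝ) :
    worstRrisk n d m σ0sq C α β ≥
      (d:ℝ) * (α ^ 2 * σ0sq + (β - n * C * α) ^ 2)
        + (m:ℝ) * max 0 ((1 - 2 * n * C * α) * (1 - 2 * β)) := by
  have hbdd := SB_bddAbove n d m σ0sq C α β
  -- θ = 0
  have h0mem : (fun _ : Fin d => (0:ℝ)) ∈ sparseParams d m := by
    constructor
    · intro j; exact ⟨le_refl 0, zero_le_one⟩
    · simp
  have h0 : Rrisk n d σ0sq C α β (fun _ => 0) ≤ worstRrisk n d m σ0sq C α β :=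
    le_csSup hbdd ⟨_, h0mem, rfl⟩
  have h0val : Rrisk n d σ0sq C α β (fun _ : Fin d => (0:ℝ)) =
      (d:ℝ) * (α ^ 2 * σ0sq + (β - n * C * α) ^ 2) := by
    simp [Rrisk]
  -- θ = indicator of m coordinates
  set θm : Fin d → ℝ := fun j => if (j:ℕ) < m then 1 else 0 with hθm
  have hsum : ∑ j, θm j = m := SB_sum_indicator d m hmd
  have hsumsq : ∑ j, θm j ^ 2 = m := by
    have : ∀ j : Fin d, θm j ^ 2 = θm j := by
      intro j; simp only [hθm]; split <;> norm_num
    rw [Finset.sum_congr rfl fun j _ => this j, hsum]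
  have hmmem : θm ∈ sparseParams d m := by
    constructor
    · intro j; simp only [hθm]; split
      · exact ⟨zero_le_one, le_refl 1⟩
      · exact ⟨le_refl 0, zero_le_one⟩
    · rw [hsum]
  have hm : Rrisk n d σ0sq C α β θm ≤ worstRrisk n d m σ0sq C α β :=
    le_csSup hbdd ⟨_, hmmem, rfl⟩
  have hmval : Rrisk n d σ0sq C α β θm =
      (d:ℝ) * (α ^ 2 * σ0sq + (β - n * C * α) ^ 2)
        + (m:ℝ) * ((1 - 2 * n * C * α) * (1 - 2 * β)) := by
    simp only [Rrisk, hsum, hsumsq]; ring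
  rcases le_total ((1 - 2 * (n:ℝ) * C * α) * (1 - 2 * β)) 0 with h | h
  · rw [max_eq_left h]
    rw [h0val] at h0; linarith
  · rw [max_eq_right h]
    rw [hmval] at hm; linarith

lemma SB_worst_ub (n d m : ℕ) (hm : 1 ≤ m) (hmd : m ≤ d) (σ0sq C α β : ℝ)
    (hA : 4 * ((n : ℝ) ^ 2 - n) * C ^ 2 * α ^ 2 - 4 * n * C * α + 1 ≥ 0) :
    worstRrisk n d m σ0sq C α β ≤
      (d:ℝ) * (α ^ 2 * σ0sq + (β - n * C * α) ^ 2)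
        + (m:ℝ) * max 0 ((1 - 2 * n * C * α) * (1 - 2 * β)) := by
  have hne : (Rrisk n d σ0sq C α β '' sparseParams d m).Nonempty := by
    refine ⟨_, ⟨fun _ => 0, ?_, rfl⟩⟩
    exact ⟨fun j => ⟨le_refl 0, zero_le_one⟩, by simp⟩
  apply csSup_le hne
  rintro y ⟨θ, hθ, rfl⟩
  obtain ⟨hp0, hpq, hqm, _⟩ := SB_sum_facts hθ
  have hq0 : 0 ≤ ∑ j, θ j := le_trans hp0 hpq
  set A := 4 * ((n : ℝ) ^ 2 - n) * C ^ 2 * α ^ 2 - 4 * n * C * α + 1 with hAdef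
  set B := 4 * (n:ℝ) * C ^ 2 * α ^ 2 + 4 * n * C * α * β - 2 * β - 4 * (n : ℝ) ^ 2 * C ^ 2 * α ^ 2
        + 2 * n * C * α with hBdef
  have hAB : A + B = (1 - 2 * n * C * α) * (1 - 2 * β) := by
    rw [hAdef, hBdef]; ring
  have step1 : A * (∑ j, θ j ^ 2) + B * (∑ j, θ j) ≤ (A + B) * (∑ j, θ j) := by
    have := mul_le_mul_of_nonneg_left hpq hA
    linarith
  have step2 : (A + B) * (∑ j, θ j) ≤ (m:ℝ) * max 0 (A + B) := by
    rcases le_total (A + B) 0 with h | h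
    · calc (A + B) * (∑ j, θ j) ≤ 0 := mul_nonpos_of_nonpos_of_nonneg h hq0
        _ ≤ (m:ℝ) * max 0 (A + B) := by
            apply mul_nonneg (by positivity) (le_max_left _ _)
    · rw [max_eq_right h]
      calc (A + B) * (∑ j, θ j) ≤ (A + B) * m := mul_le_mul_of_nonneg_left hqm h
        _ = (m:ℝ) * (A + B) := mul_comm _ _
  have : Rrisk n d σ0sq C α β θ =
      A * (∑ j, θ j ^ 2) + B * (∑ j, θ j)
        + (d : ℝ) * (α ^ 2 * σ0sq + (β - n * C * α) ^ 2) := by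
    simp only [Rrisk, ← hAdef, ← hBdef]
  rw [this, ← hAB]
  linarith

set_option maxHeartbeats 2000000 in
/-- Key quadratic minimization lemma. -/
lemma SB_key (n d : ℕ) (C σ0sq K : ℝ) (hn : 1 ≤ n) (hd : 1 ≤ d)
    (hC : 0 < C) (hσ0 : 0 < σ0sq) (hK : 0 < K) (α αs : ℝ)
    (hαs : αs = min (1 / (2 * Real.sqrt n * C * (Real.sqrt n + 1)))
        (2 * n * C * K / ((d:ℝ) * σ0sq + 4 * (n:ℝ) ^ 2 * C ^ 2 * K)))
    (hA : 4 * ((n : ℝ) ^ 2 - n) * C ^ 2 * α ^ 2 - 4 * n * C * α + 1 ≥ 0) :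
    (d:ℝ) * σ0sq * α ^ 2 + K * (1 - 2 * n * C * α) ^ 2 ≥
      (d:ℝ) * σ0sq * αs ^ 2 + K * (1 - 2 * n * C * αs) ^ 2 := by
  obtain ⟨s, hs⟩ : ∃ s, s = Real.sqrt n := ⟨_, rfl⟩
  have hs1 : 1 ≤ s := by
    rw [hs, show (1:ℝ) = Real.sqrt 1 by simp]
    exact Real.sqrt_le_sqrt (by exact_mod_cast hn)
  have hs2 : s ^ 2 = n := by rw [hs]; exact Real.sq_sqrt (by positivity)
  have hs0 : 0 < s := lt_of_lt_of_le one_pos hs1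
  have hd0 : (0:ℝ) < d := by exact_mod_cast hd
  obtain ⟨M, hM⟩ : ∃ M, M = (d:ℝ) * σ0sq + 4 * (n:ℝ) ^ 2 * C ^ 2 * K := ⟨_, rfl⟩
  have hn0 : (0:ℝ) < n := by rw [← hs2]; positivity
  have hM0 : 0 < M := by rw [hM]; positivity
  obtain ⟨α1, hα1⟩ : ∃ x, x = 1 / (2 * s * C * (s + 1)) := ⟨_, rfl⟩
  obtain ⟨αq, hαq⟩ : ∃ x, x = 2 * (n:ℝ) * C * K / M := ⟨_, rfl⟩
  have hαs' : αs = min α1 αq := by rw [hαs, hα1, hαq, hs, hM]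
  have hα1pos : 0 < α1 := by rw [hα1]; positivity
  have hα1eq : 2 * s * C * (s + 1) * α1 = 1 := by
    rw [hα1]; field_simp
  have hαqpos : 0 < αq := by rw [hαq]; positivity
  have hαqeq : M * αq = 2 * n * C * K := by
    rw [hαq]; field_simp
  have hαqle : 2 * (n:ℝ) * C * αq ≤ 1 := by
    rw [hαq, mul_div_assoc']
    rw [div_le_one hM0, hM]
    nlinarith [mul_pos hd0 hσ0]
  have hmain : (d:ℝ) * σ0sq * α ^ 2 + K * (1 - 2 * n * C * α) ^ 2
      - ((d:ℝ) * σ0sq * αs ^ 2 + K * (1 - 2 * n * C * αs) ^ 2)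
      = M * ((α - αs) * (α + αs - 2 * αq)) := by
    linear_combination (αs ^ 2 - α ^ 2) * hM + (2 * (α - αs)) * hαqeq
  rw [ge_iff_le, ← sub_nonneg, hmain]
  rcases le_total αq α1 with hcase | hcase
  · have hαs_eq : αs = αq := by rw [hαs', min_eq_right hcase]
    rw [hαs_eq]
    have h : α + αq - 2 * αq = α - αq := by ring
    rw [h]
    exact mul_nonneg hM0.le (mul_self_nonneg _)
  · rw [hαs', min_eq_left hcase]
    rcases le_or_gt α α1 with hle | hgt
    · have h1 : α - α1 ≤ 0 := by linarith
      have h2 : α + α1 - 2 * αq ≤ 0 := by linarith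
      have h12 : 0 ≤ (α - α1) * (α + α1 - 2 * αq) := mul_nonneg_of_nonpos_of_nonpos h1 h2
      exact mul_nonneg hM0.le h12
    · have hcoef : 0 < 2 * s * C * (s + 1) := by positivity
      have hu : 1 < 2 * s * C * (s + 1) * α := by nlinarith [hα1eq, hcoef, hgt]
      have hAfac : (2 * s * (s + 1) * C * α - 1) * (2 * s * (s - 1) * C * α - 1) ≥ 0 := by
        have heq : 4 * ((n : ℝ) ^ 2 - n) * C ^ 2 * α ^ 2 - 4 * n * C * α + 1
            = (2 * s * (s + 1) * C * α - 1) * (2 * s * (s - 1) * C * α - 1) := by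
          rw [← hs2]; ring
        linarith [heq ▸ hA]
      have hv : 2 * s * (s - 1) * C * α - 1 ≥ 0 := by nlinarith [hu]
      have hq2 : 2 * s ^ 2 * C * αq ≤ 1 := by rw [hs2]; linarith [hαqle]
      have hsgt : 1 < s := by nlinarith [hu, hv]
      have e1 : 2 * s ^ 2 * (s ^ 2 - 1) * C * α ≥ s * (s + 1) := by nlinarith [hv, hs0, hsgt]
      have e2 : 2 * s ^ 2 * (s ^ 2 - 1) * C * α1 = s * (s - 1) := by
        linear_combination (s * (s - 1)) * hα1eq
      have e3 : 4 * s ^ 2 * (s ^ 2 - 1) * C * αq ≤ 2 * (s ^ 2 - 1) := by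
        nlinarith [hq2, hsgt]
      have hpos : 0 < 2 * s ^ 2 * (s ^ 2 - 1) * C := by nlinarith [hsgt, hC, hs0]
      have hfac2 : 0 ≤ α + α1 - 2 * αq := by
        by_contra hneg
        push_neg at hneg
        have hprod := mul_pos hpos (by linarith : 0 < 2 * αq - (α + α1))
        linarith [e1, e2, e3, hprod]
      have hfac1 : 0 ≤ α - α1 := by linarith
      exact mul_nonneg hM0.le (mul_nonneg hfac1 hfac2)

set_option maxHeartbeats 2000000 in
lemma SB_master (n d m : ℕ) (hn : 1 ≤ n) (hm : 1 ≤ m) (hmd : m ≤ d)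
    (C σ0sq : ℝ) (hC : 0 < C) (hσ0 : 0 < σ0sq)
    (lam : ℝ) (hl0 : 0 < lam) (hld : lam < d) (hlm : lam ≤ m) (h2lam : 2 * lam ≤ d)
    (hcrit : ((m:ℝ) - lam) * ((d:ℝ) - 2 * lam) = 0)
    (αs βs : ℝ)
    (hαs : αs = min (1 / (2 * Real.sqrt n * C * (Real.sqrt n + 1)))
        (2 * n * C * (lam * ((d:ℝ) - lam) / d) /
          ((d:ℝ) * σ0sq + 4 * (n:ℝ) ^ 2 * C ^ 2 * (lam * ((d:ℝ) - lam) / d))))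
    (hβs : βs = (1 - 2 * lam / d) * n * C * αs + lam / d) :
    4 * ((n : ℝ) ^ 2 - n) * C ^ 2 * αs ^ 2 - 4 * n * C * αs + 1 ≥ 0
      ∧ ∀ α β : ℝ, 4 * ((n : ℝ) ^ 2 - n) * C ^ 2 * α ^ 2 - 4 * n * C * α + 1 ≥ 0 →
          worstRrisk n d m σ0sq C α β ≥ worstRrisk n d m σ0sq C αs βs := by
  have hd : 1 ≤ d := le_trans hm hmd
  have hd0 : (0:ℝ) < d := by exact_mod_cast hd
  have hdne : (d:ℝ) ≠ 0 := ne_of_gt hd0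
  obtain ⟨K, hKdef⟩ : ∃ K, K = lam * ((d:ℝ) - lam) / d := ⟨_, rfl⟩
  have hK0 : 0 < K := by
    rw [hKdef]; exact div_pos (mul_pos hl0 (by linarith)) hd0
  have hKd : K * d = lam * ((d:ℝ) - lam) := by rw [hKdef]; field_simp
  obtain ⟨s, hs⟩ : ∃ s, s = Real.sqrt n := ⟨_, rfl⟩
  have hs1 : 1 ≤ s := by
    rw [hs, show (1:ℝ) = Real.sqrt 1 by simp]
    exact Real.sqrt_le_sqrt (by exact_mod_cast hn)
  have hs2 : s ^ 2 = n := by rw [hs]; exact Real.sq_sqrt (by positivity)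
  have hs0 : 0 < s := lt_of_lt_of_le one_pos hs1
  have hn0 : (0:ℝ) < n := by rw [← hs2]; positivity
  obtain ⟨α1, hα1⟩ : ∃ x, x = 1 / (2 * s * C * (s + 1)) := ⟨_, rfl⟩
  have hα1pos : 0 < α1 := by rw [hα1]; positivity
  have hα1eq : 2 * s * C * (s + 1) * α1 = 1 := by rw [hα1]; field_simp
  have hαs' : αs = min (1 / (2 * Real.sqrt n * C * (Real.sqrt n + 1)))
      (2 * n * C * K / ((d:ℝ) * σ0sq + 4 * (n:ℝ) ^ 2 * C ^ 2 * K)) := by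
    rw [hαs, hKdef]
  have hαs_le : αs ≤ α1 := by
    rw [hαs', hα1, hs]; exact min_le_left _ _
  have hαs0 : 0 ≤ αs := by
    rw [hαs']
    apply le_of_lt
    apply lt_min
    · rw [← hs]; positivity
    · positivity
  -- A(αs) ≥ 0
  have hu : 2 * s * (s + 1) * C * αs ≤ 1 := by
    have h1 : 2 * s * (s + 1) * C * αs ≤ 2 * s * (s + 1) * C * α1 :=
      mul_le_mul_of_nonneg_left hαs_le (by positivity)
    have h2 : 2 * s * (s + 1) * C * α1 = 1 := by linear_combination hα1eq
    linarith
  have hv : 2 * s * (s - 1) * C * αs ≤ 1 := by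
    have h4 : 0 ≤ s * C * αs := mul_nonneg (mul_nonneg hs0.le hC.le) hαs0
    nlinarith [hu, h4]
  have hAs : 4 * ((n : ℝ) ^ 2 - n) * C ^ 2 * αs ^ 2 - 4 * n * C * αs + 1 ≥ 0 := by
    have heq : 4 * ((n : ℝ) ^ 2 - n) * C ^ 2 * αs ^ 2 - 4 * n * C * αs + 1
        = (1 - 2 * s * (s + 1) * C * αs) * (1 - 2 * s * (s - 1) * C * αs) := by
      rw [← hs2]; ring
    rw [heq]
    exact mul_nonneg (by linarith) (by linarith)
  refine ⟨hAs, fun α β hA => ?_⟩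
  -- t_s ≥ 0
  have hts : 0 ≤ 1 - 2 * (n:ℝ) * C * αs := by
    have h1 : 2 * s ^ 2 * C * α1 * (s + 1) = s := by linear_combination s * hα1eq
    have h2 : 2 * s ^ 2 * C * α1 < 1 := by nlinarith [hα1pos, hC, hs0]
    have h3 : 2 * (n:ℝ) * C * αs ≤ 2 * (n:ℝ) * C * α1 :=
      mul_le_mul_of_nonneg_left hαs_le (by positivity)
    rw [← hs2] at h3
    rw [← hs2]
    linarith
  -- evaluation at the star point
  have hlamd : 0 ≤ 1 - 2 * lam / (d:ℝ) := by
    rw [sub_nonneg, div_le_one hd0]; exact h2lam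
  have hxpos : 0 ≤ (1 - 2 * (n:ℝ) * C * αs) * (1 - 2 * βs) := by
    have h1mb : 1 - 2 * βs = (1 - 2 * lam / (d:ℝ)) * (1 - 2 * (n:ℝ) * C * αs) := by
      rw [hβs]; ring
    rw [h1mb]
    calc (0:ℝ) ≤ (1 - 2 * lam / (d:ℝ)) * ((1 - 2 * (n:ℝ) * C * αs) * (1 - 2 * (n:ℝ) * C * αs)) :=
          mul_nonneg hlamd (mul_nonneg hts hts)
      _ = (1 - 2 * (n:ℝ) * C * αs) * ((1 - 2 * lam / (d:ℝ)) * (1 - 2 * (n:ℝ) * C * αs)) := by ring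
  have heval : (d:ℝ) * (αs ^ 2 * σ0sq + (βs - n * C * αs) ^ 2)
        + (m:ℝ) * max 0 ((1 - 2 * n * C * αs) * (1 - 2 * βs))
      = (d:ℝ) * σ0sq * αs ^ 2 + K * (1 - 2 * n * C * αs) ^ 2 := by
    have hbm : βs - n * C * αs = lam / d * (1 - 2 * (n:ℝ) * C * αs) := by
      rw [hβs]; ring
    have h1mb : (1:ℝ) - 2 * βs = (1 - 2 * lam / d) * (1 - 2 * (n:ℝ) * C * αs) := by
      rw [hβs]; ring
    rw [max_eq_right hxpos, hbm, h1mb, hKdef]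
    field_simp
    linear_combination ((1 - 2 * (n:ℝ) * C * αs) ^ 2) * hcrit
  -- chain inequality for arbitrary (α, β)
  have hmax : lam * ((1 - 2 * (n:ℝ) * C * α) * (1 - 2 * β))
      ≤ (m:ℝ) * max 0 ((1 - 2 * (n:ℝ) * C * α) * (1 - 2 * β)) := by
    rcases le_total ((1 - 2 * (n:ℝ) * C * α) * (1 - 2 * β)) 0 with hx | hx
    · rw [max_eq_left hx]
      simp only [mul_zero]
      exact mul_nonpos_of_nonneg_of_nonpos hl0.le hx
    · rw [max_eq_right hx]
      exact mul_le_mul_of_nonneg_right hlm hx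
  have ident : (d:ℝ) * ((d:ℝ) * (α ^ 2 * σ0sq + (β - n * C * α) ^ 2)
          + lam * ((1 - 2 * (n:ℝ) * C * α) * (1 - 2 * β)))
      - (d:ℝ) * ((d:ℝ) * σ0sq * α ^ 2 + K * (1 - 2 * n * C * α) ^ 2)
      = ((d:ℝ) * (β - n * C * α) - lam * (1 - 2 * (n:ℝ) * C * α)) ^ 2 := by
    linear_combination (-(1 - 2 * (n:ℝ) * C * α) ^ 2) * hKd
  have hchain : (d:ℝ) * σ0sq * α ^ 2 + K * (1 - 2 * n * C * α) ^ 2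
      ≤ (d:ℝ) * (α ^ 2 * σ0sq + (β - n * C * α) ^ 2)
        + (m:ℝ) * max 0 ((1 - 2 * n * C * α) * (1 - 2 * β)) := by
    have h1 : (d:ℝ) * ((d:ℝ) * σ0sq * α ^ 2 + K * (1 - 2 * n * C * α) ^ 2)
        ≤ (d:ℝ) * ((d:ℝ) * (α ^ 2 * σ0sq + (β - n * C * α) ^ 2)
            + lam * ((1 - 2 * (n:ℝ) * C * α) * (1 - 2 * β))) := by
      nlinarith [ident, sq_nonneg ((d:ℝ) * (β - n * C * α) - lam * (1 - 2 * (n:ℝ) * C * α))]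
    have h2 := le_of_mul_le_mul_left h1 hd0
    linarith
  have hk := SB_key n d C σ0sq K hn hd hC hσ0 hK0 α αs hαs' hA
  have L := SB_worst_lb n d m hmd σ0sq C α β
  have U := SB_worst_ub n d m hm hmd σ0sq C αs βs hAs
  rw [heval] at U
  calc worstRrisk n d m σ0sq C αs βs
      ≤ (d:ℝ) * σ0sq * αs ^ 2 + K * (1 - 2 * n * C * αs) ^ 2 := U
    _ ≤ (d:ℝ) * σ0sq * α ^ 2 + K * (1 - 2 * n * C * α) ^ 2 := hk
    _ ≤ _ := le_trans hchain L

/-- Lemma 4 / prooflemma1. Optimality of `(α*, β*)` among affine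
estimators with `4(n²−n)C²α² − 4nCα + 1 ≥ 0`. -/
theorem sparse_bernoulli_opt_nonneg_case
    (n d m : ℕ) (hn : 1 ≤ n) (hm : 1 ≤ m) (hmd : m ≤ d)
    (C σ0sq : ℝ) (hC : 0 < C) (hσ0 : 0 < σ0sq) :
    (2 * m ≥ d → ∀ αs βs : ℝ,
      αs = min (1 / (2 * Real.sqrt n * C * (Real.sqrt n + 1)))
               ((n : ℝ) * C / (2 * (σ0sq + (n : ℝ) ^ 2 * C ^ 2))) →
      βs = 1 / 2 →
      (4 * ((n : ℝ) ^ 2 - n) * C ^ 2 * αs ^ 2 - 4 * n * C * αs + 1 ≥ 0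
        ∧ ∀ α β : ℝ, 4 * ((n : ℝ) ^ 2 - n) * C ^ 2 * α ^ 2 - 4 * n * C * α + 1 ≥ 0 →
            worstRrisk n d m σ0sq C α β ≥ worstRrisk n d m σ0sq C αs βs))
    ∧ (2 * m ≤ d → ∀ αs βs : ℝ,
      αs = min (1 / (2 * Real.sqrt n * C * (Real.sqrt n + 1)))
               (2 * (m : ℝ) * ((d : ℝ) - m) * n * C /
                 ((d : ℝ) ^ 2 * σ0sq + 4 * (m : ℝ) * ((d : ℝ) - m) * (n : ℝ) ^ 2 * C ^ 2)) →
      βs = (1 - 2 * (m : ℝ) / d) * n * C * αs + (m : ℝ) / d →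
      (4 * ((n : ℝ) ^ 2 - n) * C ^ 2 * αs ^ 2 - 4 * n * C * αs + 1 ≥ 0
        ∧ ∀ α β : ℝ, 4 * ((n : ℝ) ^ 2 - n) * C ^ 2 * α ^ 2 - 4 * n * C * α + 1 ≥ 0 →
            worstRrisk n d m σ0sq C α β ≥ worstRrisk n d m σ0sq C αs βs)) := by
  have hd : 1 ≤ d := le_trans hm hmd
  have hd0 : (0:ℝ) < d := by exact_mod_cast hd
  have hdne : (d:ℝ) ≠ 0 := ne_of_gt hd0
  have hn0 : (0:ℝ) < n := by exact_mod_cast hn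
  have hm0 : (0:ℝ) < m := by exact_mod_cast hm
  constructor
  · intro h2m αs βs hαs hβs
    have h2m' : (d:ℝ) ≤ 2 * m := by exact_mod_cast h2m
    apply SB_master n d m hn hm hmd C σ0sq hC hσ0 ((d:ℝ)/2)
      (by positivity) (by linarith) (by linarith) (by linarith) (by ring) αs βs
    · rw [hαs]
      congr 1
      rw [show ((d:ℝ)/2) * ((d:ℝ) - (d:ℝ)/2) / d = (d:ℝ)/4 by field_simp; ring]
      have hden : (0:ℝ) < σ0sq + (n:ℝ) ^ 2 * C ^ 2 := by positivity
      have hden2 : (0:ℝ) < (d:ℝ) * σ0sq + 4 * (n:ℝ) ^ 2 * C ^ 2 * ((d:ℝ)/4) := by positivity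
      field_simp
      ring
    · rw [hβs]
      field_simp
      ring
  · intro h2m αs βs hαs hβs
    have h2m' : 2 * (m:ℝ) ≤ d := by exact_mod_cast h2m
    have hmdlt : (m:ℝ) < d := by
      have : m < d := by omega
      exact_mod_cast this
    apply SB_master n d m hn hm hmd C σ0sq hC hσ0 ((m:ℝ))
      hm0 hmdlt (le_refl _) h2m' (by ring) αs βs
    · rw [hαs]
      congr 1
      have hq1 : (0:ℝ) < (m:ℝ) * ((d:ℝ) - m) := mul_pos hm0 (by linarith)
      have hden1 : (0:ℝ) < (d:ℝ) ^ 2 * σ0sq + 4 * (m:ℝ) * ((d:ℝ) - m) * (n:ℝ) ^ 2 * C ^ 2 := by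
        nlinarith [mul_nonneg hq1.le (sq_nonneg ((n:ℝ) * C)),
          mul_pos (mul_pos hd0 hd0) hσ0]
      have hden2 : (0:ℝ) < (d:ℝ) * σ0sq + 4 * (n:ℝ) ^ 2 * C ^ 2 * ((m:ℝ) * ((d:ℝ) - m) / d) := by
        have h3 : (0:ℝ) < (m:ℝ) * ((d:ℝ) - m) / d := div_pos hq1 hd0
        have h4 : (0:ℝ) ≤ 4 * (n:ℝ) ^ 2 * C ^ 2 * ((m:ℝ) * ((d:ℝ) - m) / d) :=
          mul_nonneg (by positivity) h3.le
        have h5 : (0:ℝ) < (d:ℝ) * σ0sq := mul_pos hd0 hσ0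
        linarith
      rw [div_eq_div_iff hden1.ne' hden2.ne']
      field_simp
    · exact hβs
end

section
/- Let n, d, m be positive integers with 1 ≤ m ≤ d, let C > 0 and σ₀² > 0. For α, β ∈ ℝ and θ ∈ [0,1]^d define R_{C,α,β}(θ) = [4(n²−n)C²α² − 4nCα + 1]·Σ_j θ_j² + [4nC²α² + 4nCαβ − 2β − 4n²C²α² + 2nCα]·Σ_j θ_j + d·[α²σ₀² + (β − nCα)²], and let Θ_m = { θ ∈ [0,1]^d : Σ_j θ_j ≤ m }. Let α° = 1/(2√n·C·(√n+1)) and β° = 1/2 if 2m ≥ d, β° = (1 − 2m/d)·nC·α° + m/d if 2m ≤ d. Then for every (α, β) ∈ ℝ² with 4(n²−n)C²α² − 4nCα + 1 ≤ 0 one has sup_{θ ∈ Θ_m} R_{C,α,β}(θ) ≥ sup_{θ ∈ Θ_m} R_{C,α°,β°}(θ). -/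
set_option maxHeartbeats 1000000


open Real

lemma aux_main (n d m : ℕ) (hn : 1 ≤ n) (hm : 1 ≤ m) (hmd : m ≤ d)
    (C σ0sq : ℝ) (hC : 0 < C) (hσ0 : 0 < σ0sq)
    (ρ : ℝ) (hρ0 : 0 ≤ ρ) (hρh : ρ ≤ 1/2) (hρm : (d:ℝ) * ρ ≤ m)
    (αo βo : ℝ)
    (hαo : αo = 1 / (2 * Real.sqrt n * C * (Real.sqrt n + 1)))
    (hβo : βo = (1 - 2*ρ) * n * C * αo + ρ)
    (hcase : (1 - 2*ρ) = 0 ∨ (d:ℝ) * ρ = m)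
    (α β : ℝ) (hA : 4 * ((n : ℝ) ^ 2 - n) * C ^ 2 * α ^ 2 - 4 * n * C * α + 1 ≤ 0) :
    worstRrisk n d m σ0sq C α β ≥ worstRrisk n d m σ0sq C αo βo := by
  have hd : 1 ≤ d := le_trans hm hmd
  have hn1 : (1:ℝ) ≤ (n:ℝ) := by exact_mod_cast hn
  set s := Real.sqrt n with hs
  have hs1 : 1 ≤ s := by
    rw [hs, show (1:ℝ) = Real.sqrt 1 by simp]
    exact Real.sqrt_le_sqrt hn1
  have hs0 : 0 < s := lt_of_lt_of_le one_pos hs1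
  have hns : (n:ℝ) = s^2 := (Real.sq_sqrt (by positivity)).symm
  have hsne : s ≠ 0 := ne_of_gt hs0
  have hs1ne : s + 1 ≠ 0 := by positivity
  have hCne : C ≠ 0 := ne_of_gt hC
  have hαo0 : 0 < αo := by rw [hαo]; positivity
  -- α ≥ αo
  have hfac : 4 * ((n : ℝ) ^ 2 - n) * C ^ 2 * α ^ 2 - 4 * n * C * α + 1
      = (2*s*C*(s+1)*α - 1) * (2*s*C*(s-1)*α - 1) := by rw [hns]; ring
  have hkey : 1 ≤ 2*s*C*(s+1)*α := by
    by_contra h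
    push_neg at h
    have hf2 : 0 ≤ 2*s*C*(s-1)*α - 1 := by nlinarith [hA, hfac]
    have hα0 : 0 < α := by nlinarith [mul_pos (mul_pos (mul_pos two_pos hs0) hC) (show (0:ℝ) < s - 1 + 2 by linarith)]
    nlinarith [mul_pos (mul_pos (mul_pos two_pos hs0) hC) hα0]
  have hge : αo ≤ α := by
    rw [hαo, div_le_iff₀ (by positivity)]
    nlinarith [hkey]
  have hsq : αo^2 ≤ α^2 := by
    have := pow_le_pow_left₀ hαo0.le hge 2
    simpa using this
  -- θstar
  set θstar : Fin d → ℝ := fun _ => ρ with hθstar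
  have hsum1 : ∑ j : Fin d, θstar j = (d:ℝ) * ρ := by
    simp [hθstar, Finset.sum_const, Finset.card_univ, nsmul_eq_mul]
  have hsum2 : ∑ j : Fin d, (θstar j)^2 = (d:ℝ) * ρ^2 := by
    simp [hθstar, Finset.sum_const, Finset.card_univ, nsmul_eq_mul]
  have hmem : θstar ∈ sparseParams d m := by
    constructor
    · intro j; exact ⟨hρ0, by norm_num [hθstar]; linarith⟩
    · rw [hsum1]; exact hρm
  -- key coefficient facts
  have hA0 : 4 * ((n : ℝ) ^ 2 - n) * C ^ 2 * αo ^ 2 - 4 * n * C * αo + 1 = 0 := by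
    rw [hαo, hns]; field_simp; ring
  have hB : (4 * n * C ^ 2 * αo ^ 2 + 4 * n * C * αo * βo - 2 * βo
      - 4 * (n : ℝ) ^ 2 * C ^ 2 * αo ^ 2 + 2 * n * C * αo) = (1 - 2*ρ) / (s+1)^2 := by
    rw [hβo, hαo, hns]; field_simp; ring
  -- master identity
  have hI : ∀ γ δ : ℝ,
      (4 * ((n : ℝ) ^ 2 - n) * C ^ 2 * γ ^ 2 - 4 * n * C * γ + 1) * ρ^2
      + (4 * n * C ^ 2 * γ ^ 2 + 4 * n * C * γ * δ - 2 * δ - 4 * (n : ℝ) ^ 2 * C ^ 2 * γ ^ 2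
          + 2 * n * C * γ) * ρ
      + (γ ^ 2 * σ0sq + (δ - n * C * γ) ^ 2)
      = γ^2 * σ0sq + 4*n*C^2*γ^2*(ρ*(1-ρ)) + (δ - n*C*γ - ρ*(1-2*n*C*γ))^2 := by
    intro γ δ; ring
  have hzero : βo - n*C*αo - ρ*(1-2*n*C*αo) = 0 := by rw [hβo]; ring
  -- Rrisk at θstar comparison
  have hfor : ∀ γ δ : ℝ, Rrisk n d σ0sq C γ δ θstar
      = (d:ℝ) * (γ^2 * σ0sq + 4*n*C^2*γ^2*(ρ*(1-ρ)) + (δ - n*C*γ - ρ*(1-2*n*C*γ))^2) := by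
    intro γ δ
    unfold Rrisk
    rw [hsum1, hsum2]
    ring
  have hd0 : (0:ℝ) ≤ (d:ℝ) := by positivity
  have hρ1 : 0 ≤ ρ * (1 - ρ) := by nlinarith
  have hstep : αo^2 * σ0sq + 4*n*C^2*αo^2*(ρ*(1-ρ)) + (0:ℝ)^2
      ≤ α^2 * σ0sq + 4*n*C^2*α^2*(ρ*(1-ρ)) + (β - n*C*α - ρ*(1-2*n*C*α))^2 := by
    nlinarith [sq_nonneg (β - n*C*α - ρ*(1-2*n*C*α)), hsq, hσ0,
      mul_nonneg (mul_nonneg (by positivity : (0:ℝ) ≤ 4*(n:ℝ)*C^2) hρ1) (by linarith : (0:ℝ) ≤ α^2 - αo^2)]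
  have hfinal : Rrisk n d σ0sq C αo βo θstar ≤ Rrisk n d σ0sq C α β θstar := by
    rw [hfor, hfor, hzero]
    exact mul_le_mul_of_nonneg_left hstep hd0
  -- pointwise bound for αo, βo
  have hpoint : ∀ θ ∈ sparseParams d m,
      Rrisk n d σ0sq C αo βo θ ≤ Rrisk n d σ0sq C α β θstar := by
    intro θ hθ
    refine le_trans ?_ hfinal
    unfold Rrisk
    rw [hsum1, hsum2, hA0]
    have hSθ : ∑ j, θ j ≤ (m:ℝ) := hθ.2
    rw [hB]
    rcases hcase with hc | hc
    · rw [hc]; simp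
    · have hcoef : 0 ≤ (1 - 2*ρ) / (s+1)^2 := by
        apply div_nonneg (by linarith) (by positivity)
      have : (1 - 2*ρ) / (s+1)^2 * (∑ j, θ j) ≤ (1 - 2*ρ) / (s+1)^2 * ((d:ℝ)*ρ) := by
        apply mul_le_mul_of_nonneg_left _ hcoef
        rw [hc]; exact hSθ
      linarith
  -- BddAbove
  have hbdd : BddAbove (Rrisk n d σ0sq C α β '' sparseParams d m) := by
    set c1 := 4 * ((n : ℝ) ^ 2 - n) * C ^ 2 * α ^ 2 - 4 * n * C * α + 1 with hc1
    set c2 := 4 * (n:ℝ) * C ^ 2 * α ^ 2 + 4 * n * C * α * β - 2 * β - 4 * (n : ℝ) ^ 2 * C ^ 2 * α ^ 2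
        + 2 * n * C * α with hc2
    set c3 := (d : ℝ) * (α ^ 2 * σ0sq + (β - n * C * α) ^ 2) with hc3
    refine ⟨|c1| * d + |c2| * m + |c3|, ?_⟩
    rintro x ⟨θ, hθ, rfl⟩
    have h1 : 0 ≤ ∑ j, (θ j)^2 := Finset.sum_nonneg fun j _ => sq_nonneg _
    have h2 : ∑ j, (θ j)^2 ≤ (d:ℝ) := by
      calc ∑ j, (θ j)^2 ≤ ∑ j : Fin d, (1:ℝ) := by
            apply Finset.sum_le_sum
            intro j _
            have := hθ.1 j
            nlinarith [this.1, this.2]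
        _ = (d:ℝ) := by simp
    have h3 : 0 ≤ ∑ j, θ j := Finset.sum_nonneg fun j _ => (hθ.1 j).1
    have h4 : ∑ j, θ j ≤ (m:ℝ) := hθ.2
    have ha1 := le_abs_self c1
    have ha1' := neg_abs_le c1
    have ha2 := le_abs_self c2
    have ha2' := neg_abs_le c2
    have ha3 := le_abs_self c3
    unfold Rrisk
    rw [← hc1, ← hc2, ← hc3]
    have gen : ∀ (c x b : ℝ), 0 ≤ x → x ≤ b → c * x ≤ |c| * b := by
      intro c x b hx hxb
      calc c * x ≤ |c| * x := mul_le_mul_of_nonneg_right (le_abs_self c) hx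
        _ ≤ |c| * b := mul_le_mul_of_nonneg_left hxb (abs_nonneg c)
    have e1 : c1 * (∑ j, (θ j)^2) ≤ |c1| * d := gen c1 _ _ h1 h2
    have e2 : c2 * (∑ j, θ j) ≤ |c2| * m := gen c2 _ _ h3 h4
    linarith
  -- combine
  have hA1 : Rrisk n d σ0sq C α β θstar ≤ worstRrisk n d m σ0sq C α β :=
    le_csSup hbdd ⟨θstar, hmem, rfl⟩
  have hB1 : worstRrisk n d m σ0sq C αo βo ≤ Rrisk n d σ0sq C α β θstar := by
    have hne : (Rrisk n d σ0sq C αo βo '' sparseParams d m).Nonempty :=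
      ⟨Rrisk n d σ0sq C αo βo θstar, θstar, hmem, rfl⟩
    apply csSup_le hne
    rintro x ⟨θ, hθ, rfl⟩
    exact hpoint θ hθ
  linarith

/-- Lemma 5 / prooflemma2. Any affine estimator with
`4(n²−n)C²α² − 4nCα + 1 ≤ 0` is no better than `(α°, β°)` with
`α° = 1/(2√n·C·(√n+1))`. -/
theorem sparse_bernoulli_opt_nonpos_case
    (n d m : ℕ) (hn : 1 ≤ n) (hm : 1 ≤ m) (hmd : m ≤ d)
    (C σ0sq : ℝ) (hC : 0 < C) (hσ0 : 0 < σ0sq) :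
    (2 * m ≥ d → ∀ αo βo : ℝ,
      αo = 1 / (2 * Real.sqrt n * C * (Real.sqrt n + 1)) →
      βo = 1 / 2 →
      ∀ α β : ℝ, 4 * ((n : ℝ) ^ 2 - n) * C ^ 2 * α ^ 2 - 4 * n * C * α + 1 ≤ 0 →
        worstRrisk n d m σ0sq C α β ≥ worstRrisk n d m σ0sq C αo βo)
    ∧ (2 * m ≤ d → ∀ αo βo : ℝ,
      αo = 1 / (2 * Real.sqrt n * C * (Real.sqrt n + 1)) →
      βo = (1 - 2 * (m : ℝ) / d) * n * C * αo + (m : ℝ) / d →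
      ∀ α β : ℝ, 4 * ((n : ℝ) ^ 2 - n) * C ^ 2 * α ^ 2 - 4 * n * C * α + 1 ≤ 0 →
        worstRrisk n d m σ0sq C α β ≥ worstRrisk n d m σ0sq C αo βo) := by
  have hd0 : (0:ℝ) < (d:ℝ) := by
    have : 1 ≤ d := le_trans hm hmd
    exact_mod_cast this
  constructor
  · intro hcase αo βo hαo hβo α β hA
    have hdm : (d:ℝ) ≤ 2 * m := by exact_mod_cast hcase
    refine aux_main n d m hn hm hmd C σ0sq hC hσ0 (1/2) (by norm_num) le_rfl
      (by linarith) αo βo hαo ?_ (Or.inl (by norm_num)) α β hA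
    rw [hβo]; ring
  · intro hcase αo βo hαo hβo α β hA
    have hdm : 2 * (m:ℝ) ≤ (d:ℝ) := by exact_mod_cast hcase
    have hm0 : (0:ℝ) ≤ (m:ℝ) := by positivity
    refine aux_main n d m hn hm hmd C σ0sq hC hσ0 ((m:ℝ)/d) (by positivity)
      (by rw [div_le_iff₀ hd0]; linarith)
      (by rw [mul_div_cancel₀ _ (ne_of_gt hd0)])
      αo βo hαo ?_ (Or.inr (by rw [mul_div_cancel₀ _ (ne_of_gt hd0)])) α β hA
    rw [hβo]; ring
end

section
/- Let ε > 0, P > 0, σ₀² > 0 and let n ≥ 1 and s ≥ 1 be integers. Define σ_pri² = max{ (sP − 2εσ₀²)/(2εn + s), 0 }. Then 0 ≤ σ_pri² < P and (s/2) · ln( 1 + (P − σ_pri²)/(n·σ_pri² + σ₀²) ) ≤ ε. -/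
open Real

/-- privacy guarantee of Theorem 2. With privacy-noise variance
`σ_pri² = max((sP − 2εσ₀²)/(2εn + s), 0)`, one has `0 ≤ σ_pri² < P` and
`(s/2)·ln(1 + (P − σ_pri²)/(nσ_pri² + σ₀²)) ≤ ε`. -/
theorem robust_scheme_privacy_guarantee
    (ε P σ0sq : ℝ) (hε : 0 < ε) (hP : 0 < P) (hσ0 : 0 < σ0sq)
    (n s : ℕ) (hn : 1 ≤ n) (hs : 1 ≤ s)
    (σpri2 : ℝ)
    (hσpri : σpri2 = max (((s : ℝ) * P - 2 * ε * σ0sq) / (2 * ε * n + s)) 0) :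
    (0 ≤ σpri2 ∧ σpri2 < P)
    ∧ ((s : ℝ) / 2) * Real.log (1 + (P - σpri2) / ((n : ℝ) * σpri2 + σ0sq)) ≤ ε := by
  have hn' : (1:ℝ) ≤ (n:ℝ) := by exact_mod_cast hn
  have hs' : (1:ℝ) ≤ (s:ℝ) := by exact_mod_cast hs
  have hden : 0 < 2 * ε * (n:ℝ) + (s:ℝ) := by nlinarith
  have h0 : 0 ≤ σpri2 := by rw [hσpri]; exact le_max_right _ _
  have hlt : σpri2 < P := by
    rw [hσpri]
    apply max_lt _ hP
    rw [div_lt_iff₀ hden]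
    nlinarith [mul_pos hε hσ0, mul_nonneg (mul_pos hε hP).le (by linarith : (0:ℝ) ≤ (n:ℝ))]
  have hD : 0 < (n:ℝ) * σpri2 + σ0sq := by nlinarith
  have hx : 0 ≤ (P - σpri2) / ((n:ℝ) * σpri2 + σ0sq) :=
    div_nonneg (by linarith) hD.le
  have key : ((s:ℝ)/2) * ((P - σpri2) / ((n:ℝ) * σpri2 + σ0sq)) ≤ ε := by
    rw [div_mul_div_comm, div_le_iff₀ (by positivity)]
    have : (s:ℝ) * (P - σpri2) ≤ 2 * ε * ((n:ℝ) * σpri2 + σ0sq) := by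
      rcases le_or_gt ((s : ℝ) * P - 2 * ε * σ0sq) 0 with h | h
      · have : σpri2 = 0 := by
          rw [hσpri, max_eq_right]
          exact div_nonpos_of_nonpos_of_nonneg h hden.le
        rw [this]; nlinarith
      · have hσ : σpri2 = ((s : ℝ) * P - 2 * ε * σ0sq) / (2 * ε * n + s) := by
          rw [hσpri, max_eq_left]
          exact le_of_lt (div_pos h hden)
        have heq : σpri2 * (2 * ε * (n:ℝ) + (s:ℝ)) = (s : ℝ) * P - 2 * ε * σ0sq := by
          rw [hσ, div_mul_cancel₀ _ hden.ne']
        nlinarith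
    nlinarith
  have hlog : Real.log (1 + (P - σpri2) / ((n:ℝ) * σpri2 + σ0sq)) ≤
      (P - σpri2) / ((n:ℝ) * σpri2 + σ0sq) := by
    have := Real.log_le_sub_one_of_pos (show (0:ℝ) < 1 + (P - σpri2) / ((n:ℝ) * σpri2 + σ0sq) by linarith)
    linarith
  refine ⟨⟨h0, hlt⟩, ?_⟩
  calc ((s:ℝ)/2) * Real.log (1 + (P - σpri2) / ((n:ℝ) * σpri2 + σ0sq))
      ≤ ((s:ℝ)/2) * ((P - σpri2) / ((n:ℝ) * σpri2 + σ0sq)) :=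
        mul_le_mul_of_nonneg_left hlog (by linarith)
    _ ≤ ε := key
end

section
/- Let σ > 0, B > 0, P > 0, σ₀ > 0, ε > 0, and integers n ≥ 1, d ≥ 1 with dP ≥ 2εσ₀². Set σ_pri² = (dP − 2εσ₀²)/(2εn + d) and a = √( (P − σ_pri²)/(B² + σ²) ). Let θ ∈ ℝ^d, let U_{ij} (1 ≤ i ≤ n, 1 ≤ j ≤ d) be independent with U_{ij} ~ N(θ_j, σ²), and let W_1, …, W_d be independent N(0, σ₀² + n·σ_pri²) variables independent of the U_{ij}. Set Y_j = a·Σ_{i=1}^n U_{ij} + W_j and θ̂_j = Y_j/(n·a). Then E[ Σ_{j=1}^d (θ̂_j − θ_j)² ] = (d σ²/n) · ( 1 + (d/(2nε)) · (1 + B²/σ²) ). -/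
open MeasureTheory ProbabilityTheory Real Set
open scoped NNReal ENNReal

section RobustOTAAux
lemma my_integral_gaussian_fun {v : ℝ} (hv : 0 < v) (m : ℝ) (g : ℝ → ℝ) :
    ∫ x, g x ∂(gaussianReal m v.toNNReal)
      = ∫ x, gaussianPDFReal m v.toNNReal x * g x := by
  have hv' : v.toNNReal ≠ 0 := by simp [Real.toNNReal_eq_zero, not_le, hv]
  rw [gaussianReal_of_var_ne_zero _ hv', gaussianPDF_def]
  have h : (fun x => ENNReal.ofReal (gaussianPDFReal m v.toNNReal x))
      = fun x => ((Real.toNNReal (gaussianPDFReal m v.toNNReal x) : ℝ≥0) : ℝ≥0∞) := rfl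
  rw [h, integral_withDensity_eq_integral_smul
    ((measurable_gaussianPDFReal m v.toNNReal).real_toNNReal) g]
  congr 1 with x
  rw [NNReal.smul_def, Real.coe_toNNReal _ (gaussianPDFReal_nonneg _ _ _), smul_eq_mul]

lemma my_integrable_gaussian_iff {v : ℝ} (hv : 0 < v) (m : ℝ) (g : ℝ → ℝ) :
    Integrable g (gaussianReal m v.toNNReal)
      ↔ Integrable (fun x => g x * gaussianPDFReal m v.toNNReal x) := by
  have hv' : v.toNNReal ≠ 0 := by simp [Real.toNNReal_eq_zero, not_le, hv]
  rw [gaussianReal_of_var_ne_zero _ hv', gaussianPDF_def]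
  rw [integrable_withDensity_iff (measurable_gaussianPDFReal m v.toNNReal).ennreal_ofReal
    (ae_of_all _ fun x => ENNReal.ofReal_lt_top)]
  simp_rw [ENNReal.toReal_ofReal (gaussianPDFReal_nonneg _ _ _)]

lemma K1 {b : ℝ} (hb : 0 < b) : ∫ x : ℝ, x * rexp (-b * x ^ 2) = 0 := by
  have h : ∫ x : ℝ, -(x * rexp (-b * x ^ 2)) = ∫ x : ℝ, x * rexp (-b * x ^ 2) := by
    have := integral_neg_eq_self (fun x : ℝ => x * rexp (-b * x ^ 2)) (volume : Measure ℝ)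
    rw [← this]
    congr 1 with x
    rw [neg_sq]
    ring
  rw [integral_neg] at h
  linarith

lemma K2 {b : ℝ} (hb : 0 < b) :
    ∫ x : ℝ, x ^ 2 * rexp (-b * x ^ 2) = √π / (2 * b * √b) := by
  have habs : ∫ x : ℝ, x ^ 2 * rexp (-b * x ^ 2)
      = ∫ x : ℝ, (fun y : ℝ => y ^ 2 * rexp (-b * y ^ 2)) |x| := by
    congr 1 with x; simp [sq_abs]
  rw [habs, integral_comp_abs (f := fun y : ℝ => y ^ 2 * rexp (-b * y ^ 2))]
  have h := integral_rpow_mul_exp_neg_mul_rpow (p := 2) (q := 2) (by norm_num) (by norm_num) hb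
  have hpow : ∀ x : ℝ, x ^ (2:ℝ) = x ^ (2:ℕ) := fun x => by
    rw [← Real.rpow_natCast x 2]; norm_num
  simp_rw [hpow] at h
  rw [h]
  have hG : Real.Gamma ((2 + 1) / 2) = √π / 2 := by
    rw [show ((2:ℝ) + 1) / 2 = 1/2 + 1 by norm_num, Real.Gamma_add_one (by norm_num),
      Real.Gamma_one_half_eq]
    ring
  have hb32 : b ^ (-(2 + 1) / (2:ℝ)) = (b * √b)⁻¹ := by
    rw [show (-(2 + 1) / (2:ℝ)) = -((1:ℝ) + 1/2) by norm_num, Real.rpow_neg hb.le,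
      Real.rpow_add hb, Real.rpow_one, ← Real.sqrt_eq_rpow]
  rw [hG, hb32]
  have hsb : √b ≠ 0 := by positivity
  field_simp

section Moments
variable {v : ℝ} (hv : 0 < v) (m : ℝ)

lemma pdf_eq (hv : 0 < v) (m x : ℝ) :
    gaussianPDFReal m v.toNNReal x
      = (√(2 * π * v))⁻¹ * rexp (-(2*v)⁻¹ * (x - m) ^ 2) := by
  rw [gaussianPDFReal]
  rw [Real.coe_toNNReal _ hv.le]
  congr 1
  rw [neg_div, div_eq_inv_mul, neg_mul]

lemma gauss_integrable_sub (hv : 0 < v) (m : ℝ) :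
    Integrable (fun x => x - m) (gaussianReal m v.toNNReal) := by
  rw [my_integrable_gaussian_iff hv]
  have hb : (0:ℝ) < (2*v)⁻¹ := by positivity
  have hF : Integrable (fun y : ℝ =>
      y * ((√(2 * π * v))⁻¹ * rexp (-(2*v)⁻¹ * y ^ 2))) := by
    have := (integrable_mul_exp_neg_mul_sq hb).const_mul (√(2 * π * v))⁻¹
    refine this.congr ?_
    filter_upwards with y
    ring
  have := hF.comp_sub_right m
  refine this.congr ?_
  filter_upwards with x
  rw [pdf_eq hv]
  try ring

lemma gauss_integral_sub (hv : 0 < v) (m : ℝ) :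
    ∫ x, (x - m) ∂(gaussianReal m v.toNNReal) = 0 := by
  rw [my_integral_gaussian_fun hv]
  have hb : (0:ℝ) < (2*v)⁻¹ := by positivity
  calc ∫ x, gaussianPDFReal m v.toNNReal x * (x - m)
      = ∫ x, (fun y => (√(2 * π * v))⁻¹ * (y * rexp (-(2*v)⁻¹ * y ^ 2))) (x - m) := by
        congr 1 with x; rw [pdf_eq hv]; ring
    _ = ∫ y, (√(2 * π * v))⁻¹ * (y * rexp (-(2*v)⁻¹ * y ^ 2)) :=
        integral_sub_right_eq_self (μ := volume)
          (fun y => (√(2 * π * v))⁻¹ * (y * rexp (-(2*v)⁻¹ * y ^ 2))) m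
    _ = 0 := by rw [integral_const_mul, K1 hb, mul_zero]

lemma gauss_integrable_sub_sq (hv : 0 < v) (m : ℝ) :
    Integrable (fun x => (x - m) ^ 2) (gaussianReal m v.toNNReal) := by
  rw [my_integrable_gaussian_iff hv]
  have hb : (0:ℝ) < (2*v)⁻¹ := by positivity
  have hF : Integrable (fun y : ℝ =>
      (y ^ 2) * ((√(2 * π * v))⁻¹ * rexp (-(2*v)⁻¹ * y ^ 2))) := by
    have h0 := integrable_rpow_mul_exp_neg_mul_sq hb (s := 2) (by norm_num)
    have hpow : ∀ x : ℝ, x ^ (2:ℝ) = x ^ (2:ℕ) := fun x => by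
      rw [← Real.rpow_natCast x 2]; norm_num
    simp_rw [hpow] at h0
    have := h0.const_mul (√(2 * π * v))⁻¹
    refine this.congr ?_
    filter_upwards with y
    ring
  have := hF.comp_sub_right m
  refine this.congr ?_
  filter_upwards with x
  rw [pdf_eq hv]
  try ring

lemma gauss_integral_sub_sq (hv : 0 < v) (m : ℝ) :
    ∫ x, (x - m) ^ 2 ∂(gaussianReal m v.toNNReal) = v := by
  rw [my_integral_gaussian_fun hv]
  have hb : (0:ℝ) < (2*v)⁻¹ := by positivity
  have h2v : (0:ℝ) < 2 * v := by positivity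
  calc ∫ x, gaussianPDFReal m v.toNNReal x * (x - m) ^ 2
      = ∫ x, (fun y => (√(2 * π * v))⁻¹ * (y ^ 2 * rexp (-(2*v)⁻¹ * y ^ 2))) (x - m) := by
        congr 1 with x; rw [pdf_eq hv]; ring
    _ = ∫ y, (√(2 * π * v))⁻¹ * (y ^ 2 * rexp (-(2*v)⁻¹ * y ^ 2)) :=
        integral_sub_right_eq_self (μ := volume)
          (fun y => (√(2 * π * v))⁻¹ * (y ^ 2 * rexp (-(2*v)⁻¹ * y ^ 2))) m
    _ = (√(2 * π * v))⁻¹ * (√π / (2 * (2*v)⁻¹ * √(2*v)⁻¹)) := by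
        rw [integral_const_mul, K2 hb, Real.sqrt_inv]
        try ring_nf
    _ = v := by
        rw [show 2 * π * v = (2*v) * π by ring, Real.sqrt_mul h2v.le]
        have h1 : √(2*v) ≠ 0 := by positivity
        have h2 : √π ≠ 0 := by positivity
        field_simp
        exact (by rw [← Real.sqrt_mul (by positivity),
          mul_one_div_cancel h2v.ne', Real.sqrt_one] : √(2 * v) * √(1 / (2 * v)) = 1).symm
end Moments

section PiHelp
variable {ι : Type*} [Fintype ι] [DecidableEq ι] {α : ι → Type*} [∀ i, MeasurableSpace (α i)]
  (ν : ∀ i, Measure (α i))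

lemma pi_prod_integrable [∀ i, SigmaFinite (ν i)]
    (f : ∀ i, α i → ℝ) (hf : ∀ i, Integrable (f i) (ν i)) :
    Integrable (fun x : ∀ i, α i => ∏ i, f i (x i)) (Measure.pi ν) := by
  letI : ∀ i, MeasureSpace (α i) := fun i => ⟨ν i⟩
  haveI : ∀ i, SigmaFinite (volume : Measure (α i)) := fun i => ‹∀ i, SigmaFinite (ν i)› i
  exact Integrable.fintype_prod_dep hf

lemma pi_prod_integral [∀ i, SigmaFinite (ν i)] (f : ∀ i, α i → ℝ) :
    ∫ x : ∀ i, α i, ∏ i, f i (x i) ∂(Measure.pi ν) = ∏ i, ∫ y, f i y ∂(ν i) := by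
  letI : ∀ i, MeasureSpace (α i) := fun i => ⟨ν i⟩
  haveI : ∀ i, SigmaFinite (volume : Measure (α i)) := fun i => ‹∀ i, SigmaFinite (ν i)› i
  exact integral_fintype_prod_eq_prod f

/-- plug `f` at coordinate `j`, constant 1 elsewhere -/
noncomputable def onePlug (j : ι) (f : α j → ℝ) : ∀ i, α i → ℝ :=
  Function.update (fun _ (_ : α _) => (1:ℝ)) j f

lemma onePlug_self (j : ι) (f : α j → ℝ) : onePlug j f j = f := Function.update_self _ _ _

lemma onePlug_ne (j : ι) (f : α j → ℝ) {i : ι} (h : i ≠ j) : onePlug j f i = fun _ => 1 :=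
  Function.update_of_ne h _ _

lemma prod_onePlug (j : ι) (f : α j → ℝ) (x : ∀ i, α i) :
    ∏ i, onePlug j f i (x i) = f (x j) := by
  rw [Finset.prod_eq_single_of_mem j (Finset.mem_univ j)
    (fun i _ hij => by rw [onePlug_ne _ _ hij]), onePlug_self]

lemma onePlug_integrable [∀ i, IsProbabilityMeasure (ν i)] (j : ι) (f : α j → ℝ)
    (hf : Integrable f (ν j)) (i : ι) : Integrable (onePlug j f i) (ν i) := by
  rcases eq_or_ne i j with rfl | h
  · rw [onePlug_self]; exact hf
  · rw [onePlug_ne _ _ h]; exact integrable_const 1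

lemma integrable_eval [∀ i, IsProbabilityMeasure (ν i)] (j : ι) (f : α j → ℝ)
    (hf : Integrable f (ν j)) :
    Integrable (fun x : ∀ i, α i => f (x j)) (Measure.pi ν) := by
  have := pi_prod_integrable ν (onePlug j f) (onePlug_integrable ν j f hf)
  refine this.congr ?_
  filter_upwards with x
  exact prod_onePlug j f x

lemma integral_eval [∀ i, IsProbabilityMeasure (ν i)] (j : ι) (f : α j → ℝ) :
    ∫ x : ∀ i, α i, f (x j) ∂(Measure.pi ν) = ∫ y, f y ∂(ν j) := by
  have h : ∫ x : ∀ i, α i, f (x j) ∂(Measure.pi ν)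
      = ∫ x : ∀ i, α i, ∏ i, onePlug j f i (x i) ∂(Measure.pi ν) := by
    congr 1 with x; rw [prod_onePlug]
  rw [h, pi_prod_integral]
  rw [Finset.prod_eq_single_of_mem j (Finset.mem_univ j) (fun i _ hij => by
    rw [onePlug_ne _ _ hij]; simp), onePlug_self]

/-- plug `f` at `j` and `g` at `k` -/
noncomputable def twoPlug (j k : ι) (f : α j → ℝ) (g : α k → ℝ) : ∀ i, α i → ℝ :=
  Function.update (onePlug j f) k g

lemma prod_twoPlug {j k : ι} (hjk : j ≠ k) (f : α j → ℝ) (g : α k → ℝ) (x : ∀ i, α i) :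
    ∏ i, twoPlug j k f g i (x i) = f (x j) * g (x k) := by
  rw [← Finset.mul_prod_erase Finset.univ _ (Finset.mem_univ k)]
  have h1 : twoPlug j k f g k = g := Function.update_self _ _ _
  have h2 : ∏ i ∈ Finset.univ.erase k, twoPlug j k f g i (x i) = f (x j) := by
    rw [Finset.prod_eq_single_of_mem j (Finset.mem_erase.2 ⟨hjk, Finset.mem_univ j⟩)
      (fun i hi hij => by
        rw [twoPlug, Function.update_of_ne (Finset.mem_erase.1 hi).1, onePlug_ne _ _ hij])]
    rw [twoPlug, Function.update_of_ne hjk, onePlug_self]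
  rw [h1, h2, mul_comm]

lemma twoPlug_integrable [∀ i, IsProbabilityMeasure (ν i)] {j k : ι} (hjk : j ≠ k)
    (f : α j → ℝ) (g : α k → ℝ) (hf : Integrable f (ν j)) (hg : Integrable g (ν k)) (i : ι) :
    Integrable (twoPlug j k f g i) (ν i) := by
  rcases eq_or_ne i k with rfl | h
  · rw [twoPlug, Function.update_self]; exact hg
  · rw [twoPlug, Function.update_of_ne h]; exact onePlug_integrable ν j f hf i

lemma integrable_eval2 [∀ i, IsProbabilityMeasure (ν i)] {j k : ι} (hjk : j ≠ k)
    (f : α j → ℝ) (g : α k → ℝ) (hf : Integrable f (ν j)) (hg : Integrable g (ν k)) :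
    Integrable (fun x : ∀ i, α i => f (x j) * g (x k)) (Measure.pi ν) := by
  have := pi_prod_integrable ν (twoPlug j k f g) (twoPlug_integrable ν hjk f g hf hg)
  refine this.congr ?_
  filter_upwards with x
  exact prod_twoPlug hjk f g x

lemma integral_eval2 [∀ i, IsProbabilityMeasure (ν i)] {j k : ι} (hjk : j ≠ k)
    (f : α j → ℝ) (g : α k → ℝ) :
    ∫ x : ∀ i, α i, f (x j) * g (x k) ∂(Measure.pi ν)
      = (∫ y, f y ∂(ν j)) * ∫ y, g y ∂(ν k) := by
  have h : ∫ x : ∀ i, α i, f (x j) * g (x k) ∂(Measure.pi ν)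
      = ∫ x : ∀ i, α i, ∏ i, twoPlug j k f g i (x i) ∂(Measure.pi ν) := by
    congr 1 with x; rw [prod_twoPlug hjk]
  rw [h, pi_prod_integral]
  rw [← Finset.mul_prod_erase Finset.univ _ (Finset.mem_univ k)]
  have h1 : twoPlug j k f g k = g := Function.update_self _ _ _
  have h2 : ∏ i ∈ Finset.univ.erase k, ∫ y, twoPlug j k f g i y ∂(ν i)
      = ∫ y, f y ∂(ν j) := by
    rw [Finset.prod_eq_single_of_mem j (Finset.mem_erase.2 ⟨hjk, Finset.mem_univ j⟩)
      (fun i hi hij => by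
        rw [twoPlug, Function.update_of_ne (Finset.mem_erase.1 hi).1, onePlug_ne _ _ hij]
        simp)]
    rw [twoPlug, Function.update_of_ne hjk, onePlug_self]
  rw [h1, h2, mul_comm]

end PiHelp

section SumSq
variable {α : Type*} [MeasurableSpace α] (μ : Measure α) [IsProbabilityMeasure μ]
  {ιn : Type*} [Fintype ιn] [DecidableEq ιn] (φ : α → ℝ)

lemma sum_eval_integrable (hφ : Integrable φ μ) :
    Integrable (fun u : ιn → α => ∑ i, φ (u i)) (Measure.pi fun _ : ιn => μ) :=
  integrable_finset_sum _ fun i _ => integrable_eval (α := fun _ : ιn => α) (fun _ => μ) i φ hφ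

lemma sum_eval_integral (hφ : Integrable φ μ) :
    ∫ u : ιn → α, ∑ i, φ (u i) ∂(Measure.pi fun _ : ιn => μ)
      = (Fintype.card ιn : ℝ) * ∫ y, φ y ∂μ := by
  rw [integral_finset_sum _ fun i _ => integrable_eval (α := fun _ : ιn => α) (fun _ => μ) i φ hφ]
  have h : ∀ i : ιn, ∫ u : ιn → α, φ (u i) ∂(Measure.pi fun _ : ιn => μ) = ∫ y, φ y ∂μ :=
    fun i => integral_eval (α := fun _ : ιn => α) (fun _ => μ) i φ
  simp_rw [h, Finset.sum_const, Finset.card_univ, nsmul_eq_mul]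

lemma sq_sum_eval_exp (u : ιn → α) :
    (∑ i, φ (u i)) ^ 2 = ∑ i, ∑ k, φ (u i) * φ (u k) := by
  rw [sq, Finset.sum_mul_sum]

lemma pair_eval_integrable (hφ : Integrable φ μ)
    (hφ2 : Integrable (fun y => φ y * φ y) μ) (i k : ιn) :
    Integrable (fun u : ιn → α => φ (u i) * φ (u k)) (Measure.pi fun _ : ιn => μ) := by
  rcases eq_or_ne i k with rfl | h
  · exact integrable_eval (α := fun _ : ιn => α) (fun _ => μ) i (fun y => φ y * φ y) hφ2
  · exact integrable_eval2 (α := fun _ : ιn => α) (fun _ => μ) h φ φ hφ hφ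

lemma sq_sum_eval_integrable (hφ : Integrable φ μ)
    (hφ2 : Integrable (fun y => φ y * φ y) μ) :
    Integrable (fun u : ιn → α => (∑ i, φ (u i)) ^ 2) (Measure.pi fun _ : ιn => μ) := by
  rw [show (fun u : ιn → α => (∑ i, φ (u i)) ^ 2)
      = fun u : ιn → α => ∑ i, ∑ k, φ (u i) * φ (u k) from funext (sq_sum_eval_exp φ)]
  exact integrable_finset_sum _ fun i _ =>
    integrable_finset_sum _ fun k _ => pair_eval_integrable μ φ hφ hφ2 i k

lemma sq_sum_eval_integral (hφ : Integrable φ μ)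
    (hφ2 : Integrable (fun y => φ y * φ y) μ) (h0 : ∫ y, φ y ∂μ = 0) :
    ∫ u : ιn → α, (∑ i, φ (u i)) ^ 2 ∂(Measure.pi fun _ : ιn => μ)
      = (Fintype.card ιn : ℝ) * ∫ y, φ y * φ y ∂μ := by
  simp_rw [sq_sum_eval_exp φ]
  rw [integral_finset_sum _ fun i _ =>
    integrable_finset_sum _ fun k _ => pair_eval_integrable μ φ hφ hφ2 i k]
  have hin : ∀ i : ιn, ∫ u : ιn → α, ∑ k, φ (u i) * φ (u k) ∂(Measure.pi fun _ : ιn => μ)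
      = ∑ k, ∫ u : ιn → α, φ (u i) * φ (u k) ∂(Measure.pi fun _ : ιn => μ) :=
    fun i => integral_finset_sum _ fun k _ => pair_eval_integrable μ φ hφ hφ2 i k
  simp_rw [hin]
  have hval : ∀ i k : ιn, ∫ u : ιn → α, φ (u i) * φ (u k) ∂(Measure.pi fun _ : ιn => μ)
      = if i = k then ∫ y, φ y * φ y ∂μ else 0 := by
    intro i k
    rcases eq_or_ne i k with rfl | h
    · rw [if_pos rfl]
      exact integral_eval (α := fun _ : ιn => α) (fun _ => μ) i (fun y => φ y * φ y)
    · rw [if_neg h, integral_eval2 (α := fun _ : ιn => α) (fun _ => μ) h φ φ, h0, zero_mul]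
  simp_rw [hval, Finset.sum_ite_eq, Finset.mem_univ, if_pos, Finset.sum_const,
    Finset.card_univ, nsmul_eq_mul]

end SumSq

section Aux
variable (n d : ℕ)

theorem ota_aux (θ : Fin d → ℝ) (v1 v2 : ℝ) (hv1 : 0 < v1) (hv2 : 0 < v2)
    (a : ℝ) (ha : a ≠ 0) (hn : (n : ℝ) ≠ 0) :
    (∫ p : (Fin n → Fin d → ℝ) × (Fin d → ℝ),
        ∑ j, ((a * ∑ i, p.1 i j + p.2 j) / ((n : ℝ) * a) - θ j) ^ 2
      ∂((Measure.pi fun _ : Fin n =>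
            Measure.pi fun j : Fin d => gaussianReal (θ j) v1.toNNReal).prod
          (Measure.pi fun _ : Fin d => gaussianReal 0 v2.toNNReal)))
      = (d : ℝ) * (v1 / n + v2 / ((n : ℝ) ^ 2 * a ^ 2)) := by
  set ν : Fin d → Measure ℝ := fun j => gaussianReal (θ j) v1.toNNReal with hνdef
  set ρ : Measure ℝ := gaussianReal 0 v2.toNNReal with hρdef
  set M1 : Measure (Fin n → Fin d → ℝ) := Measure.pi fun _ : Fin n => Measure.pi ν with hM1
  set M2 : Measure (Fin d → ℝ) := Measure.pi fun _ : Fin d => ρ with hM2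
  -- inner facts
  have hφint : ∀ j : Fin d, Integrable (fun y : Fin d → ℝ => y j - θ j) (Measure.pi ν) :=
    fun j => integrable_eval ν j (fun x => x - θ j) (gauss_integrable_sub hv1 (θ j))
  have hφ0 : ∀ j : Fin d, ∫ y : Fin d → ℝ, (y j - θ j) ∂(Measure.pi ν) = 0 := fun j => by
    rw [integral_eval ν j (fun x => x - θ j)]
    exact gauss_integral_sub hv1 (θ j)
  have hφ2int : ∀ j : Fin d,
      Integrable (fun y : Fin d → ℝ => (y j - θ j) * (y j - θ j)) (Measure.pi ν) := fun j =>
    (integrable_eval ν j (fun x => (x - θ j) ^ 2)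
      (gauss_integrable_sub_sq hv1 (θ j))).congr
      (by filter_upwards with y; rw [sq])
  have hφ2 : ∀ j : Fin d,
      ∫ y : Fin d → ℝ, (y j - θ j) * (y j - θ j) ∂(Measure.pi ν) = v1 := fun j => by
    rw [show (fun y : Fin d → ℝ => (y j - θ j) * (y j - θ j))
        = fun y : Fin d → ℝ => (fun x : ℝ => (x - θ j) ^ 2) (y j) from
        funext fun y => (sq _).symm,
      integral_eval ν j (fun x : ℝ => (x - θ j) ^ 2)]
    exact gauss_integral_sub_sq hv1 (θ j)
  -- outer A facts
  have hAint : ∀ j : Fin d,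
      Integrable (fun u : Fin n → Fin d → ℝ => ∑ i, (u i j - θ j)) M1 := fun j =>
    sum_eval_integrable (Measure.pi ν) (fun y => y j - θ j) (hφint j)
  have hA0 : ∀ j : Fin d, ∫ u : Fin n → Fin d → ℝ, (∑ i, (u i j - θ j)) ∂M1 = 0 := fun j => by
    rw [hM1, sum_eval_integral (Measure.pi ν) (fun y => y j - θ j) (hφint j), hφ0 j, mul_zero]
  have hA2int : ∀ j : Fin d,
      Integrable (fun u : Fin n → Fin d → ℝ => (∑ i, (u i j - θ j)) ^ 2) M1 := fun j =>
    sq_sum_eval_integrable (Measure.pi ν) (fun y => y j - θ j) (hφint j) (hφ2int j)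
  have hA2 : ∀ j : Fin d,
      ∫ u : Fin n → Fin d → ℝ, (∑ i, (u i j - θ j)) ^ 2 ∂M1 = (n : ℝ) * v1 := fun j => by
    rw [hM1, sq_sum_eval_integral (Measure.pi ν) (fun y => y j - θ j) (hφint j) (hφ2int j)
      (hφ0 j), hφ2 j, Fintype.card_fin]
  -- B facts
  have hBint : ∀ j : Fin d, Integrable (fun w : Fin d → ℝ => w j) M2 := fun j =>
    integrable_eval (fun _ : Fin d => ρ) j (fun x => x)
      ((gauss_integrable_sub hv2 0).congr (by filter_upwards with x; rw [sub_zero]))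
  have hB0 : ∀ j : Fin d, ∫ w : Fin d → ℝ, w j ∂M2 = 0 := fun j => by
    rw [hM2, integral_eval (fun _ : Fin d => ρ) j (fun x => x)]
    rw [show (fun x : ℝ => x) = fun x : ℝ => x - 0 from funext fun x => (sub_zero x).symm]
    exact gauss_integral_sub hv2 0
  have hB2int : ∀ j : Fin d, Integrable (fun w : Fin d → ℝ => (w j) ^ 2) M2 := fun j =>
    integrable_eval (fun _ : Fin d => ρ) j (fun x => x ^ 2)
      ((gauss_integrable_sub_sq hv2 0).congr (by filter_upwards with x; rw [sub_zero]))
  have hB2 : ∀ j : Fin d, ∫ w : Fin d → ℝ, (w j) ^ 2 ∂M2 = v2 := fun j => by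
    rw [hM2, integral_eval (fun _ : Fin d => ρ) j (fun x : ℝ => x ^ 2)]
    rw [show (fun x : ℝ => x ^ 2) = fun x : ℝ => (x - 0) ^ 2 from
      funext fun x => by rw [sub_zero]]
    exact gauss_integral_sub_sq hv2 0
  -- pointwise split
  have hsplit : ∀ p : (Fin n → Fin d → ℝ) × (Fin d → ℝ), ∀ j : Fin d,
      ((a * ∑ i, p.1 i j + p.2 j) / ((n : ℝ) * a) - θ j) ^ 2
        = (1 / (n : ℝ)) ^ 2 * (∑ i, (p.1 i j - θ j)) ^ 2
          + (2 * (1 / (n : ℝ)) * ((n : ℝ) * a)⁻¹) * ((∑ i, (p.1 i j - θ j)) * p.2 j)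
          + (((n : ℝ) * a)⁻¹) ^ 2 * (p.2 j) ^ 2 := by
    intro p j
    have hs : ∑ i, (p.1 i j - θ j) = (∑ i, p.1 i j) - (n : ℝ) * θ j := by
      rw [Finset.sum_sub_distrib, Finset.sum_const, Finset.card_univ, Fintype.card_fin,
        nsmul_eq_mul]
    rw [hs]
    field_simp
    ring
  -- integrabilities on the product
  have i1 : ∀ j : Fin d, Integrable
      (fun p : (Fin n → Fin d → ℝ) × (Fin d → ℝ) => (∑ i, (p.1 i j - θ j)) ^ 2)
      (M1.prod M2) := fun j =>
    ((hA2int j).mul_prod (integrable_const (1 : ℝ))).congr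
      (by filter_upwards with p; rw [mul_one])
  have i2 : ∀ j : Fin d, Integrable
      (fun p : (Fin n → Fin d → ℝ) × (Fin d → ℝ) => (∑ i, (p.1 i j - θ j)) * p.2 j)
      (M1.prod M2) := fun j => (hAint j).mul_prod (hBint j)
  have i3 : ∀ j : Fin d, Integrable
      (fun p : (Fin n → Fin d → ℝ) × (Fin d → ℝ) => (p.2 j) ^ 2)
      (M1.prod M2) := fun j =>
    ((integrable_const (1 : ℝ)).mul_prod (hB2int j)).congr
      (by filter_upwards with p; rw [one_mul])
  have iF : ∀ j : Fin d, Integrable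
      (fun p : (Fin n → Fin d → ℝ) × (Fin d → ℝ) =>
        ((a * ∑ i, p.1 i j + p.2 j) / ((n : ℝ) * a) - θ j) ^ 2) (M1.prod M2) := fun j => by
    have := (((i1 j).const_mul ((1 / (n : ℝ)) ^ 2)).add
        ((i2 j).const_mul (2 * (1 / (n : ℝ)) * ((n : ℝ) * a)⁻¹))).add
        ((i3 j).const_mul ((((n : ℝ) * a)⁻¹) ^ 2))
    refine this.congr ?_
    filter_upwards with p
    simp only [Pi.add_apply]
    exact (hsplit p j).symm
  -- per-j integral value
  have hFval : ∀ j : Fin d,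
      ∫ p : (Fin n → Fin d → ℝ) × (Fin d → ℝ),
        ((a * ∑ i, p.1 i j + p.2 j) / ((n : ℝ) * a) - θ j) ^ 2 ∂(M1.prod M2)
      = v1 / n + v2 / ((n : ℝ) ^ 2 * a ^ 2) := by
    intro j
    have e1 : ∫ p : (Fin n → Fin d → ℝ) × (Fin d → ℝ),
        (∑ i, (p.1 i j - θ j)) ^ 2 ∂(M1.prod M2)
        = (n : ℝ) * v1 := by
      rw [integral_fun_fst (f := fun u : Fin n → Fin d → ℝ => (∑ i, (u i j - θ j)) ^ 2)]
      rw [probReal_univ, one_smul]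
      exact hA2 j
    have e2 : ∫ p : (Fin n → Fin d → ℝ) × (Fin d → ℝ),
        (∑ i, (p.1 i j - θ j)) * p.2 j ∂(M1.prod M2) = 0 := by
      rw [integral_prod_mul (f := fun u : Fin n → Fin d → ℝ => ∑ i, (u i j - θ j))
        (g := fun w : Fin d → ℝ => w j), hA0 j, zero_mul]
    have e3 : ∫ p : (Fin n → Fin d → ℝ) × (Fin d → ℝ), (p.2 j) ^ 2 ∂(M1.prod M2) = v2 := by
      rw [integral_fun_snd (f := fun w : Fin d → ℝ => (w j) ^ 2)]
      rw [probReal_univ, one_smul]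
      exact hB2 j
    calc ∫ p : (Fin n → Fin d → ℝ) × (Fin d → ℝ),
        ((a * ∑ i, p.1 i j + p.2 j) / ((n : ℝ) * a) - θ j) ^ 2 ∂(M1.prod M2)
        = ∫ p : (Fin n → Fin d → ℝ) × (Fin d → ℝ),
            ((1 / (n : ℝ)) ^ 2 * (∑ i, (p.1 i j - θ j)) ^ 2
            + (2 * (1 / (n : ℝ)) * ((n : ℝ) * a)⁻¹) * ((∑ i, (p.1 i j - θ j)) * p.2 j)
            + (((n : ℝ) * a)⁻¹) ^ 2 * (p.2 j) ^ 2) ∂(M1.prod M2) := by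
          congr 1 with p; rw [hsplit p j]
      _ = (1 / (n : ℝ)) ^ 2 * ((n : ℝ) * v1)
            + (2 * (1 / (n : ℝ)) * ((n : ℝ) * a)⁻¹) * 0
            + (((n : ℝ) * a)⁻¹) ^ 2 * v2 := by
          have j1 : Integrable (fun p : (Fin n → Fin d → ℝ) × (Fin d → ℝ) =>
              (1 / (n : ℝ)) ^ 2 * (∑ i, (p.1 i j - θ j)) ^ 2) (M1.prod M2) :=
            (i1 j).const_mul _
          have j2 : Integrable (fun p : (Fin n → Fin d → ℝ) × (Fin d → ℝ) =>
              (2 * (1 / (n : ℝ)) * ((n : ℝ) * a)⁻¹) * ((∑ i, (p.1 i j - θ j)) * p.2 j))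
              (M1.prod M2) := (i2 j).const_mul _
          have j3 : Integrable (fun p : (Fin n → Fin d → ℝ) × (Fin d → ℝ) =>
              (((n : ℝ) * a)⁻¹) ^ 2 * (p.2 j) ^ 2) (M1.prod M2) := (i3 j).const_mul _
          have j12 : Integrable (fun p : (Fin n → Fin d → ℝ) × (Fin d → ℝ) =>
              (1 / (n : ℝ)) ^ 2 * (∑ i, (p.1 i j - θ j)) ^ 2
              + (2 * (1 / (n : ℝ)) * ((n : ℝ) * a)⁻¹) * ((∑ i, (p.1 i j - θ j)) * p.2 j))
              (M1.prod M2) := j1.add j2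
          rw [integral_add j12 j3, integral_add j1 j2,
            integral_const_mul, integral_const_mul, integral_const_mul, e1, e2, e3]
      _ = v1 / n + v2 / ((n : ℝ) ^ 2 * a ^ 2) := by
          field_simp
          ring
  -- sum up
  rw [integral_finset_sum _ fun j _ => iF j]
  simp_rw [hFval, Finset.sum_const, Finset.card_univ, Fintype.card_fin, nsmul_eq_mul]

end Aux

end RobustOTAAux


/-- Corollary 1. The ε-robust over-the-air scheme for the Gaussian
location model: with `σ_pri² = (dP − 2εσ₀²)/(2εn + d)`, `a = √((P − σ_pri²)/(B² + σ²))`,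
`Y_j = a Σ_i U_{ij} + W_j` where `U_{ij} ~ N(θ_j, σ²)` and `W_j ~ N(0, σ₀² + nσ_pri²)` are
all independent, and `θ̂_j = Y_j/(na)`, the mean squared error equals
`(dσ²/n)(1 + (d/(2nε))(1 + B²/σ²))`. -/
theorem robust_gaussian_ota_risk_eq
    (σ B P σ₀ ε : ℝ) (hσ : 0 < σ) (hB : 0 < B) (hP : 0 < P) (hσ₀ : 0 < σ₀) (hε : 0 < ε)
    (n d : ℕ) (hn : 1 ≤ n) (hd : 1 ≤ d)
    (hpow : (d : ℝ) * P ≥ 2 * ε * σ₀ ^ 2)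
    (σpri2 a : ℝ)
    (hσpri : σpri2 = ((d : ℝ) * P - 2 * ε * σ₀ ^ 2) / (2 * ε * n + d))
    (ha : a = Real.sqrt ((P - σpri2) / (B ^ 2 + σ ^ 2)))
    (θ : Fin d → ℝ) :
    (∫ p : (Fin n → Fin d → ℝ) × (Fin d → ℝ),
        ∑ j, ((a * ∑ i, p.1 i j + p.2 j) / ((n : ℝ) * a) - θ j) ^ 2
      ∂((Measure.pi fun _ : Fin n =>
            Measure.pi fun j : Fin d => gaussianReal (θ j) (σ ^ 2).toNNReal).prod
          (Measure.pi fun _ : Fin d =>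
            gaussianReal 0 (σ₀ ^ 2 + (n : ℝ) * σpri2).toNNReal)))
      = ((d : ℝ) * σ ^ 2 / n) *
          (1 + ((d : ℝ) / (2 * (n : ℝ) * ε)) * (1 + B ^ 2 / σ ^ 2)) := by
  have hn0 : (0:ℝ) < n := by exact_mod_cast hn
  have hd0 : (0:ℝ) < d := by exact_mod_cast hd
  have hD : (0:ℝ) < 2 * ε * n + d := by positivity
  have hσD : σpri2 * (2 * ε * n + d) = (d : ℝ) * P - 2 * ε * σ₀ ^ 2 := by
    rw [hσpri]; field_simp
  have hσnon : 0 ≤ σpri2 := by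
    rw [hσpri]
    apply div_nonneg _ hD.le
    linarith [hpow]
  have hPs : 0 < P - σpri2 := by nlinarith [mul_pos hε (mul_pos hn0 hP), mul_pos hε (pow_pos hσ₀ 2)]
  have hBσ : (0:ℝ) < B ^ 2 + σ ^ 2 := by positivity
  have ha0 : a ≠ 0 := by
    rw [ha]
    exact (Real.sqrt_pos.mpr (div_pos hPs hBσ)).ne'
  have ha2 : a ^ 2 = (P - σpri2) / (B ^ 2 + σ ^ 2) := by
    rw [ha, Real.sq_sqrt (div_pos hPs hBσ).le]
  have hV2 : (0:ℝ) < σ₀ ^ 2 + (n : ℝ) * σpri2 :=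
    add_pos_of_pos_of_nonneg (pow_pos hσ₀ 2) (mul_nonneg hn0.le hσnon)
  have hkey : (σ₀ ^ 2 + (n : ℝ) * σpri2) * (2 * ε) = (d : ℝ) * (P - σpri2) := by
    linear_combination hσD
  have hV2eq : σ₀ ^ 2 + (n : ℝ) * σpri2 = (d : ℝ) * (P - σpri2) / (2 * ε) := by
    rw [eq_div_iff (by positivity)]
    linear_combination hkey
  rw [ota_aux n d θ (σ ^ 2) (σ₀ ^ 2 + (n : ℝ) * σpri2) (pow_pos hσ 2) hV2 a ha0 hn0.ne']
  rw [hV2eq, ha2]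
  field_simp
  ring
end
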